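/- arXiv:math/0109124 — 6 statements merged into one kernel-verified Lean document; each statement's English description precedes it below -/
import Mathlib

section
/- Let z0 ∈ ℂ, W0 = (w0^1,…,w0^N) ∈ ℂ^N, and let a, b^1, …, b^N be positive reals. Let F be a ℂ^N-valued map, holomorphic on an open neighbourhood of the closed polydisc Δ = {(W,z) ∈ ℂ^N × ℂ : |w^j − w0^j| ≤ b^j for j = 1,…,N, |z − z0| ≤ a}. Assume (A) ‖F(W,z)‖ ≤ M for all (W,z) ∈ Δ, and (B) ‖F(U,z) − F(V,z)‖ ≤ K·‖U − V‖ for all (U,z),(V,z) ∈ Δ. Then for every r with 0 < r < min(a, b^1/M, …, b^N/M, 1/K) there exists a holomorphic map W : D(z0,r) → ℂ^N with W(z0) = W0, (W(z),z) ∈ Δ for all z ∈ D(z0,r), and W′(z) = F(W(z),z) for all z ∈ D(z0,r); moreover W is unique: any two holomorphic maps on D(z0,r) with these properties coincide. -/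
open Metric Set

/-- A holomorphic function on an open disc has a primitive vanishing at the centre. -/
lemma exists_primitive {E : Type*} [NormedAddCommGroup E] [NormedSpace ℂ E] [CompleteSpace E]
    {c : ℂ} {R : ℝ} (hR : 0 < R) {g : ℂ → E}
    (hg : DifferentiableOn ℂ g (ball c R)) :
    ∃ G : ℂ → E, G c = 0 ∧ ∀ z ∈ ball c R, HasDerivAt G (g z) z := by
  -- power series expansions at all radii < R agree
  have hball : ∀ ρ : ℝ, 0 < ρ → ρ < R →
      HasFPowerSeriesOnBall g (cauchyPowerSeries g c ρ.toNNReal) c ρ.toNNReal := by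
    intro ρ hρ0 hρR
    have hsub : closedBall c ρ ⊆ ball c R := closedBall_subset_ball hρR
    have : DifferentiableOn ℂ g (closedBall c (ρ.toNNReal : ℝ)) := by
      rw [Real.coe_toNNReal ρ hρ0.le]; exact hg.mono hsub
    exact this.hasFPowerSeriesOnBall (Real.toNNReal_pos.2 hρ0)
  set p : FormalMultilinearSeries ℂ ℂ E := cauchyPowerSeries g c (R/2).toNNReal with hp
  have hpρ : ∀ ρ : ℝ, 0 < ρ → ρ < R → cauchyPowerSeries g c ρ.toNNReal = p := by
    intro ρ hρ0 hρR
    exact (hball ρ hρ0 hρR).hasFPowerSeriesAt.eq_formalMultilinearSeries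
      (hball (R/2) (by linarith) (by linarith)).hasFPowerSeriesAt
  -- summability of the coefficients at any radius < R
  have hsum : ∀ ρ : ℝ, 0 ≤ ρ → ρ < R → Summable fun n => ‖p n‖ * ρ ^ n := by
    intro ρ hρ0 hρR
    set ρ' : ℝ := (ρ + R) / 2 with hρ'
    have h1 : ρ < ρ' := by rw [hρ']; linarith
    have h2 : ρ' < R := by rw [hρ']; linarith
    have h0' : 0 < ρ' := lt_of_le_of_lt hρ0 h1
    have hle : (ρ.toNNReal : ENNReal) < p.radius := by
      calc (ρ.toNNReal : ENNReal) < (ρ'.toNNReal : ENNReal) := by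
            exact_mod_cast (Real.toNNReal_lt_toNNReal_iff h0').2 h1
        _ ≤ p.radius := by
            rw [← hpρ ρ' h0' h2]
            exact (hball ρ' h0' h2).r_le
    have := p.summable_norm_mul_pow hle
    simpa [Real.coe_toNNReal ρ hρ0] using this
  -- the termwise antiderivative
  set G : ℂ → E := fun z => ∑' n : ℕ, (((n : ℂ) + 1)⁻¹ * (z - c) ^ (n + 1)) • p.coeff n with hG
  have hterm0 : ∀ n : ℕ, (((n : ℂ) + 1)⁻¹ * (c - c) ^ (n + 1)) • p.coeff n = 0 := by
    intro n; simp
  have hGc : G c = 0 := by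
    rw [hG]; simp only [hterm0]; exact tsum_zero
  refine ⟨G, hGc, ?_⟩
  intro z hz
  set ρ : ℝ := (‖z - c‖ + R) / 2 with hρ
  have hzc : ‖z - c‖ < ρ := by
    have := mem_ball_iff_norm.1 hz; rw [hρ]; linarith
  have hρR : ρ < R := by
    have := mem_ball_iff_norm.1 hz; rw [hρ]; linarith
  have hρ0 : 0 < ρ := lt_of_le_of_lt (norm_nonneg _) hzc
  -- derivative of each term
  have hder : ∀ (n : ℕ) (y : ℂ),
      HasDerivAt (fun w => (((n : ℂ) + 1)⁻¹ * (w - c) ^ (n + 1)) • p.coeff n)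
        (((y - c) ^ n) • p.coeff n) y := by
    intro n y
    have h1 : HasDerivAt (fun w : ℂ => (w - c) ^ (n + 1))
        ((n + 1 : ℕ) * (y - c) ^ n) y := by
      have := ((hasDerivAt_id y).sub_const c).pow (n + 1)
      simpa [Pi.pow_def] using this
    have h2 := (h1.const_mul (((n : ℂ) + 1)⁻¹)).smul_const (p.coeff n)
    convert h2 using 1
    have hne : ((n : ℂ) + 1) ≠ 0 := Nat.cast_add_one_ne_zero n
    rw [← mul_assoc]
    push_cast
    rw [inv_mul_cancel₀ hne, one_mul]
  -- uniform bound for the derivatives on ball c ρ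
  have hbound : ∀ (n : ℕ) (y : ℂ), y ∈ ball c ρ →
      ‖((y - c) ^ n) • p.coeff n‖ ≤ ‖p n‖ * ρ ^ n := by
    intro n y hy
    rw [norm_smul, norm_pow]
    have h1 : ‖p.coeff n‖ ≤ ‖p n‖ := by
      have h := (p n).le_opNorm (fun _ => (1 : ℂ))
      simp only [norm_one, Finset.prod_const_one, mul_one] at h
      exact h
    have h2 : ‖y - c‖ ^ n ≤ ρ ^ n :=
      pow_le_pow_left₀ (norm_nonneg _) (le_of_lt (mem_ball_iff_norm.1 hy)) n
    calc ‖y - c‖ ^ n * ‖p.coeff n‖ ≤ ρ ^ n * ‖p n‖ :=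
          mul_le_mul h2 h1 (norm_nonneg _) (pow_nonneg hρ0.le n)
      _ = ‖p n‖ * ρ ^ n := mul_comm _ _
  have hsable : Summable fun n => ‖p n‖ * ρ ^ n := hsum ρ hρ0.le hρR
  have hG0 : Summable fun n : ℕ => (((n : ℂ) + 1)⁻¹ * (c - c) ^ (n + 1)) • p.coeff n := by
    simp only [hterm0]; exact summable_zero
  have hmain := hasDerivAt_tsum_of_isPreconnected hsable isOpen_ball
    (convex_ball c ρ).isPreconnected (fun n y _ => hder n y)
    (fun n y hy => hbound n y hy) (mem_ball_self hρ0) hG0 (mem_ball_iff_norm.2 hzc)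
  -- identify the sum of the derivatives with g z
  have hps : HasFPowerSeriesOnBall g p c ρ.toNNReal := by
    rw [← hpρ ρ hρ0 hρR]; exact hball ρ hρ0 hρR
  have hzmem : z ∈ Metric.eball c (ρ.toNNReal : ENNReal) := by
    rw [Metric.emetric_ball_nnreal, Real.coe_toNNReal ρ hρ0.le]
    exact mem_ball_iff_norm.2 hzc
  have hsumz : HasSum (fun n : ℕ => ((z - c) ^ n) • p.coeff n) (g z) := by
    have := hps.hasSum_sub hzmem
    simpa [FormalMultilinearSeries.apply_eq_pow_smul_coeff] using this
  rw [hG]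
  have : (∑' n : ℕ, ((z - c) ^ n) • p.coeff n) = g z := hsumz.tsum_eq
  rw [← this]
  exact hmain

set_option maxHeartbeats 1000000 in
/-- **Existence and uniqueness for the first order Cauchy problem in the complex domain.**
`ℂ^N` (modelled as `Fin N → ℂ`) carries the maximum coordinate norm (the sup norm of the
Pi type).  If `F` is holomorphic on an open neighbourhood of the closed polydisc `Δ`,
bounded by `M` there and Lipschitz in its first variable with constant `K`, then for every
`r` with `0 < r < min (a, bⁱ/M, 1/K)` there is a unique holomorphic solution of the Cauchy
problem `W' = F (W z) z`, `W z0 = W0` on the disc `D(z0, r)`, with graph inside `Δ`. -/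
theorem stmt_0 {N : ℕ} (z0 : ℂ) (W0 : Fin N → ℂ) (a : ℝ) (b : Fin N → ℝ)
    (ha : 0 < a) (hb : ∀ j, 0 < b j)
    (F : (Fin N → ℂ) → ℂ → (Fin N → ℂ)) (M K : ℝ)
    (Δ : Set ((Fin N → ℂ) × ℂ))
    (hΔ : Δ = {p : (Fin N → ℂ) × ℂ |
      (∀ j, ‖p.1 j - W0 j‖ ≤ b j) ∧ ‖p.2 - z0‖ ≤ a})
    (hol : ∃ O : Set ((Fin N → ℂ) × ℂ), IsOpen O ∧ Δ ⊆ O ∧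
      DifferentiableOn ℂ (fun p => F p.1 p.2) O)
    (hA : ∀ p ∈ Δ, ‖F p.1 p.2‖ ≤ M)
    (hB : ∀ (U V : Fin N → ℂ) (z : ℂ), (U, z) ∈ Δ → (V, z) ∈ Δ →
      ‖F U z - F V z‖ ≤ K * ‖U - V‖)
    (r : ℝ) (hr0 : 0 < r) (hra : r < a) (hrb : ∀ j, r < b j / M) (hrK : r < 1 / K) :
    (∃ W : ℂ → (Fin N → ℂ),
        W z0 = W0 ∧ (∀ z ∈ ball z0 r, ((W z, z) : (Fin N → ℂ) × ℂ) ∈ Δ) ∧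
        (∀ z ∈ ball z0 r, HasDerivAt W (F (W z) z) z)) ∧
    (∀ W1 W2 : ℂ → (Fin N → ℂ),
        (W1 z0 = W0 ∧ (∀ z ∈ ball z0 r, ((W1 z, z) : (Fin N → ℂ) × ℂ) ∈ Δ) ∧
          (∀ z ∈ ball z0 r, HasDerivAt W1 (F (W1 z) z) z)) →
        (W2 z0 = W0 ∧ (∀ z ∈ ball z0 r, ((W2 z, z) : (Fin N → ℂ) × ℂ) ∈ Δ) ∧
          (∀ z ∈ ball z0 r, HasDerivAt W2 (F (W2 z) z) z)) →
        EqOn W1 W2 (ball z0 r)) := by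
  obtain ⟨O, hO, hΔO, hF⟩ := hol
  rcases Nat.eq_zero_or_pos N with hN | hNpos
  · -- trivial case `N = 0`
    subst hN
    constructor
    · refine ⟨fun _ => W0, rfl, ?_, ?_⟩
      · intro z hz
        rw [hΔ]
        exact ⟨fun j => j.elim0, (lt_trans (mem_ball_iff_norm.1 hz) hra).le⟩
      · intro z hz
        have h := hasDerivAt_const (𝕜 := ℂ) z W0
        have : (0 : Fin 0 → ℂ) = F W0 z := Subsingleton.elim _ _
        rwa [this] at h
    · intro W1 W2 _ _ z _
      exact Subsingleton.elim _ _
  · -- main case `0 < N`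
    haveI : Nonempty (Fin N) := ⟨⟨0, hNpos⟩⟩
    set j0 : Fin N := ⟨0, hNpos⟩ with hj0
    have hM : 0 < M := by
      by_contra h
      push_neg at h
      have h1 : b j0 / M ≤ 0 := div_nonpos_iff.2 (Or.inl ⟨(hb j0).le, h⟩)
      linarith [hrb j0]
    have hK : 0 < K := by
      by_contra h
      push_neg at h
      have h1 : 1 / K ≤ 0 := div_nonpos_iff.2 (Or.inl ⟨zero_le_one, h⟩)
      linarith
    -- choose an intermediate radius ρ with r < ρ < min (a, bⱼ/M, 1/K)
    set c0 : ℝ := min (min a (1 / K)) (Finset.univ.inf' Finset.univ_nonempty fun j => b j / M)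
      with hc0
    have hrc : r < c0 := by
      refine lt_min (lt_min hra hrK) ?_
      rw [Finset.lt_inf'_iff]
      exact fun j _ => hrb j
    set ρ : ℝ := (r + c0) / 2 with hρdef
    have hrρ : r < ρ := by rw [hρdef]; linarith
    have hρc : ρ < c0 := by rw [hρdef]; linarith
    have hρ0 : 0 < ρ := hr0.trans hrρ
    have hρa : ρ < a := lt_of_lt_of_le hρc ((min_le_left _ _).trans (min_le_left _ _))
    have hρK : ρ < 1 / K := lt_of_lt_of_le hρc ((min_le_left _ _).trans (min_le_right _ _))
    have hρb : ∀ j, ρ < b j / M := fun j =>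
      lt_of_lt_of_le hρc ((min_le_right _ _).trans (Finset.inf'_le _ (Finset.mem_univ j)))
    have hMρb : ∀ j, M * ρ < b j := by
      intro j
      have := (lt_div_iff₀ hM).1 (hρb j)
      linarith
    have hKρ : K * ρ < 1 := by
      have := (lt_div_iff₀ hK).1 hρK
      linarith
    have hKρ0 : 0 ≤ K * ρ := mul_nonneg hK.le hρ0.le
    have hsubB : ball z0 r ⊆ ball z0 ρ := ball_subset_ball hrρ.le
    -- membership criterion for Δ
    have memΔ : ∀ (V : Fin N → ℂ) (z : ℂ), z ∈ ball z0 ρ → ‖V - W0‖ ≤ M * ‖z - z0‖ →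
        ((V, z) : (Fin N → ℂ) × ℂ) ∈ Δ := by
      intro V z hz hV
      have hzn : ‖z - z0‖ < ρ := mem_ball_iff_norm.1 hz
      rw [hΔ]
      refine ⟨fun j => ?_, (hzn.trans hρa).le⟩
      have h1 : ‖V j - W0 j‖ ≤ ‖V - W0‖ := by
        have := norm_le_pi_norm (V - W0) j
        simpa using this
      have h2 : M * ‖z - z0‖ ≤ M * ρ := mul_le_mul_of_nonneg_left hzn.le hM.le
      linarith [hMρb j]
    -- the Picard step: from a good approximation produce the next one
    have step : ∀ W : ℂ → Fin N → ℂ,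
        (W z0 = W0 ∧ (∀ z ∈ ball z0 ρ, ‖W z - W0‖ ≤ M * ‖z - z0‖) ∧
          DifferentiableOn ℂ W (ball z0 ρ)) →
        ∃ W' : ℂ → Fin N → ℂ,
          (W' z0 = W0 ∧ (∀ z ∈ ball z0 ρ, ‖W' z - W0‖ ≤ M * ‖z - z0‖) ∧
            DifferentiableOn ℂ W' (ball z0 ρ)) ∧
          ∀ z ∈ ball z0 ρ, HasDerivAt W' (F (W z) z) z := by
      rintro W ⟨hW0, hWb, hWd⟩
      have hmem : ∀ z ∈ ball z0 ρ, ((W z, z) : (Fin N → ℂ) × ℂ) ∈ Δ :=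
        fun z hz => memΔ _ z hz (hWb z hz)
      have hgd : DifferentiableOn ℂ (fun z => F (W z) z) (ball z0 ρ) := by
        have hpair : DifferentiableOn ℂ (fun z => ((W z, z) : (Fin N → ℂ) × ℂ)) (ball z0 ρ) :=
          hWd.prodMk differentiableOn_id
        exact hF.comp hpair fun z hz => hΔO (hmem z hz)
      obtain ⟨G, hGc, hGd⟩ := exists_primitive hρ0 hgd
      have hGb : ∀ z ∈ ball z0 ρ, ‖G z‖ ≤ M * ‖z - z0‖ := by
        intro z hz
        have := (convex_ball z0 ρ).norm_image_sub_le_of_norm_hasDerivWithin_le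
          (f := G) (f' := fun y => F (W y) y)
          (fun y hy => (hGd y hy).hasDerivWithinAt)
          (fun y hy => hA (W y, y) (hmem y hy)) (mem_ball_self hρ0) hz
        rwa [hGc, sub_zero] at this
      refine ⟨fun z => W0 + G z, ⟨by simp [hGc], ?_, ?_⟩, ?_⟩
      · intro z hz
        simpa [add_sub_cancel_left] using hGb z hz
      · intro z hz
        exact ((hasDerivAt_const z W0).add (hGd z hz)).differentiableAt.differentiableWithinAt
      · intro z hz
        exact (hGd z hz).const_add W0
    choose T hTgood hTderiv using step
    -- the Picard iterates
    set good : (ℂ → Fin N → ℂ) → Prop := fun W =>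
      (W z0 = W0 ∧ (∀ z ∈ ball z0 ρ, ‖W z - W0‖ ≤ M * ‖z - z0‖) ∧
        DifferentiableOn ℂ W (ball z0 ρ)) with hgood
    have good0 : good (fun _ => W0) := by
      refine ⟨rfl, fun z hz => ?_, differentiableOn_const _⟩
      simpa using mul_nonneg hM.le (norm_nonneg (z - z0))
    set Φ : {W : ℂ → Fin N → ℂ // good W} → {W : ℂ → Fin N → ℂ // good W} :=
      fun q => ⟨T q.1 q.2, hTgood q.1 q.2⟩ with hΦ
    set p0 : {W : ℂ → Fin N → ℂ // good W} := ⟨fun _ => W0, good0⟩ with hp0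
    set Wf : ℕ → ℂ → Fin N → ℂ := fun n => (Φ^[n] p0).1 with hWfdef
    have hWfgood : ∀ n, good (Wf n) := fun n => (Φ^[n] p0).2
    have hWf0z : Wf 0 = fun _ => W0 := rfl
    have hWfsucc : ∀ n, Wf (n + 1) = T (Wf n) (hWfgood n) := by
      intro n
      show (Φ^[n + 1] p0).1 = _
      rw [Function.iterate_succ_apply']
    have hWfderiv : ∀ n, ∀ z ∈ ball z0 ρ, HasDerivAt (Wf (n + 1)) (F (Wf n z) z) z := by
      intro n z hz
      rw [hWfsucc n]
      exact hTderiv _ _ z hz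
    have hWfz0 : ∀ n, Wf n z0 = W0 := fun n => (hWfgood n).1
    have hWfmem : ∀ n, ∀ z ∈ ball z0 ρ, ((Wf n z, z) : (Fin N → ℂ) × ℂ) ∈ Δ :=
      fun n z hz => memΔ _ z hz ((hWfgood n).2.1 z hz)
    -- the derivative of `Wf n`
    set d : ℕ → ℂ → Fin N → ℂ := fun n z => Nat.casesOn n 0 fun m => F (Wf m z) z with hd
    have hdWf : ∀ n, ∀ z ∈ ball z0 ρ, HasDerivAt (Wf n) (d n z) z := by
      intro n z hz
      cases n with
      | zero => rw [hWf0z]; exact hasDerivAt_const z W0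
      | succ m => exact hWfderiv m z hz
    -- geometric estimate for the increments
    have hest : ∀ n, ∀ z ∈ ball z0 ρ, ‖Wf (n + 1) z - Wf n z‖ ≤ M * ρ * (K * ρ) ^ n := by
      intro n
      induction n with
      | zero =>
        intro z hz
        have h1 := (hWfgood 1).2.1 z hz
        have h2 : ‖z - z0‖ < ρ := mem_ball_iff_norm.1 hz
        have : Wf 0 z = W0 := by rw [hWf0z]
        rw [this]
        simp only [pow_zero, mul_one]
        nlinarith [norm_nonneg (Wf 1 z - W0)]
      | succ m ih =>
        intro z hz
        have hdf : ∀ y ∈ ball z0 ρ, HasDerivWithinAt (fun w => Wf (m + 2) w - Wf (m + 1) w)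
            (F (Wf (m + 1) y) y - F (Wf m y) y) (ball z0 ρ) y :=
          fun y hy => ((hWfderiv (m + 1) y hy).sub (hWfderiv m y hy)).hasDerivWithinAt
        have hbd : ∀ y ∈ ball z0 ρ, ‖F (Wf (m + 1) y) y - F (Wf m y) y‖ ≤
            K * (M * ρ * (K * ρ) ^ m) := fun y hy =>
          le_trans (hB _ _ y (hWfmem (m + 1) y hy) (hWfmem m y hy))
            (mul_le_mul_of_nonneg_left (ih y hy) hK.le)
        have hmv := (convex_ball z0 ρ).norm_image_sub_le_of_norm_hasDerivWithin_le
          hdf hbd (mem_ball_self hρ0) hz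
        rw [hWfz0 (m + 2), hWfz0 (m + 1), sub_self, sub_zero] at hmv
        have h2 : ‖z - z0‖ < ρ := mem_ball_iff_norm.1 hz
        have h3 : K * (M * ρ * (K * ρ) ^ m) * ‖z - z0‖ ≤ K * (M * ρ * (K * ρ) ^ m) * ρ := by
          have hpos : 0 ≤ K * (M * ρ * (K * ρ) ^ m) := by positivity
          exact mul_le_mul_of_nonneg_left h2.le hpos
        calc ‖Wf (m + 1 + 1) z - Wf (m + 1) z‖ ≤ K * (M * ρ * (K * ρ) ^ m) * ‖z - z0‖ := hmv
          _ ≤ K * (M * ρ * (K * ρ) ^ m) * ρ := h3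
          _ = M * ρ * (K * ρ) ^ (m + 1) := by ring
    -- bound on the increments of the derivatives
    have hdd : ∀ n, ∀ y ∈ ball z0 ρ, ‖d (n + 1) y - d n y‖ ≤ M * (K * ρ) ^ n := by
      intro n y hy
      cases n with
      | zero =>
        have : d 0 y = 0 := rfl
        rw [this, sub_zero]
        have h1 : ‖F (Wf 0 y) y‖ ≤ M := hA (Wf 0 y, y) (hWfmem 0 y hy)
        rw [pow_zero, mul_one]
        exact h1
      | succ m =>
        have h1 : ‖F (Wf (m + 1) y) y - F (Wf m y) y‖ ≤ K * ‖Wf (m + 1) y - Wf m y‖ :=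
          hB _ _ y (hWfmem (m + 1) y hy) (hWfmem m y hy)
        have h2 := hest m y hy
        calc ‖d (m + 1 + 1) y - d (m + 1) y‖ = ‖F (Wf (m + 1) y) y - F (Wf m y) y‖ := rfl
          _ ≤ K * ‖Wf (m + 1) y - Wf m y‖ := h1
          _ ≤ K * (M * ρ * (K * ρ) ^ m) := mul_le_mul_of_nonneg_left h2 hK.le
          _ = M * (K * ρ) ^ (m + 1) := by ring
    have hu : Summable fun n : ℕ => M * (K * ρ) ^ n :=
      (summable_geometric_of_lt_one hKρ0 hKρ).mul_left M
    have huρ : Summable fun n : ℕ => M * ρ * (K * ρ) ^ n :=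
      (summable_geometric_of_lt_one hKρ0 hKρ).mul_left (M * ρ)
    -- the solution
    set Wsol : ℂ → Fin N → ℂ := fun z => W0 + ∑' n : ℕ, (Wf (n + 1) z - Wf n z) with hWsol
    have hWsol0 : Wsol z0 = W0 := by
      rw [hWsol]
      simp only [hWfz0, sub_self]
      rw [tsum_zero, add_zero]
    -- pointwise convergence of the iterates to `Wsol`
    have htend : ∀ z ∈ ball z0 ρ, Filter.Tendsto (fun n => Wf n z) Filter.atTop (nhds (Wsol z)) := by
      intro z hz
      have hDsum : Summable fun n : ℕ => Wf (n + 1) z - Wf n z :=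
        Summable.of_norm_bounded huρ fun n => hest n z hz
      have h1 := hDsum.hasSum.tendsto_sum_nat
      have h2 : ∀ n : ℕ, ∑ k ∈ Finset.range n, (Wf (k + 1) z - Wf k z) = Wf n z - W0 := by
        intro n
        rw [Finset.sum_range_sub (fun k => Wf k z)]
        rw [hWf0z]
      rw [show (fun n => ∑ k ∈ Finset.range n, (Wf (k + 1) z - Wf k z)) = fun n => Wf n z - W0
        from funext h2] at h1
      have h3 := h1.add_const W0
      simp only [sub_add_cancel] at h3
      have h4 : (∑' n : ℕ, (Wf (n + 1) z - Wf n z)) + W0 = Wsol z := by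
        rw [hWsol]; ring
      rwa [h4] at h3
    -- the limit satisfies the bound
    have hWsolb : ∀ z ∈ ball z0 ρ, ‖Wsol z - W0‖ ≤ M * ‖z - z0‖ := by
      intro z hz
      have h1 : Filter.Tendsto (fun n => ‖Wf n z - W0‖) Filter.atTop (nhds ‖Wsol z - W0‖) :=
        ((htend z hz).sub_const W0).norm
      exact le_of_tendsto h1 (Filter.Eventually.of_forall fun n => (hWfgood n).2.1 z hz)
    have hWsolmem : ∀ z ∈ ball z0 ρ, ((Wsol z, z) : (Fin N → ℂ) × ℂ) ∈ Δ :=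
      fun z hz => memΔ _ z hz (hWsolb z hz)
    -- the limit is differentiable with the required derivative
    have hWsolderiv : ∀ z ∈ ball z0 ρ, HasDerivAt Wsol (F (Wsol z) z) z := by
      intro z hz
      have hmain := hasDerivAt_tsum_of_isPreconnected hu isOpen_ball
        (convex_ball z0 ρ).isPreconnected
        (fun n y hy => ((hdWf (n + 1) y hy).sub (hdWf n y hy)))
        (fun n y hy => hdd n y hy) (mem_ball_self hρ0)
        (by
          simp only [Pi.sub_apply, hWfz0, sub_self]
          exact summable_zero) hz
      -- identify the sum of the derivatives
      have hsum2 : Summable fun n : ℕ => d (n + 1) z - d n z :=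
        Summable.of_norm_bounded hu fun n => hdd n z hz
      have h1 := hsum2.hasSum.tendsto_sum_nat
      have h2 : ∀ n : ℕ, ∑ k ∈ Finset.range n, (d (k + 1) z - d k z) = d n z := by
        intro n
        rw [Finset.sum_range_sub (fun k => d k z)]
        simp [hd]
      rw [show (fun n => ∑ k ∈ Finset.range n, (d (k + 1) z - d k z)) = fun n => d n z
        from funext h2] at h1
      have h3 : Filter.Tendsto (fun n : ℕ => d (n + 1) z) Filter.atTop
          (nhds (∑' n : ℕ, (d (n + 1) z - d n z))) :=
        h1.comp (Filter.tendsto_add_atTop_nat 1)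
      have h4 : Filter.Tendsto (fun n : ℕ => d (n + 1) z) Filter.atTop
          (nhds (F (Wsol z) z)) := by
        rw [show (fun n : ℕ => d (n + 1) z) = fun n : ℕ => F (Wf n z) z from rfl]
        rw [tendsto_iff_norm_sub_tendsto_zero]
        have h5 : Filter.Tendsto (fun n => K * ‖Wf n z - Wsol z‖) Filter.atTop (nhds 0) := by
          have := ((htend z hz).sub_const (Wsol z)).norm
          simp only [sub_self, norm_zero] at this
          simpa using this.const_mul K
        refine squeeze_zero (fun n => norm_nonneg _) (fun n => ?_) h5
        exact le_trans (hB _ _ z (hWfmem n z hz) (hWsolmem z hz))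
          (le_of_eq rfl)
      have h6 : (∑' n : ℕ, (d (n + 1) z - d n z)) = F (Wsol z) z :=
        tendsto_nhds_unique h3 h4
      rw [h6] at hmain
      have h7 := (hasDerivAt_const z W0).add hmain
      exact hmain.const_add W0
    constructor
    · -- existence
      exact ⟨Wsol, hWsol0, fun z hz => hWsolmem z (hsubB hz),
        fun z hz => hWsolderiv z (hsubB hz)⟩
    · -- uniqueness
      rintro W1 W2 ⟨h10, h1Δ, h1d⟩ ⟨h20, h2Δ, h2d⟩ z hz
      have hzr : ‖z - z0‖ < r := mem_ball_iff_norm.1 hz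
      set r' : ℝ := (‖z - z0‖ + r) / 2 with hr'
      have hr'0 : 0 ≤ r' := by positivity
      have hzr' : ‖z - z0‖ ≤ r' := by rw [hr']; linarith
      have hr'r : r' < r := by rw [hr']; linarith
      have hsub : closedBall z0 r' ⊆ ball z0 r := closedBall_subset_ball hr'r
      have hKr' : K * r' < 1 := by
        have h1 : r * K < 1 := (lt_div_iff₀ hK).1 hrK
        nlinarith
      have hcont : ContinuousOn (fun y => ‖W1 y - W2 y‖) (closedBall z0 r') := by
        intro y hy
        exact (((h1d y (hsub hy)).continuousAt.sub
          (h2d y (hsub hy)).continuousAt).norm).continuousWithinAt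
      obtain ⟨y0, hy0mem, hy0max⟩ := (isCompact_closedBall z0 r').exists_isMaxOn
        ⟨z0, mem_closedBall_self hr'0⟩ hcont
      set mval : ℝ := ‖W1 y0 - W2 y0‖ with hmval
      have hmv := (convex_closedBall z0 r').norm_image_sub_le_of_norm_hasDerivWithin_le
        (f := fun y => W1 y - W2 y) (f' := fun y => F (W1 y) y - F (W2 y) y)
        (fun y hy => ((h1d y (hsub hy)).sub (h2d y (hsub hy))).hasDerivWithinAt)
        (fun y hy => le_trans (hB _ _ y (h1Δ y (hsub hy)) (h2Δ y (hsub hy)))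
          (mul_le_mul_of_nonneg_left (hy0max hy) hK.le))
        (mem_closedBall_self hr'0) hy0mem
      simp only [h10, h20, sub_self, sub_zero] at hmv
      have hy0r' : ‖y0 - z0‖ ≤ r' := mem_closedBall_iff_norm.1 hy0mem
      have hmval0 : mval ≤ K * mval * r' := by
        calc mval ≤ K * mval * ‖y0 - z0‖ := by
              rw [hmval]; exact hmv
          _ ≤ K * mval * r' := by
              have : 0 ≤ K * mval := mul_nonneg hK.le (norm_nonneg _)
              exact mul_le_mul_of_nonneg_left hy0r' this
      have hmvalz : mval ≤ 0 := by nlinarith [norm_nonneg (W1 y0 - W2 y0)]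
      have hzmem : z ∈ closedBall z0 r' := mem_closedBall_iff_norm.2 hzr'
      have : ‖W1 z - W2 z‖ ≤ 0 := le_trans (hy0max hzmem) hmvalz
      have := le_antisymm this (norm_nonneg _)
      rwa [norm_eq_zero, sub_eq_zero] at this
end

section
/- Let N ≥ 1, let (U0, v0) ∈ ℂ^N × ℂ, and let S be a ℂ^N-valued map holomorphic on an open neighbourhood of (U0, v0) which is uniformly Lipschitz-like at (U0, v0). Then there exists an open neighbourhood V of v0 and a holomorphic map U : V → ℂ^N with U(v0) = U0 and U′(v) = S(U(v), v) for all v ∈ V; moreover the solution germ is unique: if U1 and U2 are holomorphic maps on neighbourhoods of v0 with U1(v0) = U2(v0) = U0 and Ui′(v) = S(Ui(v), v) near v0 (i = 1,2), then U1 = U2 on some neighbourhood of v0. -/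
open Set

open Set Metric Function MeasureTheory intervalIntegral
open scoped BoundedContinuousFunction NNReal

variable {E : Type*} [NormedAddCommGroup E] [NormedSpace ℂ E] [CompleteSpace E]

/-- Composition of a complex-differentiable function with a real curve. -/
lemma comp_real_hasDerivAt {f : ℂ → E} {f' : E} {g : ℝ → ℂ} {g' : ℂ} {t : ℝ}
    (hf : HasDerivAt f f' (g t)) (hg : HasDerivAt g g' t) :
    HasDerivAt (fun s => f (g s)) (g' • f') t := by
  have := (hf.hasFDerivAt.restrictScalars ℝ).comp_hasDerivAt t hg
  simpa [Function.comp_def] using this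

lemma curve_hasDerivAt (v0 z : ℂ) (t : ℝ) :
    HasDerivAt (fun s : ℝ => v0 + s • (z - v0)) (z - v0) t := by
  simpa using ((hasDerivAt_id t).smul_const (z - v0)).const_add v0

/-- The "primitive along segments" of a holomorphic function is a primitive. -/
lemma hasDerivAt_primitive {h : ℂ → E} {v0 : ℂ} {ρ : ℝ}
    (hd : DifferentiableOn ℂ h (ball v0 ρ)) {v : ℂ} (hv : v ∈ ball v0 ρ) :
    HasDerivAt (fun z => (z - v0) • ∫ t in (0:ℝ)..1, h (v0 + t • (z - v0))) (h v) v := by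
  have han : AnalyticOnNhd ℂ h (ball v0 ρ) := hd.analyticOnNhd isOpen_ball
  have hd' : DifferentiableOn ℂ (deriv h) (ball v0 ρ) :=
    (han.deriv_of_isOpen isOpen_ball).differentiableOn
  have hcont : ContinuousOn h (ball v0 ρ) := hd.continuousOn
  have hcont' : ContinuousOn (deriv h) (ball v0 ρ) := hd'.continuousOn
  rw [mem_ball, dist_eq_norm] at hv
  set ε : ℝ := (ρ - ‖v - v0‖) / 2 with hε
  have hε0 : 0 < ε := by simp only [hε]; linarith
  set R : ℝ := ‖v - v0‖ + ε with hR
  have hRρ : R < ρ := by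
    simp only [hR, hε]; linarith
  have hRsub : closedBall v0 R ⊆ ball v0 ρ := closedBall_subset_ball hRρ
  -- membership of the segment points
  have hmem : ∀ z ∈ ball v ε, ∀ t ∈ Icc (0:ℝ) 1, v0 + t • (z - v0) ∈ closedBall v0 R := by
    intro z hz t ht
    rw [mem_ball, dist_eq_norm] at hz
    rw [mem_closedBall, dist_eq_norm]
    have : ‖z - v0‖ ≤ R := by
      calc ‖z - v0‖ = ‖(z - v) + (v - v0)‖ := by ring_nf
        _ ≤ ‖z - v‖ + ‖v - v0‖ := norm_add_le _ _
        _ ≤ R := by simp only [hR]; linarith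
    calc ‖v0 + t • (z - v0) - v0‖ = |t| * ‖z - v0‖ := by
          simp [norm_smul]
      _ ≤ 1 * R := by
          apply mul_le_mul _ this (norm_nonneg _) zero_le_one
          rw [abs_le]; constructor <;> linarith [ht.1, ht.2]
      _ = R := one_mul R
  -- bound for the derivative on the compact ball
  obtain ⟨C0, hC0⟩ := (isCompact_closedBall v0 R).exists_bound_of_continuousOn
    (hcont'.mono hRsub)
  set C : ℝ := max C0 0 with hC
  set F : ℂ → ℝ → E := fun z t => h (v0 + t • (z - v0)) with hF
  set F' : ℂ → ℝ → E := fun z t => t • deriv h (v0 + t • (z - v0)) with hF'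
  have hvmem : v ∈ ball v ε := by
    rw [mem_ball, dist_self]; exact hε0
  have hzdiff : ∀ z ∈ ball v ε, ∀ t ∈ Icc (0:ℝ) 1,
      HasDerivAt (fun z => F z t) (F' z t) z := by
    intro z hz t ht
    have hmem' := hmem z hz t ht
    have hin : HasDerivAt (fun z : ℂ => v0 + t • (z - v0)) (t • (1:ℂ)) z := by
      simpa using (((hasDerivAt_id z).sub_const v0).const_smul t).const_add v0
    have hout : HasDerivAt h (deriv h (v0 + t • (z - v0))) (v0 + t • (z - v0)) :=
      (hd.differentiableAt (isOpen_ball.mem_nhds (hRsub hmem'))).hasDerivAt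
    have := HasDerivAt.scomp z hout hin
    simpa [hF, hF', smul_assoc, Function.comp_def] using this
  have hFcont : ∀ z ∈ ball v ε, ContinuousOn (F z) (Icc (0:ℝ) 1) := by
    intro z hz
    apply (hcont.mono hRsub).comp
    · exact (continuous_const.add (continuous_id.smul continuous_const)).continuousOn
    · intro t ht; exact hmem z hz t ht
  have hF'cont : ContinuousOn (F' v) (Icc (0:ℝ) 1) := by
    apply ContinuousOn.smul continuousOn_id
    apply (hcont'.mono hRsub).comp
    · exact (continuous_const.add (continuous_id.smul continuous_const)).continuousOn
    · intro t ht; exact hmem v hvmem t ht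
  have key := intervalIntegral.hasDerivAt_integral_of_dominated_loc_of_deriv_le
    (F := F) (F' := F') (x₀ := v) (a := (0:ℝ)) (b := 1) (bound := fun _ => C)
    (μ := volume) (ball_mem_nhds v hε0)
    (by
      filter_upwards [isOpen_ball.eventually_mem hvmem] with z hz
      exact ((hFcont z hz).mono (by rw [uIoc_of_le (zero_le_one)]; exact Ioc_subset_Icc_self)).aestronglyMeasurable measurableSet_uIoc)
    ((hFcont v hvmem).intervalIntegrable_of_Icc zero_le_one)
    ((hF'cont.mono (by rw [uIoc_of_le (zero_le_one)]; exact Ioc_subset_Icc_self)).aestronglyMeasurable measurableSet_uIoc)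
    (by
      apply Filter.Eventually.of_forall
      intro t ht z hz
      have ht' : t ∈ Icc (0:ℝ) 1 := by
        rw [uIoc_of_le zero_le_one] at ht; exact Ioc_subset_Icc_self ht
      have hb := hC0 _ (hmem z hz t ht')
      calc ‖F' z t‖ = |t| * ‖deriv h (v0 + t • (z - v0))‖ := by simp [hF', norm_smul]
        _ ≤ 1 * C := by
            apply mul_le_mul _ (hb.trans (le_max_left _ _)) (norm_nonneg _) zero_le_one
            rw [abs_le]; constructor <;> linarith [ht'.1, ht'.2]
        _ = C := one_mul C)
    (intervalIntegrable_const)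
    (by
      apply Filter.Eventually.of_forall
      intro t ht z hz
      have ht' : t ∈ Icc (0:ℝ) 1 := by
        rw [uIoc_of_le zero_le_one] at ht; exact Ioc_subset_Icc_self ht
      exact hzdiff z hz t ht')
  have hG : HasDerivAt (fun z => ∫ t in (0:ℝ)..1, F z t) (∫ t in (0:ℝ)..1, F' v t) v := key.2
  have hprod : HasDerivAt (fun z => (z - v0) • ∫ t in (0:ℝ)..1, F z t)
      ((1:ℂ) • (∫ t in (0:ℝ)..1, F v t) + (v - v0) • ∫ t in (0:ℝ)..1, F' v t) v := by
    have := HasDerivAt.fun_smul ((hasDerivAt_id v).sub_const v0) hG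
    simpa [add_comm] using this
  -- now identify the derivative with h v via FTC for ψ t = t • h (v0 + t • (v - v0))
  set w : ℝ → E := fun t => h (v0 + t • (v - v0)) with hw
  set w' : ℝ → E := fun t => (v - v0) • deriv h (v0 + t • (v - v0)) with hw'
  have hψ : ∀ t ∈ uIcc (0:ℝ) 1, HasDerivAt (fun t : ℝ => t • w t) (w t + t • w' t) t := by
    intro t ht
    rw [uIcc_of_le zero_le_one] at ht
    have hwd : HasDerivAt w (w' t) t := by
      have hout : HasDerivAt h (deriv h (v0 + t • (v - v0))) (v0 + t • (v - v0)) :=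
        (hd.differentiableAt (isOpen_ball.mem_nhds (hRsub (hmem v hvmem t ht)))).hasDerivAt
      exact comp_real_hasDerivAt hout (curve_hasDerivAt v0 v t)
    simpa [add_comm] using (hasDerivAt_id t).fun_smul hwd
  have hw'cont : ContinuousOn (fun t => w t + t • w' t) (Icc (0:ℝ) 1) := by
    have h1 : ContinuousOn w (Icc (0:ℝ) 1) := hFcont v hvmem
    have h2 : ContinuousOn w' (Icc (0:ℝ) 1) := by
      apply ContinuousOn.smul continuousOn_const
      apply (hcont'.mono hRsub).comp
      · exact (continuous_const.add (continuous_id.smul continuous_const)).continuousOn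
      · intro t ht; exact hmem v hvmem t ht
    exact h1.add (continuousOn_id.smul h2)
  have hFTC : ∫ t in (0:ℝ)..1, (w t + t • w' t) = h v := by
    rw [intervalIntegral.integral_eq_sub_of_hasDerivAt hψ
      (hw'cont.intervalIntegrable_of_Icc zero_le_one)]
    simp [hw]
  have hsplit : ∫ t in (0:ℝ)..1, (w t + t • w' t)
      = (∫ t in (0:ℝ)..1, F v t) + (v - v0) • ∫ t in (0:ℝ)..1, F' v t := by
    have hi1 : IntervalIntegrable w volume 0 1 :=
      (hFcont v hvmem).intervalIntegrable_of_Icc zero_le_one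
    have hi2 : IntervalIntegrable (fun t => t • w' t) volume 0 1 := by
      apply ContinuousOn.intervalIntegrable_of_Icc zero_le_one
      apply continuousOn_id.smul
      apply ContinuousOn.smul continuousOn_const
      apply (hcont'.mono hRsub).comp
      · exact (continuous_const.add (continuous_id.smul continuous_const)).continuousOn
      · intro t ht; exact hmem v hvmem t ht
    rw [intervalIntegral.integral_add hi1 hi2]
    congr 1
    rw [← intervalIntegral.integral_smul]
    apply intervalIntegral.integral_congr
    intro t ht
    simp only [hF', hw']
    rw [smul_comm]
  rw [hFTC] at hsplit
  have : (1:ℂ) • (∫ t in (0:ℝ)..1, F v t) + (v - v0) • ∫ t in (0:ℝ)..1, F' v t = h v := by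
    rw [one_smul, ← hsplit]
  rw [this] at hprod
  exact hprod

noncomputable def retr (v0 : ℂ) (r : ℝ) (v : ℂ) : ℂ := v0 + (r / max r ‖v - v0‖) • (v - v0)

lemma retr_continuous {v0 : ℂ} {r : ℝ} (hr : 0 < r) : Continuous (retr v0 r) := by
  apply continuous_const.add
  apply Continuous.smul (f := fun v => r / max r ‖v - v0‖) (g := fun v => v - v0) _ (continuous_id.sub continuous_const)
  apply continuous_const.div (continuous_const.max (continuous_id.sub continuous_const).norm)
  intro v; exact ne_of_gt (lt_of_lt_of_le hr (le_max_left _ _))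

lemma retr_dist {v0 : ℂ} {r : ℝ} (hr : 0 < r) (v : ℂ) : dist (retr v0 r v) v0 ≤ r := by
  rw [dist_eq_norm, retr, add_sub_cancel_left, norm_smul, Real.norm_eq_abs]
  rcases le_or_gt ‖v - v0‖ r with h | h
  · rw [max_eq_left h, div_self (ne_of_gt hr), abs_one, one_mul]; exact h
  · rw [max_eq_right h.le, abs_of_nonneg (by positivity)]
    rw [div_mul_cancel₀]
    exact ne_of_gt (hr.trans h)

lemma retr_eq {v0 : ℂ} {r : ℝ} (hr : 0 < r) {v : ℂ} (h : dist v v0 ≤ r) : retr v0 r v = v := by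
  rw [dist_eq_norm] at h
  rw [retr, max_eq_left h, div_self (ne_of_gt hr), one_smul, add_sub_cancel]

noncomputable def clampI (t : ℝ) : ℝ := min 1 (max 0 t)

lemma clampI_continuous : Continuous clampI :=
  continuous_const.min (continuous_const.max continuous_id)

lemma clampI_mem (t : ℝ) : clampI t ∈ Icc (0:ℝ) 1 :=
  ⟨le_min zero_le_one (le_max_left 0 t), min_le_left 1 _⟩

lemma clampI_eq {t : ℝ} (ht : t ∈ Icc (0:ℝ) 1) : clampI t = t := by
  rw [clampI, max_eq_right ht.1, min_eq_right ht.2]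

lemma exists_solution (S : E → ℂ → E) (U0 : E) (v0 : ℂ) (W : Set (E × ℂ))
    (hW : IsOpen W) (a K M r : ℝ) (ha : 0 < a) (hr : 0 < r) (hra : r ≤ a)
    (hrM : r * M ≤ a) (hrK : r * K ≤ 1/2) (hK0 : 0 ≤ K)
    (hQ : ∀ u : E, ∀ v : ℂ, dist u U0 ≤ a → dist v v0 ≤ a → (u, v) ∈ W)
    (hd : DifferentiableOn ℂ (fun p => S p.1 p.2) W)
    (hL : ∀ A B : E, ∀ v : ℂ, (A, v) ∈ W → (B, v) ∈ W → ‖S A v - S B v‖ ≤ K * ‖A - B‖)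
    (hM : ∀ u : E, ∀ v : ℂ, dist u U0 ≤ a → dist v v0 ≤ a → ‖S u v‖ ≤ M) :
    ∃ U : ℂ → E, U v0 = U0 ∧ ∀ v ∈ ball v0 r, HasDerivAt U (S (U v) v) v := by
  have hScont : ContinuousOn (fun p : E × ℂ => S p.1 p.2) W := hd.continuousOn
  set c : ℂ → ℝ → ℂ := fun v t => v0 + clampI t • (retr v0 r v - v0) with hc
  have hc_cont : Continuous fun p : ℂ × ℝ => c p.1 p.2 := by
    apply continuous_const.add
    exact (clampI_continuous.comp continuous_snd).smul
      (((retr_continuous hr).comp continuous_fst).sub continuous_const)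
  have hc_dist : ∀ v t, dist (c v t) v0 ≤ r := by
    intro v t
    rw [dist_eq_norm, hc]
    simp only [add_sub_cancel_left]
    rw [norm_smul, Real.norm_eq_abs, abs_of_nonneg (clampI_mem t).1]
    calc clampI t * ‖retr v0 r v - v0‖ ≤ 1 * r := by
          apply mul_le_mul (clampI_mem t).2 _ (norm_nonneg _) zero_le_one
          rw [← dist_eq_norm]; exact retr_dist hr v
      _ = r := one_mul r
  have hc_distA : ∀ v t, dist (c v t) v0 ≤ a := fun v t => (hc_dist v t).trans hra
  set P : (ℂ → E) → ℂ → E :=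
    fun f v => U0 + (retr v0 r v - v0) • ∫ t in (0:ℝ)..1, S (f (c v t)) (c v t) with hP
  -- basic facts about P f for f continuous, bounded into closedBall U0 a
  have integrand_cont : ∀ f : ℂ → E, Continuous f → (∀ v, dist (f v) U0 ≤ a) →
      Continuous fun p : ℂ × ℝ => S (f (c p.1 p.2)) (c p.1 p.2) := by
    intro f hf hfa
    have hpair : Continuous fun p : ℂ × ℝ => ((f (c p.1 p.2), c p.1 p.2) : E × ℂ) :=
      (hf.comp hc_cont).prodMk hc_cont
    exact hScont.comp_continuous hpair fun p => hQ _ _ (hfa _) (hc_distA _ _)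
  have P_cont : ∀ f : ℂ → E, Continuous f → (∀ v, dist (f v) U0 ≤ a) → Continuous (P f) := by
    intro f hf hfa
    apply continuous_const.add
    apply Continuous.smul ((retr_continuous hr).sub continuous_const)
    exact continuous_parametric_intervalIntegral_of_continuous'
      (f := fun v t => S (f (c v t)) (c v t)) (integrand_cont f hf hfa) 0 1
  have P_dist : ∀ f : ℂ → E, Continuous f → (∀ v, dist (f v) U0 ≤ a) →
      ∀ v, dist (P f v) U0 ≤ a := by
    intro f hf hfa v
    rw [dist_eq_norm, hP]
    simp only [add_sub_cancel_left]
    rw [norm_smul]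
    calc ‖retr v0 r v - v0‖ * ‖∫ t in (0:ℝ)..1, S (f (c v t)) (c v t)‖ ≤ r * M := by
          apply mul_le_mul _ _ (norm_nonneg _) (le_of_lt hr)
          · rw [← dist_eq_norm]; exact retr_dist hr v
          · have := intervalIntegral.norm_integral_le_of_norm_le_const
              (C := M) (f := fun t => S (f (c v t)) (c v t)) (a := 0) (b := 1)
              (fun t _ => hM _ _ (hfa _) (hc_distA _ _))
            simpa using this
      _ ≤ a := hrM
  -- derivative of P f on the ball, for f differentiable
  have P_deriv : ∀ f : ℂ → E, Continuous f → (∀ v, dist (f v) U0 ≤ a) →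
      DifferentiableOn ℂ f (ball v0 r) →
      ∀ v ∈ ball v0 r, HasDerivAt (P f) (S (f v) v) v := by
    intro f hf hfa hfd v hv
    set h : ℂ → E := fun w => S (f w) w with hh
    have hhd : DifferentiableOn ℂ h (ball v0 r) := by
      intro w hw
      have h1 : DifferentiableAt ℂ (fun p : E × ℂ => S p.1 p.2) (f w, w) :=
        hd.differentiableAt (hW.mem_nhds (hQ _ _ (hfa w) ((le_of_lt (mem_ball.mp hw)).trans hra)))
      have h2 : DifferentiableAt ℂ (fun w : ℂ => ((f w, w) : E × ℂ)) w :=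
        (hfd.differentiableAt (isOpen_ball.mem_nhds hw)).prodMk differentiableAt_id
      have h3 : DifferentiableAt ℂ ((fun p : E × ℂ => S p.1 p.2) ∘ fun w : ℂ => (f w, w)) w :=
        DifferentiableAt.comp (hg := h1) (hf := h2) w
      exact h3.differentiableWithinAt
    have hF := hasDerivAt_primitive hhd hv
    have hcongr : (fun z => U0 + (z - v0) • ∫ t in (0:ℝ)..1, h (v0 + t • (z - v0))) =ᶠ[nhds v]
        P f := by
      filter_upwards [isOpen_ball.eventually_mem hv] with z hz
      have hz' : dist z v0 ≤ r := le_of_lt (mem_ball.mp hz)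
      rw [hP]
      congr 1
      rw [retr_eq hr hz']
      congr 1
      apply intervalIntegral.integral_congr
      intro t ht
      rw [uIcc_of_le zero_le_one] at ht
      simp only [hc, clampI_eq ht, retr_eq hr hz', hh]
    exact (hF.const_add U0).congr_of_eventuallyEq hcongr.symm
  -- contraction estimate
  have P_contr : ∀ f g : ℂ → E, Continuous f → Continuous g →
      (∀ v, dist (f v) U0 ≤ a) → (∀ v, dist (g v) U0 ≤ a) → ∀ D : ℝ, 0 ≤ D →
      (∀ w, dist (f w) (g w) ≤ D) → ∀ v, dist (P f v) (P g v) ≤ (1/2) * D := by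
    intro f g hf hg hfa hga D hD hfg v
    have hif : IntervalIntegrable (fun t => S (f (c v t)) (c v t)) volume 0 1 :=
      ((integrand_cont f hf hfa).comp (Continuous.prodMk_right v)).intervalIntegrable 0 1
    have hig : IntervalIntegrable (fun t => S (g (c v t)) (c v t)) volume 0 1 :=
      ((integrand_cont g hg hga).comp (Continuous.prodMk_right v)).intervalIntegrable 0 1
    rw [hP, dist_eq_norm]
    have heq : U0 + (retr v0 r v - v0) • (∫ t in (0:ℝ)..1, S (f (c v t)) (c v t))
        - (U0 + (retr v0 r v - v0) • ∫ t in (0:ℝ)..1, S (g (c v t)) (c v t))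
        = (retr v0 r v - v0) • ((∫ t in (0:ℝ)..1, S (f (c v t)) (c v t))
            - ∫ t in (0:ℝ)..1, S (g (c v t)) (c v t)) := by
      rw [smul_sub]; abel
    rw [heq, norm_smul]
    calc ‖retr v0 r v - v0‖ * ‖(∫ t in (0:ℝ)..1, S (f (c v t)) (c v t))
            - ∫ t in (0:ℝ)..1, S (g (c v t)) (c v t)‖ ≤ r * (K * D) := by
          apply mul_le_mul _ _ (norm_nonneg _) (le_of_lt hr)
          · rw [← dist_eq_norm]; exact retr_dist hr v
          · rw [← intervalIntegral.integral_sub hif hig]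
            have := intervalIntegral.norm_integral_le_of_norm_le_const (C := K * D) (a := 0)
              (b := 1) (f := fun t => S (f (c v t)) (c v t) - S (g (c v t)) (c v t)) ?_
            · simpa using this
            · intro t _
              calc ‖S (f (c v t)) (c v t) - S (g (c v t)) (c v t)‖
                  ≤ K * ‖f (c v t) - g (c v t)‖ :=
                    hL _ _ _ (hQ _ _ (hfa _) (hc_distA _ _)) (hQ _ _ (hga _) (hc_distA _ _))
                _ ≤ K * D := by
                    apply mul_le_mul_of_nonneg_left _ hK0
                    rw [← dist_eq_norm]; exact hfg _
      _ = (r * K) * D := by ring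
      _ ≤ (1/2) * D := mul_le_mul_of_nonneg_right hrK hD
  -- set up the complete space of candidate solutions
  set A : Set (ℂ →ᵇ E) :=
    {f | (∀ v, dist (f v) U0 ≤ a) ∧ DifferentiableOn ℂ f (ball v0 r)} with hA
  have hA_closed : IsClosed A := by
    have h1 : IsClosed {f : ℂ →ᵇ E | ∀ v, dist (f v) U0 ≤ a} := by
      have : {f : ℂ →ᵇ E | ∀ v, dist (f v) U0 ≤ a}
          = ⋂ v, (fun f : ℂ →ᵇ E => f v) ⁻¹' (closedBall U0 a) := by
        ext f; simp [mem_closedBall]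
      rw [this]
      exact isClosed_iInter fun v =>
        Metric.isClosed_closedBall.preimage (BoundedContinuousFunction.lipschitz_eval_const v).continuous
    have h2 : IsClosed {f : ℂ →ᵇ E | DifferentiableOn ℂ (⇑f) (ball v0 r)} := by
      apply IsSeqClosed.isClosed
      intro fs f hfs hlim
      have hU : TendstoUniformly (fun n => ⇑(fs n)) ⇑f Filter.atTop :=
        BoundedContinuousFunction.tendsto_iff_tendstoUniformly.mp hlim
      have hUO : TendstoUniformlyOn (fun n => ⇑(fs n)) (⇑f) Filter.atTop (ball v0 r) :=
        hU.tendstoUniformlyOn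
      exact hUO.tendstoLocallyUniformlyOn.differentiableOn
        (Filter.Eventually.of_forall hfs) isOpen_ball
    exact h1.inter h2
  have hconst : BoundedContinuousFunction.const ℂ U0 ∈ A := by
    constructor
    · intro v
      simp only [BoundedContinuousFunction.const_apply, dist_self]
      exact ha.le
    · exact (differentiableOn_const U0)
  haveI : Nonempty ↥A := ⟨⟨_, hconst⟩⟩
  haveI : CompleteSpace ↥A := hA_closed.completeSpace_coe
  have Pbdd : ∀ f : ℂ → E, Continuous f → (∀ v, dist (f v) U0 ≤ a) →
      ∀ v, ‖P f v‖ ≤ ‖U0‖ + a := by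
    intro f hf hfa v
    calc ‖P f v‖ = ‖U0 + (P f v - U0)‖ := by rw [add_sub_cancel]
      _ ≤ ‖U0‖ + ‖P f v - U0‖ := norm_add_le _ _
      _ ≤ ‖U0‖ + a := by
          have := P_dist f hf hfa v; rw [dist_eq_norm] at this; linarith
  set T : ↥A → ↥A := fun f =>
    ⟨BoundedContinuousFunction.ofNormedAddCommGroup (P ⇑(f : ℂ →ᵇ E))
      (P_cont _ (f : ℂ →ᵇ E).continuous f.2.1) (‖U0‖ + a)
      (Pbdd _ (f : ℂ →ᵇ E).continuous f.2.1),
     ⟨P_dist _ (f : ℂ →ᵇ E).continuous f.2.1,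
      fun v hv => ((P_deriv _ (f : ℂ →ᵇ E).continuous f.2.1 f.2.2 v
        hv).differentiableAt).differentiableWithinAt⟩⟩ with hT
  have hcontr : ContractingWith (1/2 : ℝ≥0) T := by
    constructor
    · rw [← NNReal.coe_lt_coe]; norm_num
    · apply LipschitzWith.of_dist_le_mul
      intro f g
      rw [Subtype.dist_eq]
      have hhalf : ((1/2 : ℝ≥0) : ℝ) = 1/2 := by norm_num
      rw [hhalf]
      apply (BoundedContinuousFunction.dist_le (by positivity)).2
      intro v
      exact P_contr _ _ (f : ℂ →ᵇ E).continuous (g : ℂ →ᵇ E).continuous f.2.1 g.2.1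
        (dist (f : ℂ →ᵇ E) (g : ℂ →ᵇ E)) dist_nonneg
        (fun w => BoundedContinuousFunction.dist_coe_le_dist w) v
  set Uf : ↥A := ContractingWith.fixedPoint T hcontr with hUf
  have hfix : T Uf = Uf := hcontr.fixedPoint_isFixedPt
  set U : ℂ → E := ⇑((Uf : ↥A) : ℂ →ᵇ E) with hU
  have hPU : P U = U := by
    have := congrArg (fun x : ↥A => ⇑((x : ↥A) : ℂ →ᵇ E)) hfix
    exact this
  have hU0 : U v0 = U0 := by
    rw [← hPU, hP]
    simp only []
    rw [retr_eq hr (by simp [ha.le, hr.le])]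
    simp
  refine ⟨U, hU0, fun v hv => ?_⟩
  have := P_deriv U ((Uf : ℂ →ᵇ E)).continuous Uf.2.1 Uf.2.2 v hv
  rwa [hPU] at this
lemma uniqueness_lemma (S : E → ℂ → E) (U0 : E) (v0 : ℂ) (W : Set (E × ℂ)) (a K : ℝ)
    (ha : 0 < a) (hK0 : 0 ≤ K)
    (hQ : ∀ u : E, ∀ v : ℂ, dist u U0 ≤ a → dist v v0 ≤ a → (u, v) ∈ W)
    (hScont : ContinuousOn (fun p : E × ℂ => S p.1 p.2) W)
    (hL : ∀ A B : E, ∀ v : ℂ, (A, v) ∈ W → (B, v) ∈ W → ‖S A v - S B v‖ ≤ K * ‖A - B‖)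
    (U1 U2 : ℂ → E) (V1 V2 : Set ℂ) (hV1 : IsOpen V1) (hV2 : IsOpen V2)
    (hv01 : v0 ∈ V1) (hv02 : v0 ∈ V2) (h10 : U1 v0 = U0) (h20 : U2 v0 = U0)
    (hsol1 : ∀ v ∈ V1, HasDerivAt U1 (S (U1 v) v) v)
    (hsol2 : ∀ v ∈ V2, HasDerivAt U2 (S (U2 v) v) v) :
    ∃ V3 : Set ℂ, IsOpen V3 ∧ v0 ∈ V3 ∧ EqOn U1 U2 V3 := by
  have hU1c : ∀ v ∈ V1, ContinuousAt U1 v :=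
    fun v hv => (hsol1 v hv).differentiableAt.continuousAt
  have hU2c : ∀ v ∈ V2, ContinuousAt U2 v :=
    fun v hv => (hsol2 v hv).differentiableAt.continuousAt
  set N : Set ℂ := V1 ∩ V2 ∩ U1 ⁻¹' (closedBall U0 a) ∩ U2 ⁻¹' (closedBall U0 a) with hN
  have hNmem : N ∈ nhds v0 := by
    apply Filter.inter_mem
    apply Filter.inter_mem
    apply Filter.inter_mem (hV1.mem_nhds hv01) (hV2.mem_nhds hv02)
    · apply (hU1c v0 hv01).preimage_mem_nhds
      rw [h10]; exact closedBall_mem_nhds U0 ha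
    · apply (hU2c v0 hv02).preimage_mem_nhds
      rw [h20]; exact closedBall_mem_nhds U0 ha
  obtain ⟨ρ0, hρ0, hρ0sub⟩ := Metric.nhds_basis_closedBall.mem_iff.mp hNmem
  set ρ : ℝ := min ρ0 (min a (1/(2*(K+1)))) with hρ
  have hρpos : 0 < ρ := by
    apply lt_min hρ0
    apply lt_min ha
    positivity
  have hρa : ρ ≤ a := (min_le_right _ _).trans (min_le_left _ _)
  have hρK : K * ρ ≤ 1/2 := by
    have h1 : ρ ≤ 1/(2*(K+1)) := (min_le_right _ _).trans (min_le_right _ _)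
    have h2 : K * ρ ≤ K * (1/(2*(K+1))) := mul_le_mul_of_nonneg_left h1 hK0
    have h3 : K * (1/(2*(K+1))) ≤ 1/2 := by
      rw [mul_one_div, div_le_div_iff₀ (by positivity) (by norm_num)]
      nlinarith
    linarith
  have hsub : closedBall v0 ρ ⊆ N := (closedBall_subset_closedBall (min_le_left _ _)).trans hρ0sub
  have hsubV1 : closedBall v0 ρ ⊆ V1 := fun v hv => (((hsub hv).1).1).1
  have hsubV2 : closedBall v0 ρ ⊆ V2 := fun v hv => (((hsub hv).1).1).2
  have hsubB1 : ∀ v ∈ closedBall v0 ρ, dist (U1 v) U0 ≤ a := fun v hv => ((hsub hv).1).2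
  have hsubB2 : ∀ v ∈ closedBall v0 ρ, dist (U2 v) U0 ≤ a := fun v hv => (hsub hv).2
  -- maximum of the distance on the closed ball
  set φ : ℂ → ℝ := fun v => ‖U1 v - U2 v‖ with hφ
  have hφcont : ContinuousOn φ (closedBall v0 ρ) := by
    intro v hv
    exact (((hU1c v (hsubV1 hv)).sub (hU2c v (hsubV2 hv))).norm).continuousWithinAt
  obtain ⟨vs, hvs, hmax⟩ := (isCompact_closedBall v0 ρ).exists_isMaxOn
    ⟨v0, by simp [hρpos.le]⟩ hφcont
  have hmax' : ∀ v ∈ closedBall v0 ρ, φ v ≤ φ vs := hmax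
  -- key integral estimate
  have key : ∀ v ∈ closedBall v0 ρ, φ v ≤ (K * ρ) * φ vs := by
    intro v hv
    set γ : ℝ → ℂ := fun t => v0 + t • (v - v0) with hγ
    have hγmem : ∀ t ∈ Icc (0:ℝ) 1, γ t ∈ closedBall v0 ρ := by
      intro t ht
      rw [mem_closedBall, dist_eq_norm, hγ]
      simp only [add_sub_cancel_left]
      rw [norm_smul, Real.norm_eq_abs, abs_of_nonneg ht.1]
      calc t * ‖v - v0‖ ≤ 1 * ρ := by
            apply mul_le_mul ht.2 _ (norm_nonneg _) zero_le_one
            rw [← dist_eq_norm]; exact mem_closedBall.mp hv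
        _ = ρ := one_mul ρ
    set D : ℝ → E := fun t =>
      (v - v0) • (S (U1 (γ t)) (γ t) - S (U2 (γ t)) (γ t)) with hD
    have hder : ∀ t ∈ uIcc (0:ℝ) 1,
        HasDerivAt (fun t => U1 (γ t) - U2 (γ t)) (D t) t := by
      intro t ht
      rw [uIcc_of_le zero_le_one] at ht
      have hmemt := hγmem t ht
      have h1 := comp_real_hasDerivAt (hsol1 _ (hsubV1 hmemt)) (curve_hasDerivAt v0 v t)
      have h2 := comp_real_hasDerivAt (hsol2 _ (hsubV2 hmemt)) (curve_hasDerivAt v0 v t)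
      have := h1.sub h2
      simpa [hD, hγ, smul_sub, Pi.sub_def] using this
    have hDcont : ContinuousOn D (Icc (0:ℝ) 1) := by
      have hγcont : Continuous γ := by
        apply continuous_const.add (continuous_id.smul continuous_const)
      have hpair1 : ContinuousOn (fun t => ((U1 (γ t), γ t) : E × ℂ)) (Icc (0:ℝ) 1) := by
        intro t ht
        exact ((hU1c _ (hsubV1 (hγmem t ht))).comp hγcont.continuousAt).continuousWithinAt.prodMk
          hγcont.continuousWithinAt
      have hc1 : ContinuousOn (fun t => S (U1 (γ t)) (γ t)) (Icc (0:ℝ) 1) :=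
        hScont.comp hpair1 fun t ht =>
          hQ _ _ (hsubB1 _ (hγmem t ht)) ((mem_closedBall.mp (hγmem t ht)).trans hρa)
      have hpair2 : ContinuousOn (fun t => ((U2 (γ t), γ t) : E × ℂ)) (Icc (0:ℝ) 1) := by
        intro t ht
        exact ((hU2c _ (hsubV2 (hγmem t ht))).comp hγcont.continuousAt).continuousWithinAt.prodMk
          hγcont.continuousWithinAt
      have hc2 : ContinuousOn (fun t => S (U2 (γ t)) (γ t)) (Icc (0:ℝ) 1) :=
        hScont.comp hpair2 fun t ht =>
          hQ _ _ (hsubB2 _ (hγmem t ht)) ((mem_closedBall.mp (hγmem t ht)).trans hρa)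
      exact continuousOn_const.smul (hc1.sub hc2)
    have hFTC : U1 v - U2 v = ∫ t in (0:ℝ)..1, D t := by
      have := intervalIntegral.integral_eq_sub_of_hasDerivAt hder
        (hDcont.intervalIntegrable_of_Icc zero_le_one)
      rw [this, hγ]
      simp [h10, h20]
    have hbound : ∀ t ∈ Set.uIoc (0:ℝ) 1, ‖D t‖ ≤ ρ * (K * φ vs) := by
      intro t ht
      rw [uIoc_of_le zero_le_one] at ht
      have ht' : t ∈ Icc (0:ℝ) 1 := Ioc_subset_Icc_self ht
      have hmemt := hγmem t ht'
      rw [hD, norm_smul]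
      apply mul_le_mul
      · rw [← dist_eq_norm]; exact mem_closedBall.mp hv
      · calc ‖S (U1 (γ t)) (γ t) - S (U2 (γ t)) (γ t)‖ ≤ K * ‖U1 (γ t) - U2 (γ t)‖ :=
              hL _ _ _ (hQ _ _ (hsubB1 _ hmemt) ((mem_closedBall.mp hmemt).trans hρa))
                (hQ _ _ (hsubB2 _ hmemt) ((mem_closedBall.mp hmemt).trans hρa))
          _ ≤ K * φ vs := mul_le_mul_of_nonneg_left (hmax' _ hmemt) hK0
      · exact norm_nonneg _
      · exact hρpos.le
    calc φ v = ‖∫ t in (0:ℝ)..1, D t‖ := by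
          show ‖U1 v - U2 v‖ = _
          rw [hFTC]
      _ ≤ ρ * (K * φ vs) * |1 - 0| :=
          intervalIntegral.norm_integral_le_of_norm_le_const hbound
      _ = (K * ρ) * φ vs := by simp; ring
  have hφvs : φ vs = 0 := by
    have h1 := key vs hvs
    have h2 : φ vs * (1 - K * ρ) ≤ 0 := by nlinarith
    have h3 : (0:ℝ) < 1 - K * ρ := by linarith
    nlinarith [norm_nonneg (U1 vs - U2 vs)]
  refine ⟨ball v0 ρ, isOpen_ball, mem_ball_self hρpos, fun v hv => ?_⟩
  have := key v (ball_subset_closedBall hv)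
  rw [hφvs, mul_zero] at this
  have : φ v = 0 := le_antisymm this (norm_nonneg _)
  rwa [hφ, norm_sub_eq_zero_iff] at this

/-- **Local existence and uniqueness for uniformly Lipschitz-like holomorphic Cauchy
problems.** `ℂ^N` (modelled as `Fin N → ℂ`) carries the maximum coordinate norm.  If `S` is
holomorphic on an open neighbourhood of `(U0, v0)` and uniformly Lipschitz-like at
`(U0, v0)` (i.e. `‖S U v - S V v‖ ≤ K ‖U - V‖` uniformly in `v` on a neighbourhood), then
the Cauchy problem `U' = S (U v) v`, `U v0 = U0` has a holomorphic solution on some open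
neighbourhood of `v0`, and the germ of the solution at `v0` is unique. -/
theorem stmt_1 {N : ℕ} (hN : 1 ≤ N) (U0 : Fin N → ℂ) (v0 : ℂ)
    (S : (Fin N → ℂ) → ℂ → (Fin N → ℂ))
    (hol : ∃ O : Set ((Fin N → ℂ) × ℂ), IsOpen O ∧ ((U0, v0) : (Fin N → ℂ) × ℂ) ∈ O ∧
      DifferentiableOn ℂ (fun p => S p.1 p.2) O)
    (hlip : ∃ K : ℝ, ∃ O ∈ nhds ((U0, v0) : (Fin N → ℂ) × ℂ),
      ∀ (A B : Fin N → ℂ) (v : ℂ), ((A, v) : (Fin N → ℂ) × ℂ) ∈ O →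
        ((B, v) : (Fin N → ℂ) × ℂ) ∈ O → ‖S A v - S B v‖ ≤ K * ‖A - B‖) :
    (∃ V : Set ℂ, IsOpen V ∧ v0 ∈ V ∧ ∃ U : ℂ → Fin N → ℂ,
        U v0 = U0 ∧ ∀ v ∈ V, HasDerivAt U (S (U v) v) v) ∧
    (∀ (U1 U2 : ℂ → Fin N → ℂ) (V1 V2 : Set ℂ),
        IsOpen V1 → IsOpen V2 → v0 ∈ V1 → v0 ∈ V2 →
        U1 v0 = U0 → U2 v0 = U0 →
        (∀ v ∈ V1, HasDerivAt U1 (S (U1 v) v) v) →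
        (∀ v ∈ V2, HasDerivAt U2 (S (U2 v) v) v) →
        ∃ V3 : Set ℂ, IsOpen V3 ∧ v0 ∈ V3 ∧ EqOn U1 U2 V3) := by
  obtain ⟨O, hOopen, hO0, hdiff⟩ := hol
  obtain ⟨K0, O', hO'n, hlip'⟩ := hlip
  set W : Set ((Fin N → ℂ) × ℂ) := O ∩ interior O' with hWdef
  have hWopen : IsOpen W := hOopen.inter isOpen_interior
  have hW0 : ((U0, v0) : (Fin N → ℂ) × ℂ) ∈ W :=
    ⟨hO0, mem_interior_iff_mem_nhds.mpr hO'n⟩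
  obtain ⟨a, ha, hasub⟩ := Metric.nhds_basis_closedBall.mem_iff.mp (hWopen.mem_nhds hW0)
  have hQ : ∀ u : Fin N → ℂ, ∀ v : ℂ, dist u U0 ≤ a → dist v v0 ≤ a → (u, v) ∈ W := by
    intro u v h1 h2
    apply hasub
    rw [mem_closedBall, Prod.dist_eq]
    exact max_le h1 h2
  set K := max K0 0 with hKdef
  have hK0 : 0 ≤ K := le_max_right _ _
  have hL : ∀ A B : Fin N → ℂ, ∀ v : ℂ, (A, v) ∈ W → (B, v) ∈ W →
      ‖S A v - S B v‖ ≤ K * ‖A - B‖ := by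
    intro A B v hA hB
    calc ‖S A v - S B v‖ ≤ K0 * ‖A - B‖ :=
          hlip' A B v (interior_subset hA.2) (interior_subset hB.2)
      _ ≤ K * ‖A - B‖ := mul_le_mul_of_nonneg_right (le_max_left _ _) (norm_nonneg _)
  have hdW : DifferentiableOn ℂ (fun p : (Fin N → ℂ) × ℂ => S p.1 p.2) W :=
    hdiff.mono inter_subset_left
  obtain ⟨M0, hM0⟩ := (isCompact_closedBall ((U0, v0) : (Fin N → ℂ) × ℂ) a).exists_bound_of_continuousOn
    (hdW.continuousOn.mono hasub)
  set M := max M0 0 with hMdef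
  have hM0' : 0 ≤ M := le_max_right _ _
  have hM : ∀ u : Fin N → ℂ, ∀ v : ℂ, dist u U0 ≤ a → dist v v0 ≤ a → ‖S u v‖ ≤ M := by
    intro u v h1 h2
    have hm : ((u, v) : (Fin N → ℂ) × ℂ) ∈ closedBall ((U0, v0) : (Fin N → ℂ) × ℂ) a := by
      rw [mem_closedBall, Prod.dist_eq]; exact max_le h1 h2
    exact (hM0 _ hm).trans (le_max_left _ _)
  set r := min a (min (a/(M+1)) (1/(2*(K+1)))) with hrdef
  have hr : 0 < r := lt_min ha (lt_min (by positivity) (by positivity))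
  have hra : r ≤ a := min_le_left _ _
  have hrM : r * M ≤ a := by
    have h1 : r ≤ a/(M+1) := (min_le_right _ _).trans (min_le_left _ _)
    calc r * M ≤ a/(M+1) * M := mul_le_mul_of_nonneg_right h1 hM0'
      _ ≤ a := by
          rw [div_mul_eq_mul_div, div_le_iff₀ (by positivity)]
          nlinarith [ha.le]
  have hrK : r * K ≤ 1/2 := by
    have h1 : r ≤ 1/(2*(K+1)) := (min_le_right _ _).trans (min_le_right _ _)
    calc r * K ≤ 1/(2*(K+1)) * K := mul_le_mul_of_nonneg_right h1 hK0
      _ ≤ 1/2 := by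
          rw [one_div, inv_mul_eq_div, div_le_div_iff₀ (by positivity) (by norm_num)]
          nlinarith
  constructor
  · obtain ⟨U, hU0, hUder⟩ :=
      exists_solution S U0 v0 W hWopen a K M r ha hr hra hrM hrK hK0 hQ hdW hL hM
    exact ⟨ball v0 r, isOpen_ball, mem_ball_self hr, U, hU0, hUder⟩
  · intro U1 U2 V1 V2 hV1 hV2 hv01 hv02 h10 h20 hs1 hs2
    exact uniqueness_lemma S U0 v0 W a K ha hK0 hQ hdW.continuousOn hL U1 U2 V1 V2 hV1 hV2
      hv01 hv02 h10 h20 hs1 hs2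
end

section
/- Let (u0, v0) ∈ ℂ × ℂ and let F be a ℂ-valued function holomorphic on an open neighbourhood of (u0, v0). Then there exists an open neighbourhood V of v0 and a holomorphic function u : V → ℂ with u(v0) = u0 and u′(v) = F(u(v), v) for all v ∈ V; moreover the solution germ is unique: any two holomorphic functions defined on neighbourhoods of v0, taking the value u0 at v0 and satisfying this differential equation near v0, coincide on some neighbourhood of v0. -/
open Set

open Metric Complex Filter

lemma aux_hasDerivAt_monomial (n : ℕ) (c a : ℂ) (z : ℂ) :
    HasDerivAt (fun z => a / (n+1) * (z - c)^(n+1)) (a * (z - c)^n) z := by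
  have h1 : HasDerivAt (fun z : ℂ => (z - c)^(n+1)) ((n+1) * (z-c)^n) z := by
    have := ((hasDerivAt_id z).sub_const c).fun_pow (n+1)
    simpa using this
  have h2 := h1.const_mul (a / (n+1))
  convert h2 using 1
  · rfl
  · rfl
  have hne : ((n:ℂ)+1) ≠ 0 := by exact_mod_cast (Nat.cast_add_one_ne_zero n : ((n:ℂ)+1) ≠ 0)
  rw [← mul_assoc, div_mul_cancel₀ _ hne]

lemma exists_primitive_s2 {g : ℂ → ℂ} {c : ℂ} {r : ℝ} (hr : 0 < r)
    (hg : DifferentiableOn ℂ g (ball c r)) :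
    ∃ P : ℂ → ℂ, P c = 0 ∧ ∀ v ∈ ball c r, HasDerivAt P (g v) v := by
  set p : FormalMultilinearSeries ℂ ℂ ℂ := cauchyPowerSeries g c ((r/2).toNNReal) with hp_def
  have h2 : (0:ℝ) < r/2 := by linarith
  have hp0 : HasFPowerSeriesOnBall g p c ((r/2).toNNReal) := by
    refine (hg.mono ?_).hasFPowerSeriesOnBall (by simpa using h2)
    refine (closedBall_subset_ball ?_)
    rw [Real.coe_toNNReal _ h2.le]; linarith
  have key : ∀ r' : ℝ, r/2 ≤ r' → r' < r → HasFPowerSeriesOnBall g p c (r'.toNNReal) := by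
    intro r' hr1 hr2
    have h2' : (0:ℝ) < r' := lt_of_lt_of_le h2 hr1
    have hq : HasFPowerSeriesOnBall g (cauchyPowerSeries g c (r'.toNNReal)) c (r'.toNNReal) := by
      refine (hg.mono ?_).hasFPowerSeriesOnBall (by simpa using h2')
      refine (closedBall_subset_ball ?_)
      rw [Real.coe_toNNReal _ h2'.le]; linarith
    have : cauchyPowerSeries g c (r'.toNNReal) = p :=
      hq.hasFPowerSeriesAt.eq_formalMultilinearSeries hp0.hasFPowerSeriesAt
    rwa [this] at hq
  refine ⟨fun v => ∑' n : ℕ, p.coeff n / (n+1) * (v - c)^(n+1), by simp, ?_⟩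
  intro v hv
  -- choose radii  ‖v - c‖ < r'' < r' < r,  r/2 ≤ r'
  set d : ℝ := max ‖v - c‖ (r/2) with hd_def
  have hdr : d < r := by
    rw [hd_def, max_lt_iff]
    exact ⟨by simpa [mem_ball, dist_eq_norm] using hv, by linarith⟩
  set r' : ℝ := (d + r) / 2 with hr'_def
  have hdr' : d < r' := by rw [hr'_def]; linarith
  have hr'r : r' < r := by rw [hr'_def]; linarith
  have hr'half : r/2 ≤ r' := le_trans (le_max_right _ _) hdr'.le
  set r'' : ℝ := (‖v - c‖ + r') / 2 with hr''_def
  have hvr'' : ‖v - c‖ < r'' := by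
    have : ‖v - c‖ ≤ d := le_max_left _ _
    rw [hr''_def]; linarith
  have hr''r' : r'' < r' := by
    have : ‖v - c‖ ≤ d := le_max_left _ _
    rw [hr''_def]; linarith
  have hr''0 : 0 ≤ r'' := le_trans (norm_nonneg _) hvr''.le
  have hp' : HasFPowerSeriesOnBall g p c (r'.toNNReal) := key r' hr'half hr'r
  -- summability of the coefficient bound
  have hsum : Summable fun n : ℕ => ‖p n‖ * r''^n := by
    have h := p.summable_norm_mul_pow (r := r''.toNNReal) ?_
    · simpa [Real.coe_toNNReal _ hr''0] using h
    · calc (r''.toNNReal : ENNReal) < r'.toNNReal := by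
            simp only [ENNReal.coe_lt_coe]
            rwa [Real.toNNReal_lt_toNNReal_iff_of_nonneg hr''0]
        _ ≤ p.radius := hp'.r_le
  have hcoeff : ∀ n : ℕ, ‖p.coeff n‖ ≤ ‖p n‖ := fun n =>
    le_of_eq (FormalMultilinearSeries.norm_apply_eq_norm_coef).symm
  -- apply the differentiation-of-series lemma on the ball of radius r''
  have hder := hasDerivAt_tsum_of_isPreconnected (𝕜 := ℂ) (F := ℂ)
      (u := fun n : ℕ => ‖p n‖ * r''^n)
      (g := fun (n : ℕ) (z : ℂ) => p.coeff n / (n+1) * (z - c)^(n+1))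
      (g' := fun (n : ℕ) (z : ℂ) => p.coeff n * (z - c)^n)
      (t := ball c r'') (y₀ := c) (y := v)
      hsum isOpen_ball (convex_ball c r'').isPreconnected
      (fun n z _ => aux_hasDerivAt_monomial n c (p.coeff n) z)
      (fun n z hz => by
        have hzn : ‖z - c‖ ≤ r'' := by
          simpa [mem_ball, dist_eq_norm] using (mem_ball_iff_norm.mp hz).le
        calc ‖p.coeff n * (z - c)^n‖ = ‖p.coeff n‖ * ‖z - c‖^n := by
              rw [norm_mul, norm_pow]
          _ ≤ ‖p n‖ * r''^n := by
              have h1 : ‖z - c‖^n ≤ r''^n := pow_le_pow_left₀ (norm_nonneg _) hzn n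
              exact mul_le_mul (hcoeff n) h1 (by positivity) (norm_nonneg _))
      (by simpa [mem_ball, dist_eq_norm] using lt_of_le_of_lt (norm_nonneg _) hvr'')
      (by simpa using summable_zero)
      (by simpa [mem_ball, dist_eq_norm] using hvr'')
  -- identify the sum of derivatives with g v
  have hvball : v ∈ Metric.eball c (r'.toNNReal) := by
    rw [Metric.mem_eball, edist_dist, dist_eq_norm]
    calc ENNReal.ofReal ‖v - c‖ < ENNReal.ofReal r' := by
          apply ENNReal.ofReal_lt_ofReal_iff_of_nonneg (norm_nonneg _) |>.mpr
          exact lt_trans hvr'' hr''r'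
      _ = _ := by simp [ENNReal.ofReal]
  have hsum2 : HasSum (fun n : ℕ => p n fun _ => v - c) (g v) := by
    have := hp'.hasSum (y := v - c) (by simpa using (Or.inl (lt_trans hvr'' hr''r') : ‖v - c‖ < r' ∨ ‖v - c‖ < 0))
    simpa using this
  have hsum3 : HasSum (fun n : ℕ => p.coeff n * (v - c)^n) (g v) := by
    convert hsum2 using 2 with n
    rw [p.apply_eq_pow_smul_coeff]
    simp [mul_comm]
  have : (∑' n : ℕ, p.coeff n * (v - c)^n) = g v := hsum3.tsum_eq
  rw [← this]
  exact hder

open Filter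

lemma exists_solution_s2 {F : ℂ → ℂ → ℂ} {u0 v0 : ℂ} {O : Set (ℂ × ℂ)} (hO : IsOpen O)
    (hF : DifferentiableOn ℂ (fun p => F p.1 p.2) O) {E M L r : ℝ}
    (hE : 0 < E) (hsub : closedBall u0 E ×ˢ closedBall v0 E ⊆ O)
    (hM : ∀ x ∈ closedBall u0 E, ∀ v ∈ closedBall v0 E, ‖F x v‖ ≤ M)
    (hL : ∀ v ∈ closedBall v0 E, ∀ x ∈ closedBall u0 (E/8), ∀ y ∈ closedBall u0 (E/8),
      dist (F x v) (F y v) ≤ L * dist x y)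
    (hM0 : 0 ≤ M) (hL0 : 0 ≤ L)
    (hr0 : 0 < r) (hrE : r ≤ E) (hrM : M * r ≤ E/16) (hrL : L * r ≤ 1/2) :
    ∃ u : ℂ → ℂ, u v0 = u0 ∧ DifferentiableOn ℂ u (ball v0 r) ∧
      ∀ v ∈ ball v0 r, HasDerivAt u (F (u v) v) v := by
  classical
  -- membership facts
  have hmemO : ∀ x ∈ closedBall u0 (E/8), ∀ v ∈ ball v0 r, (x, v) ∈ O := by
    intro x hx v hv
    apply hsub
    refine ⟨closedBall_subset_closedBall (by linarith) hx, ?_⟩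
    exact (ball_subset_closedBall.trans (closedBall_subset_closedBall hrE)) hv
  set Good : (ℂ → ℂ) → Prop := fun f =>
    f v0 = u0 ∧ DifferentiableOn ℂ f (ball v0 r) ∧
      ∀ v ∈ ball v0 r, f v ∈ closedBall u0 (E/8) with hGood_def
  -- differentiability and bound of the composite map
  have hcomp : ∀ f, Good f → DifferentiableOn ℂ (fun v => F (f v) v) (ball v0 r) := by
    intro g hg v hv
    have hmem : (g v, v) ∈ O := hmemO _ (hg.2.2 v hv) _ hv
    have h1 : DifferentiableAt ℂ (fun p : ℂ × ℂ => F p.1 p.2) (g v, v) :=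
      (hF.differentiableAt (hO.mem_nhds hmem))
    have h2 : DifferentiableWithinAt ℂ (fun w => ((g w, w) : ℂ × ℂ)) (ball v0 r) v :=
      (hg.2.1 v hv).prodMk (differentiableAt_id.differentiableWithinAt)
    exact DifferentiableAt.comp_differentiableWithinAt
      (f := fun w => ((g w, w) : ℂ × ℂ)) v h1 h2
  have hcompM : ∀ f, Good f → ∀ v ∈ ball v0 r, ‖F (f v) v‖ ≤ M := by
    intro f hf v hv
    refine hM _ (closedBall_subset_closedBall (by linarith) (hf.2.2 v hv)) _ ?_
    exact (ball_subset_closedBall.trans (closedBall_subset_closedBall hrE)) hv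
  -- mean value helper on the ball
  have hmvt : ∀ (h : ℂ → ℂ) (h' : ℂ → ℂ) (C : ℝ),
      (∀ v ∈ ball v0 r, HasDerivAt h (h' v) v) →
      (∀ v ∈ ball v0 r, ‖h' v‖ ≤ C) →
      ∀ v ∈ ball v0 r, ‖h v - h v0‖ ≤ C * ‖v - v0‖ := by
    intro h h' C hder hbound v hv
    have hv0 : v0 ∈ ball v0 r := mem_ball_self hr0
    refine (convex_ball v0 r).norm_image_sub_le_of_norm_hasFDerivWithin_le
      (f' := fun x => ((1 : ℂ →L[ℂ] ℂ).smulRight (h' x)).restrictScalars ℝ)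
      (fun x hx => ((hder x hx).hasFDerivAt.restrictScalars ℝ).hasFDerivWithinAt)
      (fun x hx => ?_) hv0 hv
    rw [ContinuousLinearMap.norm_restrictScalars, ContinuousLinearMap.norm_smulRight_apply,
      norm_one, one_mul]
    exact hbound x hx
  -- the Picard step
  have step : ∀ f : ℂ → ℂ, ∃ f' : ℂ → ℂ, Good f →
      (Good f' ∧ ∀ v ∈ ball v0 r, HasDerivAt f' (F (f v) v) v) := by
    intro f
    by_cases hf : Good f
    · obtain ⟨P, hP0, hPder⟩ := exists_primitive_s2 hr0 (hcomp f hf)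
      refine ⟨fun v => u0 + P v, fun _ => ⟨⟨by simp [hP0], ?_, ?_⟩, ?_⟩⟩
      · intro v hv
        exact (((hPder v hv).const_add u0).differentiableAt).differentiableWithinAt
      · intro v hv
        have hb := hmvt (fun v => u0 + P v) (fun v => F (f v) v) M
          (fun v hv => (hPder v hv).const_add u0) (hcompM f hf) v hv
        simp only [hP0, add_zero, add_sub_cancel_left] at hb
        have hvr : ‖v - v0‖ ≤ r := by
          have := mem_ball_iff_norm.mp hv
          linarith
        have : ‖P v‖ ≤ M * r := le_trans hb (by
          exact mul_le_mul_of_nonneg_left hvr hM0)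
        rw [mem_closedBall, dist_eq_norm]
        have : ‖u0 + P v - u0‖ = ‖P v‖ := by ring_nf
        calc ‖u0 + P v - u0‖ = ‖P v‖ := by ring_nf
          _ ≤ M * r := ‹‖P v‖ ≤ M * r›
          _ ≤ E/16 := hrM
          _ ≤ E/8 := by linarith
      · intro v hv
        exact (hPder v hv).const_add u0
    · exact ⟨f, fun h => absurd h hf⟩
  choose next hnext using step
  set U : ℕ → ℂ → ℂ := fun n => next^[n] (fun _ => u0) with hU_def
  have hU0 : U 0 = fun _ => u0 := rfl
  have hUsucc : ∀ n, U (n + 1) = next (U n) := by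
    intro n
    rw [hU_def]
    exact Function.iterate_succ_apply' next n _
  have hGood0 : Good (fun _ : ℂ => u0) := by
    refine ⟨rfl, differentiableOn_const _, fun v _ => ?_⟩
    rw [mem_closedBall, dist_self]; linarith
  have hGoodU : ∀ n, Good (U n) := by
    intro n
    induction n with
    | zero => exact hGood0
    | succ k ih => rw [hUsucc]; exact (hnext (U k) ih).1
  have hUder : ∀ n, ∀ v ∈ ball v0 r, HasDerivAt (U (n+1)) (F (U n v) v) v := by
    intro n v hv
    rw [hUsucc]
    exact (hnext (U n) (hGoodU n)).2 v hv
  -- the difference bound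
  set q : ℝ := L * r with hq_def
  have hq0 : 0 ≤ q := mul_nonneg hL0 hr0.le
  have hq1 : q < 1 := lt_of_le_of_lt hrL (by norm_num)
  set dfun : ℕ → ℂ → ℂ := fun n v => U (n+1) v - U n v with hdfun_def
  have hbnd : ∀ n, ∀ v ∈ ball v0 r, ‖dfun n v‖ ≤ M * r * q ^ n := by
    intro n
    induction n with
    | zero =>
      intro v hv
      have h1 : ∀ w ∈ ball v0 r, HasDerivAt (U 1) (F (U 0 w) w) w := hUder 0
      have h2 := hmvt (U 1) (fun w => F (U 0 w) w) M h1 (hcompM (U 0) (hGoodU 0)) v hv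
      have h3 : (U 1) v0 = u0 := (hGoodU 1).1
      have h4 : (U 0) v = u0 := rfl
      have hvr : ‖v - v0‖ ≤ r := by
        have := mem_ball_iff_norm.mp hv; linarith
      have : ‖U 1 v - u0‖ ≤ M * ‖v - v0‖ := by rwa [h3] at h2
      calc ‖dfun 0 v‖ = ‖U 1 v - u0‖ := by simp only [hdfun_def, hU0]
        _ ≤ M * ‖v - v0‖ := this
        _ ≤ M * r := mul_le_mul_of_nonneg_left hvr hM0
        _ = M * r * q ^ 0 := by ring
    | succ k ih =>
      intro v hv
      have hder1 : ∀ w ∈ ball v0 r,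
          HasDerivAt (dfun (k+1)) (F (U (k+1) w) w - F (U k w) w) w := by
        intro w hw
        exact (hUder (k+1) w hw).sub (hUder k w hw)
      have hderb : ∀ w ∈ ball v0 r, ‖F (U (k+1) w) w - F (U k w) w‖ ≤ L * (M * r * q ^ k) := by
        intro w hw
        have hwE : w ∈ closedBall v0 E :=
          (ball_subset_closedBall.trans (closedBall_subset_closedBall hrE)) hw
        have h1 := hL w hwE (U (k+1) w) ((hGoodU (k+1)).2.2 w hw) (U k w) ((hGoodU k).2.2 w hw)
        calc ‖F (U (k+1) w) w - F (U k w) w‖ ≤ L * ‖U (k+1) w - U k w‖ := by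
              rw [← dist_eq_norm, ← dist_eq_norm]
              exact h1
          _ ≤ L * (M * r * q ^ k) := by
              apply mul_le_mul_of_nonneg_left _ hL0
              have := ih w hw
              simpa [hdfun_def] using this
      have h2 := hmvt (dfun (k+1)) (fun w => F (U (k+1) w) w - F (U k w) w)
        (L * (M * r * q ^ k)) hder1 hderb v hv
      have h3 : dfun (k+1) v0 = 0 := by
        rw [hdfun_def]
        simp [(hGoodU (k+2)).1, (hGoodU (k+1)).1]
      rw [h3, sub_zero] at h2
      have hvr : ‖v - v0‖ ≤ r := by
        have := mem_ball_iff_norm.mp hv; linarith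
      calc ‖dfun (k+1) v‖ ≤ L * (M * r * q ^ k) * ‖v - v0‖ := h2
        _ ≤ L * (M * r * q ^ k) * r := by
            apply mul_le_mul_of_nonneg_left hvr
            positivity
        _ = M * r * q ^ (k+1) := by rw [hq_def]; ring
  have hsumgeo : Summable fun n : ℕ => M * r * q ^ n :=
    (summable_geometric_of_lt_one hq0 hq1).mul_left _
  have hddiff : ∀ n : ℕ, DifferentiableOn ℂ (dfun n) (ball v0 r) :=
    fun n => (hGoodU (n+1)).2.1.sub (hGoodU n).2.1
  set T : ℂ → ℂ := fun v => ∑' n : ℕ, dfun n v with hT_def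
  set u : ℂ → ℂ := fun v => u0 + T v with hu_def
  have hTdiff : DifferentiableOn ℂ T (ball v0 r) :=
    differentiableOn_tsum_of_summable_norm hsumgeo hddiff isOpen_ball
      (fun n w hw => hbnd n w hw)
  have hudiff : DifferentiableOn ℂ u (ball v0 r) :=
    (differentiableOn_const u0).add hTdiff
  have hpt : ∀ v ∈ ball v0 r, Summable fun n => dfun n v := by
    intro v hv
    exact Summable.of_norm_bounded hsumgeo (fun n => hbnd n v hv)
  have htel : ∀ (N : ℕ) (v : ℂ), (∑ n ∈ Finset.range N, dfun n v) = U N v - u0 := by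
    intro N v
    have := Finset.sum_range_sub (f := fun n => U n v) N
    simpa [hdfun_def, hU0] using this
  have hUlim : ∀ v ∈ ball v0 r, Tendsto (fun N => U N v) atTop (nhds (u v)) := by
    intro v hv
    have h1 := (hpt v hv).hasSum.tendsto_sum_nat
    have h2 : Tendsto (fun N => U N v - u0) atTop (nhds (T v)) := by
      simpa [htel] using h1
    have h3 := h2.add_const u0
    have h4 : T v + u0 = u0 + T v := add_comm _ _
    simpa [hu_def, h4] using h3
  have humem : ∀ v ∈ ball v0 r, u v ∈ closedBall u0 (E/8) := by
    intro v hv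
    exact (Metric.isClosed_closedBall (x := u0) (ε := E/8)).mem_of_tendsto (hUlim v hv)
      (Filter.Eventually.of_forall fun N => (hGoodU N).2.2 v hv)
  have hu0 : u v0 = u0 := by
    have hv0 : v0 ∈ ball v0 r := mem_ball_self hr0
    have : ∀ n, dfun n v0 = 0 := by
      intro n
      rw [hdfun_def]
      simp [(hGoodU (n+1)).1, (hGoodU n).1]
    simp [hu_def, hT_def, this]
  refine ⟨u, hu0, hudiff, ?_⟩
  intro z hz
  -- identify the derivative
  have hS := hasSum_deriv_of_summable_norm hsumgeo hddiff isOpen_ball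
    (fun n w hw => hbnd n w hw) hz
  set D : ℕ → ℂ := fun n => Nat.casesOn n 0 (fun k => F (U k z) z) with hD_def
  have hU'der : ∀ n : ℕ, HasDerivAt (U n) (D n) z := by
    intro n
    cases n with
    | zero => exact hasDerivAt_const z u0
    | succ k => exact hUder k z hz
  have hdderiv : ∀ n : ℕ, deriv (dfun n) z = D (n+1) - D n := by
    intro n
    exact ((hU'der (n+1)).sub (hU'der n)).deriv
  have htend1 : Tendsto (fun N => ∑ n ∈ Finset.range N, deriv (dfun n) z) atTop
      (nhds (deriv (fun w => ∑' m : ℕ, dfun m w) z)) := hS.tendsto_sum_nat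
  have htelD : ∀ N : ℕ, (∑ n ∈ Finset.range N, deriv (dfun n) z) = D N := by
    intro N
    have := Finset.sum_range_sub (f := D) N
    simp only [hdderiv]
    rw [this]
    simp [hD_def]
  have htend2 : Tendsto D atTop (nhds (deriv (fun w => ∑' m : ℕ, dfun m w) z)) := by
    simpa [htelD] using htend1
  -- D also tends to F (u z) z
  have hFcont : ContinuousAt (fun x : ℂ => F x z) (u z) := by
    have hmem : (u z, z) ∈ O := hmemO _ (humem z hz) _ hz
    have h1 : ContinuousAt (fun p : ℂ × ℂ => F p.1 p.2) (u z, z) :=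
      (hF.differentiableAt (hO.mem_nhds hmem)).continuousAt
    have h2 : ContinuousAt (fun x : ℂ => ((x, z) : ℂ × ℂ)) (u z) :=
      (continuous_id.prodMk continuous_const).continuousAt
    exact ContinuousAt.comp (g := fun p : ℂ × ℂ => F p.1 p.2)
      (f := fun x : ℂ => ((x, z) : ℂ × ℂ)) h1 h2
  have htend3 : Tendsto (fun N => F (U N z) z) atTop (nhds (F (u z) z)) :=
    (hFcont.tendsto).comp (hUlim z hz)
  have htend4 : Tendsto D atTop (nhds (F (u z) z)) := by
    rw [← tendsto_add_atTop_iff_nat 1]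
    exact htend3
  have hDeq : deriv (fun w => ∑' m : ℕ, dfun m w) z = F (u z) z :=
    tendsto_nhds_unique htend2 htend4
  have hTat : DifferentiableAt ℂ T z := hTdiff.differentiableAt (isOpen_ball.mem_nhds hz)
  have hTder : HasDerivAt T (F (u z) z) z := by
    have := hTat.hasDerivAt
    rwa [show deriv T z = F (u z) z from hDeq] at this
  have : HasDerivAt u (F (u z) z) z := hTder.const_add u0
  exact this

lemma lipschitz_of_bounded {f : ℂ → ℂ} {u0 : ℂ} {E M : ℝ} (hE : 0 < E)
    (hf : DifferentiableOn ℂ f (ball u0 E)) (hM : ∀ x ∈ ball u0 E, ‖f x‖ ≤ M) :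
    ∀ x ∈ closedBall u0 (E/8), ∀ y ∈ closedBall u0 (E/8),
      dist (f x) (f y) ≤ ((2*M+1)/(E/2)) * dist x y := by
  intro x hx y hy
  have hxy : dist x y ≤ E/4 := by
    have h1 : dist x u0 ≤ E/8 := by simpa [mem_closedBall] using hx
    have h2 : dist y u0 ≤ E/8 := by simpa [mem_closedBall] using hy
    calc dist x y ≤ dist x u0 + dist u0 y := dist_triangle _ _ _
      _ ≤ E/8 + E/8 := by rw [dist_comm u0 y]; linarith
      _ = E/4 := by ring
  have hsub : ball y (E/2) ⊆ ball u0 E := by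
    intro z hz
    have h2 : dist y u0 ≤ E/8 := by simpa [mem_closedBall] using hy
    have h1 : dist z y < E/2 := by simpa [mem_ball] using hz
    have : dist z u0 < E := by
      calc dist z u0 ≤ dist z y + dist y u0 := dist_triangle _ _ _
        _ < E := by linarith
    simpa [mem_ball] using this
  have hyball : y ∈ ball u0 E := by
    have h2 : dist y u0 ≤ E/8 := by simpa [mem_closedBall] using hy
    simp only [mem_ball]; linarith
  have hmaps : MapsTo f (ball y (E/2)) (ball (f y) (2*M+1)) := by
    intro z hz
    have hz' := hsub hz
    have h1 : ‖f z‖ ≤ M := hM z hz'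
    have h2 : ‖f y‖ ≤ M := hM y hyball
    have : dist (f z) (f y) < 2*M+1 := by
      calc dist (f z) (f y) ≤ ‖f z‖ + ‖f y‖ := dist_le_norm_add_norm _ _
        _ < 2*M+1 := by linarith
    simpa [mem_ball] using this
  have hxball : x ∈ ball y (E/2) := by
    rw [mem_ball]
    calc dist x y ≤ E/4 := hxy
      _ < E/2 := by linarith
  exact dist_le_div_mul_dist_of_mapsTo_ball (hf.mono hsub) (hmaps.mono_right ball_subset_closedBall) hxball

/-- **The one-dimensional first order holomorphic Cauchy problem.**  If `F` is holomorphic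
on an open neighbourhood of `(u0, v0) ∈ ℂ × ℂ`, then the Cauchy problem
`u' = F (u v) v`, `u v0 = u0` admits a holomorphic solution on some open neighbourhood of
`v0`, and the germ of the solution at `v0` is unique.  (No Lipschitz hypothesis is
needed in dimension one.) -/
theorem stmt_2 (u0 v0 : ℂ) (F : ℂ → ℂ → ℂ)
    (hol : ∃ O : Set (ℂ × ℂ), IsOpen O ∧ ((u0, v0) : ℂ × ℂ) ∈ O ∧
      DifferentiableOn ℂ (fun p => F p.1 p.2) O) :
    (∃ V : Set ℂ, IsOpen V ∧ v0 ∈ V ∧ ∃ u : ℂ → ℂ,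
        u v0 = u0 ∧ ∀ v ∈ V, HasDerivAt u (F (u v) v) v) ∧
    (∀ (u1 u2 : ℂ → ℂ) (V1 V2 : Set ℂ),
        IsOpen V1 → IsOpen V2 → v0 ∈ V1 → v0 ∈ V2 →
        u1 v0 = u0 → u2 v0 = u0 →
        (∀ v ∈ V1, HasDerivAt u1 (F (u1 v) v) v) →
        (∀ v ∈ V2, HasDerivAt u2 (F (u2 v) v) v) →
        ∃ V3 : Set ℂ, IsOpen V3 ∧ v0 ∈ V3 ∧ EqOn u1 u2 V3) := by
  obtain ⟨O, hO, hmemO, hF⟩ := hol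
  -- find a product closed ball inside O
  obtain ⟨ε, hε0, hεsub⟩ := Metric.isOpen_iff.mp hO _ hmemO
  set E : ℝ := ε/2 with hE_def
  have hE0 : 0 < E := by rw [hE_def]; linarith
  have hsub : closedBall u0 E ×ˢ closedBall v0 E ⊆ O := by
    intro p hp
    apply hεsub
    rw [mem_ball, Prod.dist_eq]
    have h1 : dist p.1 u0 ≤ E := hp.1
    have h2 : dist p.2 v0 ≤ E := hp.2
    have : max (dist p.1 u0) (dist p.2 v0) ≤ E := max_le h1 h2
    calc max (dist p.1 u0) (dist p.2 v0) ≤ E := this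
      _ < ε := by rw [hE_def]; linarith
  -- bound for F
  obtain ⟨C, hC⟩ := ((isCompact_closedBall u0 E).prod (isCompact_closedBall v0 E))
    |>.exists_bound_of_continuousOn (hF.continuousOn.mono hsub)
  set M : ℝ := max C 0 with hM_def
  have hM0 : 0 ≤ M := le_max_right _ _
  have hM : ∀ x ∈ closedBall u0 E, ∀ v ∈ closedBall v0 E, ‖F x v‖ ≤ M := by
    intro x hx v hv
    exact le_trans (hC (x, v) ⟨hx, hv⟩) (le_max_left _ _)
  -- Lipschitz constant
  set L : ℝ := (2*M+1)/(E/2) with hL_def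
  have hL0 : 0 ≤ L := by
    rw [hL_def]; positivity
  have hL : ∀ v ∈ closedBall v0 E, ∀ x ∈ closedBall u0 (E/8), ∀ y ∈ closedBall u0 (E/8),
      dist (F x v) (F y v) ≤ L * dist x y := by
    intro v hv
    have hdiff : DifferentiableOn ℂ (fun x => F x v) (ball u0 E) := by
      intro x hx
      have hmem : ((x, v) : ℂ × ℂ) ∈ O := hsub ⟨ball_subset_closedBall hx, hv⟩
      have h1 : DifferentiableAt ℂ (fun p : ℂ × ℂ => F p.1 p.2) (x, v) :=
        hF.differentiableAt (hO.mem_nhds hmem)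
      have h2 : DifferentiableWithinAt ℂ (fun w : ℂ => ((w, v) : ℂ × ℂ)) (ball u0 E) x :=
        (differentiableWithinAt_id).prodMk (differentiableWithinAt_const v)
      exact DifferentiableAt.comp_differentiableWithinAt
        (f := fun w : ℂ => ((w, v) : ℂ × ℂ)) x h1 h2
    have hbound : ∀ x ∈ ball u0 E, ‖F x v‖ ≤ M :=
      fun x hx => hM x (ball_subset_closedBall hx) v hv
    exact lipschitz_of_bounded hE0 hdiff hbound
  -- choice of the radius
  set r : ℝ := min (min E (E/(16*(M+1)))) (1/(2*(L+1))) with hr_def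
  have hr0 : 0 < r := by
    rw [hr_def]
    refine lt_min (lt_min hE0 (by positivity)) (by positivity)
  have hrE : r ≤ E := le_trans (min_le_left _ _) (min_le_left _ _)
  have hrM : M * r ≤ E/16 := by
    have h1 : r ≤ E/(16*(M+1)) := le_trans (min_le_left _ _) (min_le_right _ _)
    have h2 : M * r ≤ (M+1) * (E/(16*(M+1))) := by
      apply mul_le_mul (by linarith) h1 hr0.le (by linarith)
    have h3 : (M+1) * (E/(16*(M+1))) = E/16 := by
      field_simp
    linarith
  have hrL : L * r ≤ 1/2 := by
    have h1 : r ≤ 1/(2*(L+1)) := min_le_right _ _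
    have h2 : L * r ≤ (L+1) * (1/(2*(L+1))) := by
      apply mul_le_mul (by linarith) h1 hr0.le (by linarith)
    have h3 : (L+1) * (1/(2*(L+1))) = 1/2 := by
      field_simp
    linarith
  constructor
  · -- existence
    obtain ⟨u, hu0, _, huder⟩ :=
      exists_solution_s2 hO hF hE0 hsub hM hL hM0 hL0 hr0 hrE hrM hrL
    exact ⟨ball v0 r, isOpen_ball, mem_ball_self hr0, u, hu0, huder⟩
  · -- uniqueness
    intro u1 u2 V1 V2 hV1 hV2 hv01 hv02 hu10 hu20 hder1 hder2
    -- choose δ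
    have hc1 : ContinuousAt u1 v0 := (hder1 v0 hv01).continuousAt
    have hc2 : ContinuousAt u2 v0 := (hder2 v0 hv02).continuousAt
    have hn1 : u1 ⁻¹' (ball u0 (E/8)) ∈ nhds v0 := by
      apply hc1.preimage_mem_nhds
      rw [hu10]
      exact ball_mem_nhds _ (by linarith)
    have hn2 : u2 ⁻¹' (ball u0 (E/8)) ∈ nhds v0 := by
      apply hc2.preimage_mem_nhds
      rw [hu20]
      exact ball_mem_nhds _ (by linarith)
    have hnhds : (V1 ∩ V2 ∩ (u1 ⁻¹' (ball u0 (E/8)) ∩ u2 ⁻¹' (ball u0 (E/8)))) ∈ nhds v0 :=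
      Filter.inter_mem (Filter.inter_mem (hV1.mem_nhds hv01) (hV2.mem_nhds hv02))
        (Filter.inter_mem hn1 hn2)
    obtain ⟨δ0, hδ00, hδ0sub⟩ := Metric.mem_nhds_iff.mp hnhds
    set δ : ℝ := min δ0 E with hδ_def
    have hδ0 : 0 < δ := lt_min hδ00 hE0
    have hδE : δ ≤ E := min_le_right _ _
    have hδsub : ball v0 δ ⊆ V1 ∩ V2 ∩ (u1 ⁻¹' (ball u0 (E/8)) ∩ u2 ⁻¹' (ball u0 (E/8))) :=
      (ball_subset_ball (min_le_left _ _)).trans hδ0sub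
    refine ⟨ball v0 (δ/2), isOpen_ball, mem_ball_self (by linarith), ?_⟩
    intro v hv
    set w : ℂ := v - v0 with hw_def
    have hwδ : ‖w‖ < δ/2 := by
      rw [hw_def, ← dist_eq_norm]
      exact hv
    set γ : ℝ → ℂ := fun t => v0 + t • w with hγ_def
    have hγmem : ∀ t ∈ Ioo (-1 : ℝ) (3/2 : ℝ), γ t ∈ ball v0 δ := by
      intro t ht
      rw [hγ_def, mem_ball, dist_eq_norm]
      have h1 : ‖v0 + t • w - v0‖ = |t| * ‖w‖ := by
        rw [add_sub_cancel_left, norm_smul, Real.norm_eq_abs]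
      rw [h1]
      have h2 : |t| ≤ 3/2 := by
        rw [abs_le]
        constructor <;> [linarith [ht.1]; linarith [ht.2]]
      calc |t| * ‖w‖ ≤ (3/2) * ‖w‖ := mul_le_mul_of_nonneg_right h2 (norm_nonneg _)
        _ < (3/2) * (δ/2) := by
            apply mul_lt_mul_of_pos_left hwδ (by norm_num)
        _ < δ := by linarith
    have hγder : ∀ t : ℝ, HasDerivAt γ w t := by
      intro t
      rw [hγ_def]
      have h1 : HasDerivAt (fun t : ℝ => t • w) ((1:ℝ) • w) t :=
        (hasDerivAt_id t).smul_const w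
      simpa using h1.const_add v0
    -- the two real trajectories
    have hkey : ∀ (uu : ℂ → ℂ) (VV : Set ℂ), IsOpen VV →
        (∀ x ∈ VV, HasDerivAt uu (F (uu x) x) x) → ball v0 δ ⊆ VV →
        ∀ t ∈ Ioo (-1 : ℝ) (3/2 : ℝ),
          HasDerivAt (fun s => uu (γ s)) (F (uu (γ t)) (γ t) * w) t := by
      intro uu VV hVV hder hsubV t ht
      have hmem : γ t ∈ VV := hsubV (hγmem t ht)
      have h1 := ((hder (γ t) hmem).hasFDerivAt.restrictScalars ℝ).comp_hasDerivAt t (hγder t)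
      have h2 : ((ContinuousLinearMap.toSpanSingleton ℂ (F (uu (γ t)) (γ t))).restrictScalars ℝ) w
          = F (uu (γ t)) (γ t) * w := by
        simp [mul_comm]
      rw [h2] at h1
      exact h1
    have hsubV1 : ball v0 δ ⊆ V1 := fun x hx => (hδsub hx).1.1
    have hsubV2 : ball v0 δ ⊆ V2 := fun x hx => (hδsub hx).1.2
    have hg1 := hkey u1 V1 hV1 hder1 hsubV1
    have hg2 := hkey u2 V2 hV2 hder2 hsubV2
    -- Lipschitz (truncated) vector field
    set K : NNReal := Real.toNNReal (L * E) with hK_def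
    have hKcoe : (K : ℝ) = L * E := Real.coe_toNNReal _ (mul_nonneg hL0 hE0.le)
    set vf : ℝ → ℂ → ℂ :=
      fun t x => if t ∈ Ioo (-1 : ℝ) (3/2 : ℝ) then F x (γ t) * w else 0 with hvf_def
    have hKlip : ∀ t : ℝ, LipschitzOnWith K (vf t) (closedBall u0 (E/8)) := by
      intro t
      apply LipschitzOnWith.of_dist_le_mul
      intro x hx y hy
      by_cases ht : t ∈ Ioo (-1 : ℝ) (3/2 : ℝ)
      · simp only [hvf_def, if_pos ht]
        have hγE : γ t ∈ closedBall v0 E :=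
          closedBall_subset_closedBall hδE (ball_subset_closedBall (hγmem t ht))
        have h1 := hL (γ t) hγE x hx y hy
        have h2 : dist (F x (γ t) * w) (F y (γ t) * w)
            = dist (F x (γ t)) (F y (γ t)) * ‖w‖ := by
          rw [dist_eq_norm, dist_eq_norm, ← sub_mul, norm_mul]
        rw [h2, hKcoe]
        have hwE : ‖w‖ ≤ E := by linarith
        calc dist (F x (γ t)) (F y (γ t)) * ‖w‖ ≤ (L * dist x y) * E := by
              apply mul_le_mul h1 hwE (norm_nonneg _)
              positivity
          _ = L * E * dist x y := by ring
      · simp only [hvf_def, if_neg ht]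
        rw [dist_self]
        positivity
    have hmem1 : ∀ t ∈ Ioo (-1 : ℝ) (3/2 : ℝ), u1 (γ t) ∈ closedBall u0 (E/8) :=
      fun t ht => ball_subset_closedBall (hδsub (hγmem t ht)).2.1
    have hmem2 : ∀ t ∈ Ioo (-1 : ℝ) (3/2 : ℝ), u2 (γ t) ∈ closedBall u0 (E/8) :=
      fun t ht => ball_subset_closedBall (hδsub (hγmem t ht)).2.2
    have happ := ODE_solution_unique_of_mem_Ioo (v := vf)
      (s := fun _ => closedBall u0 (E/8)) (K := K)
      (f := fun s => u1 (γ s)) (g := fun s => u2 (γ s))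
      (t₀ := 0) (a := -1) (b := 3/2) (fun t _ => hKlip t) (by norm_num)
      (fun t ht => by
        refine ⟨?_, hmem1 t ht⟩
        simp only [hvf_def, if_pos ht]
        exact hg1 t ht)
      (fun t ht => by
        refine ⟨?_, hmem2 t ht⟩
        simp only [hvf_def, if_pos ht]
        exact hg2 t ht)
      (by
        have hγ0 : γ (0 : ℝ) = v0 := by simp [hγ_def]
        simp only [hγ0, hu10, hu20])
    have h1 := happ (by norm_num : (1:ℝ) ∈ Ioo (-1 : ℝ) (3/2 : ℝ))
    have hγ1 : γ (1 : ℝ) = v := by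
      simp [hγ_def, hw_def]
    simpa [hγ1] using h1
end

section
/- Let 𝒱 ⊆ ℂ be open and let U : 𝒱 → ℂ^N be holomorphic with U′(z) = G(U(z), z) for all z ∈ 𝒱, where G is a ℂ^N-valued holomorphic map on an open neighbourhood of {(U(z), z) : z ∈ 𝒱} in ℂ^N × ℂ, uniformly Lipschitz-like at every point of its domain. Let z0 be a boundary point of 𝒱 and suppose there exist an injective real-analytic regular curve γ : [0,1] → 𝒱 ∪ {z0} with γ(1) = z0 and γ(t) ∈ 𝒱 for t < 1, a strictly increasing sequence t_h → 1 in [0,1), and a point U0 ∈ ℂ^N such that U(γ(t_h)) → U0 and G is holomorphic at (U0, z0). Then U admits analytic continuation up to z0: there exist r > 0 and a holomorphic map W : D(z0,r) → ℂ^N with W(z0) = U0, W′(z) = G(W(z), z) on D(z0,r), and W(γ(t)) = U(γ(t)) for all t < 1 sufficiently close to 1. -/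
open Set

open scoped Classical

open Metric MeasureTheory intervalIntegral Filter

variable {E : Type*} [NormedAddCommGroup E] [NormedSpace ℂ E] [CompleteSpace E]

lemma lip_of_bdd {E E' : Type*} [NormedAddCommGroup E] [NormedSpace ℂ E]
    [NormedAddCommGroup E'] [NormedSpace ℂ E'] [CompleteSpace E']
    {g : E → E'} {U0 : E} {ρ M : ℝ} (hρ : 0 < ρ)
    (hd : DifferentiableOn ℂ g (ball U0 ρ))
    (hM : ∀ w ∈ ball U0 ρ, ‖g w‖ ≤ M) :
    ∀ w ∈ closedBall U0 (ρ/8), ∀ w' ∈ closedBall U0 (ρ/8),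
      ‖g w - g w'‖ ≤ (8*M/ρ) * ‖w - w'‖ := by
  have hM0 : 0 ≤ M := le_trans (norm_nonneg _) (hM U0 (mem_ball_self hρ))
  intro w hw w' hw'
  rcases eq_or_ne w w' with rfl | hne
  · simp
  set d : ℝ := ‖w - w'‖ with hdd
  have hd0 : 0 < d := norm_sub_pos_iff.mpr hne
  have hwU : ‖w - U0‖ ≤ ρ/8 := by simpa [mem_closedBall, dist_eq_norm] using hw
  have hw'U : ‖w' - U0‖ ≤ ρ/8 := by simpa [mem_closedBall, dist_eq_norm] using hw'
  have hd4 : d ≤ ρ/4 := by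
    calc d = ‖(w - U0) - (w' - U0)‖ := by rw [hdd]; congr 1; abel
      _ ≤ ‖w - U0‖ + ‖w' - U0‖ := norm_sub_le _ _
      _ ≤ ρ/4 := by linarith
  set R : ℝ := ρ/(2*d) with hRdef
  have hR2 : 2 ≤ R := by
    rw [hRdef, le_div_iff₀ (by positivity)]
    linarith
  set lm : ℂ → E := fun l => w' + l • (w - w') with hlm
  have hmap : ∀ l : ℂ, ‖l‖ < R → lm l ∈ ball U0 ρ := by
    intro l hl
    rw [hlm]
    simp only [mem_ball, dist_eq_norm]
    calc ‖w' + l • (w - w') - U0‖ = ‖(w' - U0) + l • (w - w')‖ := by congr 1; abel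
      _ ≤ ‖w' - U0‖ + ‖l • (w - w')‖ := norm_add_le _ _
      _ ≤ ρ/8 + ‖l‖ * d := by rw [norm_smul]; gcongr
      _ < ρ/8 + R * d := by
          have : ‖l‖ * d < R * d := by exact mul_lt_mul_of_pos_right hl hd0
          linarith
      _ ≤ ρ := by
          rw [hRdef]
          rw [div_mul_eq_mul_div, mul_comm (2:ℝ) d, ← div_div, mul_div_assoc]
          rw [div_self (ne_of_gt hd0)]
          linarith
  set φ : ℂ → E' := fun l => g (lm l) with hφ
  have hφd : DifferentiableOn ℂ φ (ball (0:ℂ) R) := by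
    intro l hl
    have hl' : ‖l‖ < R := by simpa [mem_ball, dist_eq_norm] using hl
    have h1 : DifferentiableAt ℂ g (lm l) :=
      hd.differentiableAt (isOpen_ball.mem_nhds (hmap l hl'))
    have h2 : DifferentiableAt ℂ lm l := by
      rw [hlm]
      exact ((differentiableAt_id).smul_const (w - w')).const_add w'
    exact (h1.comp l h2).differentiableWithinAt
  have hφM : ∀ l ∈ ball (0:ℂ) R, ‖φ l‖ ≤ M := by
    intro l hl
    have hl' : ‖l‖ < R := by simpa [mem_ball, dist_eq_norm] using hl
    exact hM _ (hmap l hl')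
  set R' : ℝ := ρ/(8*d) with hR'def
  have hR'0 : 0 < R' := by positivity
  have hR'1 : R' + 1 < R := by
    rw [hR'def, hRdef]
    rw [div_add' _ _ _ (by positivity), div_lt_div_iff₀ (by positivity) (by positivity)]
    nlinarith
  have hderiv : ∀ t : ℝ, t ∈ Icc (0:ℝ) 1 → ‖deriv φ ((t:ℝ) : ℂ)‖ ≤ M / R' := by
    intro t ht
    have hsub : closedBall ((t:ℝ) : ℂ) R' ⊆ ball (0:ℂ) R := by
      intro μ hμ
      rw [mem_closedBall, dist_eq_norm] at hμ
      rw [mem_ball, dist_eq_norm, sub_zero]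
      calc ‖μ‖ = ‖(μ - (t:ℂ)) + (t:ℂ)‖ := by congr 1; abel
        _ ≤ ‖μ - (t:ℂ)‖ + ‖(t:ℂ)‖ := norm_add_le _ _
        _ ≤ R' + 1 := by
            apply add_le_add hμ
            rw [Complex.norm_real, Real.norm_eq_abs, abs_le]
            exact ⟨by linarith [ht.1], ht.2⟩
        _ < R := hR'1
    rw [← Complex.cderiv_eq_deriv isOpen_ball hφd hR'0 hsub]
    apply Complex.norm_cderiv_le hR'0
    intro x hx
    exact hφM x (hsub (sphere_subset_closedBall hx))
  set ψ : ℝ → E' := fun t => φ ((t:ℝ) : ℂ) with hψ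
  have hψd : ∀ t ∈ Icc (0:ℝ) 1, HasDerivWithinAt ψ (deriv φ ((t:ℝ) : ℂ)) (Icc 0 1) t := by
    intro t ht
    have htR : ((t:ℝ) : ℂ) ∈ ball (0:ℂ) R := by
      rw [mem_ball, dist_eq_norm, sub_zero, Complex.norm_real, Real.norm_eq_abs]
      have : |t| ≤ 1 := by rw [abs_le]; exact ⟨by linarith [ht.1], ht.2⟩
      linarith
    have h1 : HasDerivAt φ (deriv φ ((t:ℝ) : ℂ)) ((t:ℝ) : ℂ) :=
      (hφd.differentiableAt (isOpen_ball.mem_nhds htR)).hasDerivAt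
    have h2 : HasDerivAt (fun s : ℝ => ((s:ℝ) : ℂ)) 1 t := Complex.ofRealCLM.hasDerivAt
    have := h1.scomp t h2
    rw [one_smul] at this
    exact this.hasDerivWithinAt
  have hkey : ‖ψ 1 - ψ 0‖ ≤ M / R' :=
    norm_image_sub_le_of_norm_deriv_le_segment_01' hψd
      (fun t ht => hderiv t (Ico_subset_Icc_self ht))
  have hψ1 : ψ 1 = g w := by
    rw [hψ, hφ, hlm]
    norm_num
  have hψ0 : ψ 0 = g w' := by
    rw [hψ, hφ, hlm]
    norm_num
  rw [hψ1, hψ0] at hkey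
  refine hkey.trans (le_of_eq ?_)
  rw [hR'def]
  field_simp

lemma segment_primitive {g : ℂ → E} {z0 : ℂ} {R : ℝ}
    (hg : DifferentiableOn ℂ g (ball z0 R)) {x₀ : ℂ} (hx : x₀ ∈ ball z0 R) :
    HasDerivAt (fun x => ∫ t in (0:ℝ)..1, (x - z0) • g (z0 + (t : ℂ) * (x - z0)))
      (g x₀) x₀ := by
  have hR : 0 < R := pos_of_mem_ball hx
  set ρ : ℝ := ‖x₀ - z0‖ with hρ
  have hρR : ρ < R := by simpa [mem_ball, dist_eq_norm] using hx
  set ε : ℝ := (R - ρ) / 2 with hε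
  have hε0 : 0 < ε := by rw [hε]; linarith
  have hR' : ρ + ε < R := by rw [hε]; linarith
  -- membership of segment points
  have hmem : ∀ x ∈ ball x₀ ε, ∀ t : ℝ, t ∈ Icc (0:ℝ) 1 →
      z0 + (t : ℂ) * (x - z0) ∈ closedBall z0 (ρ + ε) := by
    intro x hxx t ht
    have hxz : ‖x - z0‖ ≤ ρ + ε := by
      have : ‖x - x₀‖ < ε := by simpa [mem_ball, dist_eq_norm] using hxx
      calc ‖x - z0‖ = ‖(x - x₀) + (x₀ - z0)‖ := by ring_nf
        _ ≤ ‖x - x₀‖ + ‖x₀ - z0‖ := norm_add_le _ _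
        _ ≤ ρ + ε := by rw [hρ]; linarith
    have : ‖(t : ℂ) * (x - z0)‖ ≤ ρ + ε := by
      rw [norm_mul, Complex.norm_real]
      calc ‖t‖ * ‖x - z0‖ ≤ 1 * (ρ + ε) := by
            apply mul_le_mul _ hxz (norm_nonneg _) zero_le_one
            rw [Real.norm_eq_abs, abs_le]; exact ⟨by linarith [ht.1], ht.2⟩
        _ = ρ + ε := one_mul _
    simpa [mem_closedBall, dist_eq_norm, add_sub_cancel_left] using this
  have hsub : closedBall z0 (ρ + ε) ⊆ ball z0 R := closedBall_subset_ball hR'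
  have hgan : AnalyticOnNhd ℂ g (ball z0 R) := hg.analyticOnNhd isOpen_ball
  have hg' : ContinuousOn (deriv g) (ball z0 R) := (hgan.deriv).continuousOn
  have hgc : ContinuousOn g (ball z0 R) := hg.continuousOn
  -- bounds on the compact set
  obtain ⟨M1, hM1⟩ := (isCompact_closedBall z0 (ρ + ε)).exists_bound_of_continuousOn
    (hgc.mono hsub)
  obtain ⟨M2, hM2⟩ := (isCompact_closedBall z0 (ρ + ε)).exists_bound_of_continuousOn
    (hg'.mono hsub)
  set F' : ℝ → E := fun t => g (z0 + (t : ℂ) * (x₀ - z0)) +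
      ((t : ℂ) * (x₀ - z0)) • deriv g (z0 + (t : ℂ) * (x₀ - z0)) with hF'
  have key : IntervalIntegrable F' volume 0 1 ∧
      HasDerivAt (fun x => ∫ t in (0:ℝ)..1, (x - z0) • g (z0 + (t : ℂ) * (x - z0)))
        (∫ t in (0:ℝ)..1, F' t) x₀ := by
    apply intervalIntegral.hasDerivAt_integral_of_dominated_loc_of_deriv_le
      (F' := fun x t => g (z0 + (t : ℂ) * (x - z0)) +
        ((t : ℂ) * (x - z0)) • deriv g (z0 + (t : ℂ) * (x - z0)))
      (bound := fun _ => M1 + (ρ + ε) * M2) (ball_mem_nhds x₀ hε0)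
    · -- measurability of F x
      filter_upwards [ball_mem_nhds x₀ hε0] with x hxx
      apply ContinuousOn.aestronglyMeasurable _ measurableSet_uIoc
      apply ContinuousOn.smul continuousOn_const
      apply hgc.comp
      · fun_prop
      · intro t ht
        have : t ∈ Icc (0:ℝ) 1 := by
          simpa using Set.uIoc_of_le (by norm_num : (0:ℝ) ≤ 1) ▸ ht |> Set.Ioc_subset_Icc_self
        exact hsub (hmem x hxx t this)
    · -- integrability of F x₀
      apply ContinuousOn.intervalIntegrable
      apply ContinuousOn.smul continuousOn_const
      apply hgc.comp
      · fun_prop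
      · intro t ht
        have : t ∈ Icc (0:ℝ) 1 := by simpa [Set.uIcc_of_le] using ht
        exact hsub (hmem x₀ (mem_ball_self hε0) t this)
    · -- measurability of F' x₀
      apply ContinuousOn.aestronglyMeasurable _ measurableSet_uIoc
      have hmem' : ∀ t ∈ Set.uIoc (0:ℝ) 1, z0 + (t : ℂ) * (x₀ - z0) ∈ ball z0 R := by
        intro t ht
        have : t ∈ Icc (0:ℝ) 1 := by
          rw [Set.uIoc_of_le (by norm_num : (0:ℝ) ≤ 1)] at ht
          exact Set.Ioc_subset_Icc_self ht
        exact hsub (hmem x₀ (mem_ball_self hε0) t this)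
      apply ContinuousOn.add
      · exact hgc.comp (by fun_prop) hmem'
      · exact ContinuousOn.smul (by fun_prop) (hg'.comp (by fun_prop) hmem')
    · -- bound
      filter_upwards [] with t
      intro ht x hxx
      have ht' : t ∈ Icc (0:ℝ) 1 := by
        rw [Set.uIoc_of_le (by norm_num : (0:ℝ) ≤ 1)] at ht
        exact Set.Ioc_subset_Icc_self ht
      have hc := hmem x hxx t ht'
      have h1 : ‖g (z0 + (t : ℂ) * (x - z0))‖ ≤ M1 := hM1 _ hc
      have h2 : ‖deriv g (z0 + (t : ℂ) * (x - z0))‖ ≤ M2 := hM2 _ hc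
      calc ‖_‖ ≤ ‖g (z0 + (t : ℂ) * (x - z0))‖ +
            ‖((t : ℂ) * (x - z0)) • deriv g (z0 + (t : ℂ) * (x - z0))‖ := norm_add_le _ _
        _ ≤ M1 + (ρ + ε) * M2 := by
            gcongr
            rw [norm_smul, norm_mul, Complex.norm_real]
            have hxz : ‖x - z0‖ ≤ ρ + ε := by
              have : ‖x - x₀‖ < ε := by simpa [mem_ball, dist_eq_norm] using hxx
              calc ‖x - z0‖ = ‖(x - x₀) + (x₀ - z0)‖ := by ring_nf
                _ ≤ ‖x - x₀‖ + ‖x₀ - z0‖ := norm_add_le _ _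
                _ ≤ ρ + ε := by rw [hρ]; linarith
            have h2' : (0:ℝ) ≤ M2 := le_trans (norm_nonneg _) h2
            calc ‖t‖ * ‖x - z0‖ * ‖deriv g (z0 + (t : ℂ) * (x - z0))‖
                ≤ 1 * (ρ + ε) * M2 := by
                  apply mul_le_mul _ h2 (norm_nonneg _) (by positivity)
                  apply mul_le_mul _ hxz (norm_nonneg _) zero_le_one
                  rw [Real.norm_eq_abs, abs_le]; exact ⟨by linarith [ht'.1], ht'.2⟩
              _ = (ρ + ε) * M2 := by ring
    · exact intervalIntegrable_const
    · -- differentiability in x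
      filter_upwards [] with t
      intro ht x hxx
      have ht' : t ∈ Icc (0:ℝ) 1 := by
        rw [Set.uIoc_of_le (by norm_num : (0:ℝ) ≤ 1)] at ht
        exact Set.Ioc_subset_Icc_self ht
      have hc := hsub (hmem x hxx t ht')
      have hgd : HasDerivAt g (deriv g (z0 + (t : ℂ) * (x - z0))) (z0 + (t : ℂ) * (x - z0)) :=
        (hg.differentiableAt (isOpen_ball.mem_nhds hc)).hasDerivAt
      have hl : HasDerivAt (fun y : ℂ => z0 + (t : ℂ) * (y - z0)) (t : ℂ) x := by
        simpa using (((hasDerivAt_id x).sub_const z0).const_mul (t : ℂ)).const_add z0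
      have hcomp : HasDerivAt (fun y : ℂ => g (z0 + (t : ℂ) * (y - z0)))
          ((t : ℂ) • deriv g (z0 + (t : ℂ) * (x - z0))) x := hgd.scomp x hl
      have hid : HasDerivAt (fun y : ℂ => y - z0) 1 x := (hasDerivAt_id x).sub_const z0
      have := hid.smul hcomp
      convert this using 1
      · rfl
      rw [one_smul, smul_smul]
      ring_nf
      abel
  -- compute the integral of F' via FTC
  have hFTC : (∫ t in (0:ℝ)..1, F' t) = g x₀ := by
    have hφ : ∀ t ∈ Set.uIcc (0:ℝ) 1,
        HasDerivAt (fun s : ℝ => (s : ℂ) • g (z0 + (s : ℂ) * (x₀ - z0))) (F' t) t := by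
      intro t ht
      have ht' : t ∈ Icc (0:ℝ) 1 := by simpa [Set.uIcc_of_le] using ht
      have hc := hsub (hmem x₀ (mem_ball_self hε0) t ht')
      have hgd : HasDerivAt g (deriv g (z0 + (t : ℂ) * (x₀ - z0))) (z0 + (t : ℂ) * (x₀ - z0)) :=
        (hg.differentiableAt (isOpen_ball.mem_nhds hc)).hasDerivAt
      have hl : HasDerivAt (fun s : ℝ => z0 + (s : ℂ) * (x₀ - z0)) (x₀ - z0) t := by
        have h0 : HasDerivAt (fun s : ℝ => (s : ℂ)) 1 t := Complex.ofRealCLM.hasDerivAt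
        simpa using (h0.mul_const (x₀ - z0)).const_add z0
      have hcomp : HasDerivAt (fun s : ℝ => g (z0 + (s : ℂ) * (x₀ - z0)))
          ((x₀ - z0) • deriv g (z0 + (t : ℂ) * (x₀ - z0))) t := hgd.scomp t hl
      have hor : HasDerivAt (fun s : ℝ => (s : ℂ)) 1 t := Complex.ofRealCLM.hasDerivAt
      have := hor.smul hcomp
      convert this using 1
      · rfl
      rw [hF', one_smul, smul_smul]
      ring_nf
      abel
    have := intervalIntegral.integral_eq_sub_of_hasDerivAt hφ key.1
    rw [this]
    norm_num
  exact hFTC ▸ key.2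

lemma picard_exists {F : ℂ → E → E} {O : Set (ℂ × E)} (hO : IsOpen O)
    (hF : DifferentiableOn ℂ (fun p => F p.1 p.2) O)
    {z1 : ℂ} {U1 : E} {ρ M L r : ℝ} (hr : 0 < r) (hrρ : r ≤ ρ)
    (hsub : closedBall z1 ρ ×ˢ closedBall U1 ρ ⊆ O)
    (hM : ∀ z ∈ closedBall z1 ρ, ∀ w ∈ closedBall U1 ρ, ‖F z w‖ ≤ M)
    (hL : ∀ z ∈ closedBall z1 ρ, ∀ w ∈ closedBall U1 ρ, ∀ w' ∈ closedBall U1 ρ,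
      ‖F z w - F z w'‖ ≤ L * ‖w - w'‖)
    (hrM : r * M ≤ ρ) (hrL : r * L ≤ 2⁻¹) (hL0 : 0 ≤ L) :
    ∃ W : ℂ → E, W z1 = U1 ∧ (∀ x ∈ ball z1 r, ‖W x - U1‖ ≤ ρ) ∧
      ∀ x ∈ ball z1 r, HasDerivAt W (F x (W x)) x := by
  have hρ0 : 0 < ρ := lt_of_lt_of_le hr hrρ
  set B : Set ℂ := ball z1 r with hB
  have hz1B : z1 ∈ B := mem_ball_self hr
  have hBsub : B ⊆ closedBall z1 ρ := (ball_subset_closedBall).trans (closedBall_subset_closedBall hrρ)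
  have hxr : ∀ x ∈ B, ‖x - z1‖ ≤ r := fun x hx =>
    le_of_lt (by simpa [hB, mem_ball, dist_eq_norm] using hx)
  have hseg : ∀ x ∈ B, ∀ t : ℝ, t ∈ Icc (0:ℝ) 1 → z1 + (t : ℂ) * (x - z1) ∈ B := by
    intro x hx t ht
    have : ‖(t : ℂ) * (x - z1)‖ < r := by
      rw [norm_mul, Complex.norm_real]
      calc ‖t‖ * ‖x - z1‖ ≤ 1 * ‖x - z1‖ := by
            apply mul_le_mul_of_nonneg_right _ (norm_nonneg _)
            rw [Real.norm_eq_abs, abs_le]; exact ⟨by linarith [ht.1], ht.2⟩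
        _ = ‖x - z1‖ := one_mul _
        _ < r := by simpa [hB, mem_ball, dist_eq_norm] using hx
    rw [hB, mem_ball, dist_eq_norm, add_sub_cancel_left]
    exact this
  have hM0 : 0 ≤ M := le_trans (norm_nonneg _)
    (hM z1 (mem_closedBall_self hρ0.le) U1 (mem_closedBall_self hρ0.le))
  set P : (ℂ → E) → ℂ → E := fun V x => U1 +
    ∫ t in (0:ℝ)..1, (x - z1) • F (z1 + (t : ℂ) * (x - z1)) (V (z1 + (t : ℂ) * (x - z1)))
    with hP
  -- the predicate of admissible functions
  set Sol : (ℂ → E) → Prop := fun V => DifferentiableOn ℂ V B ∧ ∀ x ∈ B, ‖V x - U1‖ ≤ ρ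
    with hSol
  have hmemO : ∀ V, Sol V → ∀ x ∈ B, (x, V x) ∈ O := by
    intro V hV x hx
    exact hsub ⟨hBsub hx, by simpa [mem_closedBall, dist_eq_norm] using hV.2 x hx⟩
  have hgdiff : ∀ V, Sol V → DifferentiableOn ℂ (fun x => F x (V x)) B := by
    intro V hV x hx
    have h1 : DifferentiableAt ℂ (fun p : ℂ × E => F p.1 p.2) (x, V x) :=
      hF.differentiableAt (hO.mem_nhds (hmemO V hV x hx))
    have h2 : DifferentiableAt ℂ (fun y : ℂ => ((y, V y) : ℂ × E)) x :=
      differentiableAt_id.prodMk ((hV.1 x hx).differentiableAt (isOpen_ball.mem_nhds hx))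
    exact (h1.comp x h2).differentiableWithinAt
  have step : ∀ V, Sol V → (∀ x ∈ B, HasDerivAt (P V) (F x (V x)) x) ∧ Sol (P V) := by
    intro V hV
    have hder : ∀ x ∈ B, HasDerivAt (P V) (F x (V x)) x := by
      intro x hx
      have := (segment_primitive (g := fun y => F y (V y)) (hgdiff V hV) hx).const_add U1
      exact this
    have hbnd : ∀ x ∈ B, ‖P V x - U1‖ ≤ ρ := by
      intro x hx
      have : ‖∫ t in (0:ℝ)..1,
          (x - z1) • F (z1 + (t : ℂ) * (x - z1)) (V (z1 + (t : ℂ) * (x - z1)))‖ ≤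
          r * M * |1 - 0| := by
        apply intervalIntegral.norm_integral_le_of_norm_le_const
        intro t ht
        have ht' : t ∈ Icc (0:ℝ) 1 := by
          rw [Set.uIoc_of_le (by norm_num : (0:ℝ) ≤ 1)] at ht
          exact Set.Ioc_subset_Icc_self ht
        have hc := hseg x hx t ht'
        rw [norm_smul]
        apply mul_le_mul (hxr x hx) _ (norm_nonneg _) hr.le
        exact hM _ (hBsub hc) _ (by simpa [mem_closedBall, dist_eq_norm] using hV.2 _ hc)
      rw [hP]; simpa using this.trans (by simpa using hrM)
    exact ⟨hder, fun x hx => ((hder x hx).differentiableAt).differentiableWithinAt, hbnd⟩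
  have hcont : ∀ V, Sol V → ∀ x ∈ B, ContinuousOn
      (fun t : ℝ => (x - z1) • F (z1 + (t : ℂ) * (x - z1)) (V (z1 + (t : ℂ) * (x - z1))))
      (Icc (0:ℝ) 1) := by
    intro V hV x hx
    apply ContinuousOn.smul continuousOn_const
    have hFcont : ContinuousOn (fun p : ℂ × E => F p.1 p.2) O := hF.continuousOn
    have hVcont : ContinuousOn V B := hV.1.continuousOn
    have hmap : ContinuousOn (fun t : ℝ => z1 + (t : ℂ) * (x - z1)) (Icc (0:ℝ) 1) := by
      fun_prop
    apply hFcont.comp (f := fun t : ℝ =>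
      ((z1 + (t : ℂ) * (x - z1), V (z1 + (t : ℂ) * (x - z1))) : ℂ × E))
    · exact hmap.prodMk (hVcont.comp hmap (fun t ht => hseg x hx t ht))
    · intro t ht
      exact hmemO V hV _ (hseg x hx t ht)
  have hcontr : ∀ V V' : ℂ → E, ∀ d : ℝ, Sol V → Sol V' → (∀ y ∈ B, ‖V y - V' y‖ ≤ d) →
      ∀ x ∈ B, ‖P V x - P V' x‖ ≤ r * L * d := by
    intro V V' d hV hV' hd x hx
    have hd0 : 0 ≤ d := le_trans (norm_nonneg _) (hd x hx)
    have hi1 : IntervalIntegrable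
        (fun t : ℝ => (x - z1) • F (z1 + (t : ℂ) * (x - z1)) (V (z1 + (t : ℂ) * (x - z1))))
        volume 0 1 := by
      apply ContinuousOn.intervalIntegrable
      rw [Set.uIcc_of_le (by norm_num : (0:ℝ) ≤ 1)]
      exact hcont V hV x hx
    have hi2 : IntervalIntegrable
        (fun t : ℝ => (x - z1) • F (z1 + (t : ℂ) * (x - z1)) (V' (z1 + (t : ℂ) * (x - z1))))
        volume 0 1 := by
      apply ContinuousOn.intervalIntegrable
      rw [Set.uIcc_of_le (by norm_num : (0:ℝ) ≤ 1)]
      exact hcont V' hV' x hx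
    have heq : P V x - P V' x = ∫ t in (0:ℝ)..1,
        ((x - z1) • F (z1 + (t : ℂ) * (x - z1)) (V (z1 + (t : ℂ) * (x - z1))) -
         (x - z1) • F (z1 + (t : ℂ) * (x - z1)) (V' (z1 + (t : ℂ) * (x - z1)))) := by
      rw [intervalIntegral.integral_sub hi1 hi2, hP]
      simp
    rw [heq]
    have hnorm : ‖∫ t in (0:ℝ)..1,
        ((x - z1) • F (z1 + (t : ℂ) * (x - z1)) (V (z1 + (t : ℂ) * (x - z1))) -
         (x - z1) • F (z1 + (t : ℂ) * (x - z1)) (V' (z1 + (t : ℂ) * (x - z1))))‖ ≤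
        r * (L * d) * |1 - 0| := by
      apply intervalIntegral.norm_integral_le_of_norm_le_const
      intro t ht
      have ht' : t ∈ Icc (0:ℝ) 1 := by
        rw [Set.uIoc_of_le (by norm_num : (0:ℝ) ≤ 1)] at ht
        exact Set.Ioc_subset_Icc_self ht
      have hc := hseg x hx t ht'
      rw [← smul_sub, norm_smul]
      apply mul_le_mul (hxr x hx) _ (norm_nonneg _) hr.le
      calc ‖F (z1 + (t : ℂ) * (x - z1)) (V (z1 + (t : ℂ) * (x - z1))) -
            F (z1 + (t : ℂ) * (x - z1)) (V' (z1 + (t : ℂ) * (x - z1)))‖ ≤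
          L * ‖V (z1 + (t : ℂ) * (x - z1)) - V' (z1 + (t : ℂ) * (x - z1))‖ := by
            apply hL _ (hBsub hc) _ _ _ _
            · simpa [mem_closedBall, dist_eq_norm] using hV.2 _ hc
            · simpa [mem_closedBall, dist_eq_norm] using hV'.2 _ hc
        _ ≤ L * d := mul_le_mul_of_nonneg_left (hd _ hc) hL0
    refine hnorm.trans (le_of_eq ?_)
    rw [abs_of_nonneg (by norm_num : (0:ℝ) ≤ 1 - 0)]
    ring
  -- the iterates
  set Wn : ℕ → ℂ → E := fun n => P^[n] (fun _ => U1) with hWn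
  have hW0 : Wn 0 = fun _ => U1 := rfl
  have hWs : ∀ n, Wn (n + 1) = P (Wn n) := by
    intro n; rw [hWn]; simp [Function.iterate_succ_apply']
  have hSoln : ∀ n, Sol (Wn n) := by
    intro n
    induction n with
    | zero => exact ⟨differentiableOn_const _, fun x _ => by simp [hW0, hρ0.le]⟩
    | succ n ih => rw [hWs]; exact (step _ ih).2
  have hz1n : ∀ n, Wn n z1 = U1 := by
    intro n
    induction n with
    | zero => rfl
    | succ n ih => rw [hWs, hP]; simp
  have hgap : ∀ n, ∀ x ∈ B, ‖Wn (n + 1) x - Wn n x‖ ≤ (2⁻¹ : ℝ) ^ n * ρ := by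
    intro n
    induction n with
    | zero =>
      intro x hx
      have h := (step _ (hSoln 0)).2.2 x hx
      rw [← hWs 0] at h
      simpa [hW0] using h
    | succ n ih =>
      intro x hx
      have h := hcontr (Wn (n+1)) (Wn n) ((2⁻¹ : ℝ) ^ n * ρ) (hSoln (n+1)) (hSoln n) ih x hx
      rw [← hWs (n+1), ← hWs n] at h
      refine h.trans ?_
      calc r * L * ((2⁻¹ : ℝ) ^ n * ρ) ≤ 2⁻¹ * ((2⁻¹ : ℝ) ^ n * ρ) :=
            mul_le_mul_of_nonneg_right hrL (by positivity)
        _ = (2⁻¹ : ℝ) ^ (n + 1) * ρ := by ring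
  have hc2 : ∀ n k, ∀ x ∈ B, ‖Wn (n + k) x - Wn n x‖ ≤
      2 * ρ * ((2⁻¹ : ℝ) ^ n - (2⁻¹ : ℝ) ^ (n + k)) := by
    intro n k
    induction k with
    | zero => intro x _; simp
    | succ k ih =>
      intro x hx
      have h1 := hgap (n + k) x hx
      have h2 := ih x hx
      calc ‖Wn (n + (k+1)) x - Wn n x‖ =
          ‖(Wn (n + k + 1) x - Wn (n + k) x) + (Wn (n + k) x - Wn n x)‖ := by
            congr 1; rw [show n + (k+1) = n + k + 1 from rfl]; abel
        _ ≤ ‖Wn (n + k + 1) x - Wn (n + k) x‖ + ‖Wn (n + k) x - Wn n x‖ := norm_add_le _ _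
        _ ≤ (2⁻¹ : ℝ) ^ (n + k) * ρ + 2 * ρ * ((2⁻¹ : ℝ) ^ n - (2⁻¹ : ℝ) ^ (n + k)) := by
            gcongr
        _ = 2 * ρ * ((2⁻¹ : ℝ) ^ n - (2⁻¹ : ℝ) ^ (n + (k+1))) := by
            rw [show n + (k+1) = (n + k) + 1 from rfl, pow_succ]
            ring
  have hc3 : ∀ n k, ∀ x ∈ B, ‖Wn (n + k) x - Wn n x‖ ≤ 2 * ρ * (2⁻¹ : ℝ) ^ n := by
    intro n k x hx
    refine (hc2 n k x hx).trans ?_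
    have : (0:ℝ) ≤ (2⁻¹ : ℝ) ^ (n + k) := by positivity
    nlinarith [hρ0.le]
  have hcauchy : ∀ x ∈ B, CauchySeq (fun n => Wn n x) := by
    intro x hx
    apply cauchySeq_of_le_geometric (r := 2⁻¹) (C := ρ) (by norm_num)
    intro n
    rw [dist_eq_norm, ← norm_neg]
    simpa [neg_sub, mul_comm] using hgap n x hx
  set W : ℂ → E := fun x => limUnder atTop (fun n => Wn n x) with hW
  have htendW : ∀ x ∈ B, Tendsto (fun n => Wn n x) atTop (nhds (W x)) := by
    intro x hx
    exact (hcauchy x hx).tendsto_limUnder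
  have hWd : ∀ n, ∀ x ∈ B, ‖W x - Wn n x‖ ≤ 2 * ρ * (2⁻¹ : ℝ) ^ n := by
    intro n x hx
    have h1 : Tendsto (fun k => Wn (n + k) x) atTop (nhds (W x)) := by
      have := (htendW x hx).comp (tendsto_add_atTop_nat n)
      simpa [Function.comp_def, Nat.add_comm] using this
    have h1' : Tendsto (fun k => ‖Wn (n + k) x - Wn n x‖) atTop
        (nhds ‖W x - Wn n x‖) :=
      (h1.sub (tendsto_const_nhds : Tendsto (fun _ : ℕ => Wn n x) atTop (nhds (Wn n x)))).norm
    exact le_of_tendsto h1' (Filter.Eventually.of_forall (fun k => hc3 n k x hx))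
  have hunif : TendstoUniformlyOn Wn W atTop B := by
    rw [Metric.tendstoUniformlyOn_iff]
    intro ε hε
    have hp : Tendsto (fun n : ℕ => (2⁻¹ : ℝ) ^ n) atTop (nhds 0) :=
      tendsto_pow_atTop_nhds_zero_of_lt_one (by norm_num) (by norm_num)
    have h0 : Tendsto (fun n : ℕ => 2 * ρ * (2⁻¹ : ℝ) ^ n) atTop (nhds 0) := by
      simpa using hp.const_mul (2 * ρ)
    filter_upwards [h0.eventually (gt_mem_nhds hε)] with n hn x hx
    rw [dist_eq_norm]
    exact lt_of_le_of_lt (hWd n x hx) hn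
  have hWSol : Sol W := by
    constructor
    · exact hunif.tendstoLocallyUniformlyOn.differentiableOn
        (Filter.Eventually.of_forall (fun n => (hSoln n).1)) isOpen_ball
    · intro x hx
      have h1 : Tendsto (fun n => ‖Wn n x - U1‖) atTop (nhds ‖W x - U1‖) :=
        ((htendW x hx).sub tendsto_const_nhds).norm
      exact le_of_tendsto h1 (Filter.Eventually.of_forall (fun n => (hSoln n).2 x hx))
  have hWz1 : W z1 = U1 := by
    have h1 : Tendsto (fun n => Wn n z1) atTop (nhds U1) := by
      simpa [hz1n] using (tendsto_const_nhds : Tendsto (fun _ : ℕ => U1) atTop (nhds U1))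
    exact tendsto_nhds_unique (htendW z1 hz1B) h1
  have hfix : ∀ x ∈ B, P W x = W x := by
    intro x hx
    have hbound : ∀ n : ℕ, ‖P W x - W x‖ ≤
        r * L * (2 * ρ * (2⁻¹ : ℝ) ^ n) + 2 * ρ * (2⁻¹ : ℝ) ^ (n + 1) := by
      intro n
      have h1 : ‖P W x - Wn (n+1) x‖ ≤ r * L * (2 * ρ * (2⁻¹ : ℝ) ^ n) := by
        rw [hWs]
        apply hcontr _ _ _ hWSol (hSoln n) _ x hx
        intro y hy; exact hWd n y hy
      have h2 := hWd (n+1) x hx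
      calc ‖P W x - W x‖ = ‖(P W x - Wn (n+1) x) + (Wn (n+1) x - W x)‖ := by abel_nf
        _ ≤ ‖P W x - Wn (n+1) x‖ + ‖Wn (n+1) x - W x‖ := norm_add_le _ _
        _ ≤ r * L * (2 * ρ * (2⁻¹ : ℝ) ^ n) + 2 * ρ * (2⁻¹ : ℝ) ^ (n + 1) := by
            rw [← norm_neg (Wn (n+1) x - W x), neg_sub]
            gcongr
    have h0 : Tendsto (fun n : ℕ => r * L * (2 * ρ * (2⁻¹ : ℝ) ^ n) +
        2 * ρ * (2⁻¹ : ℝ) ^ (n + 1)) atTop (nhds 0) := by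
      have hp : Tendsto (fun n : ℕ => (2⁻¹ : ℝ) ^ n) atTop (nhds 0) :=
        tendsto_pow_atTop_nhds_zero_of_lt_one (by norm_num) (by norm_num)
      have hps : Tendsto (fun n : ℕ => (2⁻¹ : ℝ) ^ (n + 1)) atTop (nhds 0) :=
        hp.comp (tendsto_add_atTop_nat 1)
      simpa using ((hp.const_mul (r * L * (2 * ρ))).add (hps.const_mul (2 * ρ))).congr
        (f₂ := fun n : ℕ => r * L * (2 * ρ * (2⁻¹ : ℝ) ^ n) + 2 * ρ * (2⁻¹ : ℝ) ^ (n + 1))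
        (by intro n; ring)
    have : ‖P W x - W x‖ ≤ 0 :=
      ge_of_tendsto h0 (Filter.Eventually.of_forall hbound)
    have := le_antisymm this (norm_nonneg _)
    rwa [norm_eq_zero, sub_eq_zero] at this
  refine ⟨W, hWz1, hWSol.2, ?_⟩
  intro x hx
  have hder : HasDerivAt (P W) (F x (W x)) x := (step W hWSol).1 x hx
  apply hder.congr_of_eventuallyEq
  filter_upwards [isOpen_ball.mem_nhds hx] with y hy
  exact (hfix y hy).symm

lemma ode_uniq {F : ℂ → E → E} {z1 : ℂ} {δ L : ℝ} {S : Set E} (hL0 : 0 ≤ L)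
    (hL : ∀ z ∈ ball z1 δ, ∀ w ∈ S, ∀ w' ∈ S, ‖F z w - F z w'‖ ≤ L * ‖w - w'‖)
    {W1 W2 : ℂ → E}
    (h1 : ∀ z ∈ ball z1 δ, HasDerivAt W1 (F z (W1 z)) z)
    (h1s : ∀ z ∈ ball z1 δ, W1 z ∈ S)
    (h2 : ∀ z ∈ ball z1 δ, HasDerivAt W2 (F z (W2 z)) z)
    (h2s : ∀ z ∈ ball z1 δ, W2 z ∈ S)
    (heq0 : W1 z1 = W2 z1) : EqOn W1 W2 (ball z1 δ) := by
  intro x hx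
  set ℓ : ℝ → ℂ := fun t => z1 + (t : ℂ) * (x - z1) with hℓ
  have hseg : ∀ t ∈ Icc (0:ℝ) 1, ℓ t ∈ ball z1 δ := by
    intro t ht
    have : ‖(t : ℂ) * (x - z1)‖ < δ := by
      rw [norm_mul, Complex.norm_real]
      calc ‖t‖ * ‖x - z1‖ ≤ 1 * ‖x - z1‖ := by
            apply mul_le_mul_of_nonneg_right _ (norm_nonneg _)
            rw [Real.norm_eq_abs, abs_le]; exact ⟨by linarith [ht.1], ht.2⟩
        _ = ‖x - z1‖ := one_mul _
        _ < δ := by simpa [mem_ball, dist_eq_norm] using hx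
    rw [hℓ]; simp only [mem_ball, dist_eq_norm, add_sub_cancel_left]; exact this
  set v : ℝ → E → E := fun t w => (x - z1) • F (ℓ t) w with hv0
  set s : ℝ → Set E := fun t => if ℓ t ∈ ball z1 δ then S else (∅ : Set E) with hs0
  set K : NNReal := Real.toNNReal (‖x - z1‖ * L) with hK
  have hv : ∀ t, LipschitzOnWith K (v t) (s t) := by
    intro t
    by_cases h : ℓ t ∈ ball z1 δ
    · rw [hs0]; simp only [if_pos h]
      apply LipschitzOnWith.of_dist_le_mul
      intro w hw w' hw'
      rw [dist_eq_norm, dist_eq_norm, hv0]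
      simp only [← smul_sub, norm_smul]
      calc ‖x - z1‖ * ‖F (ℓ t) w - F (ℓ t) w'‖ ≤ ‖x - z1‖ * (L * ‖w - w'‖) :=
            mul_le_mul_of_nonneg_left (hL _ h _ hw _ hw') (norm_nonneg _)
        _ = (K : ℝ) * ‖w - w'‖ := by
            rw [hK, Real.coe_toNNReal _ (by positivity)]; ring
    · rw [hs0]; simp only [if_neg h]
      exact lipschitzOnWith_empty _ _
  have hℓd : ∀ t : ℝ, HasDerivAt ℓ (x - z1) t := by
    intro t
    have h0 : HasDerivAt (fun s : ℝ => (s : ℂ)) 1 t := Complex.ofRealCLM.hasDerivAt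
    rw [hℓ]
    simpa using (h0.mul_const (x - z1)).const_add z1
  have hWc : ∀ (W : ℂ → E), (∀ z ∈ ball z1 δ, HasDerivAt W (F z (W z)) z) →
      ContinuousOn (fun t => W (ℓ t)) (Icc (0:ℝ) 1) := by
    intro W hW
    apply ContinuousOn.comp (g := W) (t := ball z1 δ)
    · exact fun z hz => ((hW z hz).differentiableAt.continuousAt).continuousWithinAt
    · fun_prop
    · exact fun t ht => hseg t ht
  have hWd : ∀ (W : ℂ → E), (∀ z ∈ ball z1 δ, HasDerivAt W (F z (W z)) z) →
      ∀ t ∈ Ico (0:ℝ) 1, HasDerivWithinAt (fun t => W (ℓ t)) (v t (W (ℓ t))) (Ici t) t := by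
    intro W hW t ht
    have := (hW (ℓ t) (hseg t (Ico_subset_Icc_self ht))).scomp t (hℓd t)
    exact this.hasDerivWithinAt
  have hWm : ∀ (W : ℂ → E), (∀ z ∈ ball z1 δ, W z ∈ S) →
      ∀ t ∈ Ico (0:ℝ) 1, W (ℓ t) ∈ s t := by
    intro W hW t ht
    rw [hs0]
    simp only [if_pos (hseg t (Ico_subset_Icc_self ht))]
    exact hW _ (hseg t (Ico_subset_Icc_self ht))
  have ha : (fun t => W1 (ℓ t)) 0 = (fun t => W2 (ℓ t)) 0 := by
    simp only [hℓ]; norm_num; exact heq0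
  have := ODE_solution_unique_of_mem_Icc_right (fun t _ => hv t) (hWc W1 h1) (hWd W1 h1) (hWm W1 h1s)
    (hWc W2 h2) (hWd W2 h2) (hWm W2 h2s) ha (right_mem_Icc.mpr zero_le_one)
  simpa [hℓ] using this

set_option maxHeartbeats 1000000 in
/-- **Continuation of holomorphic solutions along a curve reaching the boundary
(Corollary `complseq`).**  `ℂ^N` (modelled as `Fin N → ℂ`) carries the maximum coordinate
norm.  Let `U` be holomorphic on an open set `𝒱 ⊆ ℂ`, a solution of `U' = G (U z) z`,
where `G` is holomorphic on an open neighbourhood `O` of the graph of `U`, uniformly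
Lipschitz-like at every point of `O`.  Let `z0` be a boundary point of `𝒱`, `γ` an
injective real-analytic regular curve in `𝒱 ∪ {z0}` with endpoint `z0`, and suppose
`U (γ t_h) → U0` along a strictly increasing sequence `t_h → 1`, with `G` holomorphic at
`(U0, z0)`.  Then `U` continues analytically up to `z0`: some holomorphic solution `W` on
a disc around `z0` takes the value `U0` at `z0` and agrees with `U` along `γ` near `1`. -/
theorem stmt_7 {N : ℕ} (𝒱 : Set ℂ) (h𝒱 : IsOpen 𝒱)
    (U : ℂ → Fin N → ℂ) (hU : DifferentiableOn ℂ U 𝒱)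
    (O : Set ((Fin N → ℂ) × ℂ)) (hO : IsOpen O)
    (hgraph : ∀ z ∈ 𝒱, ((U z, z) : (Fin N → ℂ) × ℂ) ∈ O)
    (G : (Fin N → ℂ) → ℂ → Fin N → ℂ)
    (hG : DifferentiableOn ℂ (fun p => G p.1 p.2) O)
    (hlip : ∀ p ∈ O, ∃ K : ℝ, ∃ W ∈ nhds p,
      ∀ (A B : Fin N → ℂ) (z : ℂ), ((A, z) : (Fin N → ℂ) × ℂ) ∈ W →
        ((B, z) : (Fin N → ℂ) × ℂ) ∈ W → ‖G A z - G B z‖ ≤ K * ‖A - B‖)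
    (hode : ∀ z ∈ 𝒱, HasDerivAt U (G (U z) z) z)
    (z0 : ℂ) (hz0 : z0 ∈ frontier 𝒱)
    (γ : ℝ → ℂ)
    (hγan : ∀ t ∈ Icc (0 : ℝ) 1, AnalyticAt ℝ γ t)
    (hγreg : ∀ t ∈ Icc (0 : ℝ) 1, deriv γ t ≠ 0)
    (hγinj : InjOn γ (Icc (0 : ℝ) 1))
    (hγ1 : γ 1 = z0)
    (hγin : ∀ t ∈ Ico (0 : ℝ) 1, γ t ∈ 𝒱)
    (ts : ℕ → ℝ) (hmono : StrictMono ts) (hts : ∀ h, ts h ∈ Ico (0 : ℝ) 1)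
    (htends : Filter.Tendsto ts Filter.atTop (nhds 1))
    (U0 : Fin N → ℂ)
    (hU0 : Filter.Tendsto (fun h => U (γ (ts h))) Filter.atTop (nhds U0))
    (hG0 : ∃ O' ∈ nhds ((U0, z0) : (Fin N → ℂ) × ℂ),
      DifferentiableOn ℂ (fun p : (Fin N → ℂ) × ℂ => G p.1 p.2) O') :
    ∃ r > (0 : ℝ), ∃ W : ℂ → Fin N → ℂ,
      W z0 = U0 ∧
      (∀ z ∈ Metric.ball z0 r, HasDerivAt W (G (W z) z) z) ∧
      (∀ᶠ t in nhdsWithin 1 (Iio (1 : ℝ)), W (γ t) = U (γ t)) := by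
  classical
  obtain ⟨O', hO'nhds, hGO'⟩ := hG0
  set Ω : Set ((Fin N → ℂ) × ℂ) := O ∪ interior O' with hΩdef
  have hΩo : IsOpen Ω := hO.union isOpen_interior
  have hp0Ω : ((U0, z0) : (Fin N → ℂ) × ℂ) ∈ Ω :=
    Or.inr (mem_interior_iff_mem_nhds.mpr hO'nhds)
  have hGΩ : DifferentiableOn ℂ (fun p : (Fin N → ℂ) × ℂ => G p.1 p.2) Ω := by
    intro p hp
    cases hp with
    | inl h => exact (hG.differentiableAt (hO.mem_nhds h)).differentiableWithinAt
    | inr h => exact ((hGO'.mono interior_subset).differentiableAt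
        (isOpen_interior.mem_nhds h)).differentiableWithinAt
  set F : ℂ → (Fin N → ℂ) → (Fin N → ℂ) := fun z w => G w z with hFdef
  set ΩF : Set (ℂ × (Fin N → ℂ)) := {p | ((p.2, p.1) : (Fin N → ℂ) × ℂ) ∈ Ω} with hΩFdef
  have hΩFo : IsOpen ΩF := hΩo.preimage (continuous_snd.prodMk continuous_fst)
  have hFdiff : DifferentiableOn ℂ (fun p : ℂ × (Fin N → ℂ) => F p.1 p.2) ΩF := by
    intro p hp
    have h1 : DifferentiableAt ℂ (fun p : (Fin N → ℂ) × ℂ => G p.1 p.2) (p.2, p.1) :=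
      hGΩ.differentiableAt (hΩo.mem_nhds hp)
    have h2 : DifferentiableAt ℂ
        (fun q : ℂ × (Fin N → ℂ) => ((q.2, q.1) : (Fin N → ℂ) × ℂ)) p :=
      differentiableAt_snd.prodMk differentiableAt_fst
    exact (h1.comp p h2).differentiableWithinAt
  have hp0ΩF : ((z0, U0) : ℂ × (Fin N → ℂ)) ∈ ΩF := hp0Ω
  -- radius, bound, Lipschitz constant
  obtain ⟨ρ, hρ0, hρsub⟩ := Metric.nhds_basis_closedBall.mem_iff.mp (hΩo.mem_nhds hp0Ω)
  have hprodΩ : ∀ w ∈ closedBall U0 ρ, ∀ z ∈ closedBall z0 ρ,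
      ((w, z) : (Fin N → ℂ) × ℂ) ∈ closedBall ((U0, z0) : (Fin N → ℂ) × ℂ) ρ := by
    intro w hw z hz
    rw [mem_closedBall, Prod.dist_eq]
    exact max_le hw hz
  obtain ⟨M, hM⟩ :=
    (isCompact_closedBall ((U0, z0) : (Fin N → ℂ) × ℂ) ρ).exists_bound_of_continuousOn
      ((hGΩ.continuousOn).mono hρsub)
  have hM0 : (0:ℝ) ≤ M := le_trans (norm_nonneg _) (hM ((U0, z0) : (Fin N → ℂ) × ℂ) (mem_closedBall_self hρ0.le))
  have hMb : ∀ z ∈ closedBall z0 ρ, ∀ w ∈ closedBall U0 ρ, ‖F z w‖ ≤ M := by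
    intro z hz w hw
    exact hM (w, z) (hprodΩ w hw z hz)
  set K : ℝ := 8*M/ρ with hKdef
  have hK0 : (0:ℝ) ≤ K := by positivity
  have hLb : ∀ z ∈ closedBall z0 ρ, ∀ w ∈ closedBall U0 (ρ/8), ∀ w' ∈ closedBall U0 (ρ/8),
      ‖F z w - F z w'‖ ≤ K * ‖w - w'‖ := by
    intro z hz
    apply lip_of_bdd hρ0
    · intro w hw
      have h1 : DifferentiableAt ℂ (fun p : (Fin N → ℂ) × ℂ => G p.1 p.2) (w, z) :=
        hGΩ.differentiableAt
          (hΩo.mem_nhds (hρsub (hprodΩ w (ball_subset_closedBall hw) z hz)))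
      have h2 : DifferentiableAt ℂ (fun w : Fin N → ℂ => ((w, z) : (Fin N → ℂ) × ℂ)) w :=
        differentiableAt_id.prodMk (differentiableAt_const z)
      exact (h1.comp w h2).differentiableWithinAt
    · intro w hw
      exact hM (w, z) (hprodΩ w (ball_subset_closedBall hw) z hz)
  -- choose r
  set r : ℝ := min (min (ρ/16) ((ρ/16)/(M+1))) (2⁻¹/(K+1)) with hrdef
  have hr0 : 0 < r := by
    apply lt_min (lt_min (by linarith) (by positivity)) (by positivity)
  have hrρ : r ≤ ρ/16 := (min_le_left _ _).trans (min_le_left _ _)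
  have hrM : r * M ≤ ρ/16 := by
    calc r * M ≤ ((ρ/16)/(M+1)) * M :=
          mul_le_mul_of_nonneg_right ((min_le_left _ _).trans (min_le_right _ _)) hM0
      _ ≤ ρ/16 := by
          rw [div_mul_eq_mul_div, div_le_iff₀ (by linarith : (0:ℝ) < M+1)]
          nlinarith
  have hrL : r * K ≤ 2⁻¹ := by
    calc r * K ≤ (2⁻¹/(K+1)) * K :=
          mul_le_mul_of_nonneg_right (min_le_right _ _) hK0
      _ ≤ 2⁻¹ := by
          rw [div_mul_eq_mul_div, div_le_iff₀ (by linarith : (0:ℝ) < K+1)]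
          nlinarith
  -- choose the index h
  have hγc1 : ContinuousAt γ 1 := (hγan 1 (by norm_num)).continuousAt
  have hball1 : γ ⁻¹' (ball z0 (r/4)) ∈ nhds (1:ℝ) := by
    have h := hγc1
    rw [ContinuousAt, hγ1] at h
    exact h (ball_mem_nhds z0 (by linarith))
  obtain ⟨δ', hδ'0, hδ'⟩ := Metric.mem_nhds_iff.mp hball1
  have hev1 : ∀ᶠ k in atTop, 1 - δ' < ts k :=
    htends.eventually (eventually_gt_nhds (by linarith))
  have hev2 : ∀ᶠ k in atTop, dist (U (γ (ts k))) U0 < ρ/16 := by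
    have : ∀ᶠ y in nhds U0, dist y U0 < ρ/16 := by
      filter_upwards [ball_mem_nhds U0 (by linarith : (0:ℝ) < ρ/16)] with y hy
      simpa [mem_ball] using hy
    exact hU0.eventually this
  obtain ⟨h, hh1, hh2⟩ := (hev1.and hev2).exists
  set t1 : ℝ := ts h with ht1def
  set z1 : ℂ := γ t1 with hz1def
  set U1 : Fin N → ℂ := U (γ t1) with hU1def
  have ht1 : t1 ∈ Ico (0:ℝ) 1 := hts h
  have htail : ∀ t ∈ Icc t1 1, ‖γ t - z0‖ < r/4 := by
    intro t ht
    have : t ∈ ball (1:ℝ) δ' := by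
      rw [mem_ball, Real.dist_eq, abs_sub_lt_iff]
      constructor <;> [linarith [ht.2]; linarith [ht.1, hh1]]
    have := hδ' this
    simpa [mem_ball, dist_eq_norm] using this
  have hz1 : ‖z1 - z0‖ < r/4 := htail t1 ⟨le_refl t1, ht1.2.le⟩
  have hz1𝒱 : z1 ∈ 𝒱 := hγin t1 ht1
  have hU1b : ‖U1 - U0‖ ≤ ρ/16 := by rw [← dist_eq_norm]; exact hh2.le
  -- enlargement
  have henl1 : closedBall z1 (ρ/16) ⊆ closedBall z0 ρ := by
    apply closedBall_subset_closedBall'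
    rw [dist_eq_norm]
    linarith
  have henl2 : closedBall U1 (ρ/16) ⊆ closedBall U0 (ρ/8) := by
    apply closedBall_subset_closedBall'
    rw [dist_eq_norm]
    linarith
  have henl2' : closedBall U1 (ρ/16) ⊆ closedBall U0 ρ :=
    henl2.trans (closedBall_subset_closedBall (by linarith))
  have hsub2 : closedBall z1 (ρ/16) ×ˢ closedBall U1 (ρ/16) ⊆ ΩF := by
    rintro ⟨pz, pw⟩ ⟨hp1, hp2⟩
    exact hρsub (hprodΩ pw (henl2' hp2) pz (henl1 hp1))
  -- Picard
  obtain ⟨W, hWz1, hWb, hWode⟩ := picard_exists hΩFo hFdiff hr0 hrρ hsub2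
    (fun z hz w hw => hMb z (henl1 hz) w (henl2' hw))
    (fun z hz w hw w' hw' => hLb z (henl1 hz) w (henl2 hw) w' (henl2 hw'))
    hrM hrL hK0
  -- local uniqueness
  have hUode : ∀ z ∈ 𝒱, HasDerivAt U (F z (U z)) z := hode
  have hUcont : ContinuousAt U z1 :=
    (hU.differentiableAt (h𝒱.mem_nhds hz1𝒱)).continuousAt
  have hδmem : (ball z1 r ∩ 𝒱) ∩ {z | ‖U z - U1‖ ≤ ρ/16} ∈ nhds z1 := by
    apply Filter.inter_mem (Filter.inter_mem (ball_mem_nhds z1 hr0) (h𝒱.mem_nhds hz1𝒱))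
    have : ∀ᶠ y in nhds U1, ‖y - U1‖ ≤ ρ/16 := by
      filter_upwards [closedBall_mem_nhds U1 (by linarith : (0:ℝ) < ρ/16)] with y hy
      simpa [mem_closedBall, dist_eq_norm] using hy
    exact hUcont.eventually this
  obtain ⟨δ, hδ0, hδsub⟩ := Metric.mem_nhds_iff.mp hδmem
  have hδball : ball z1 δ ⊆ ball z1 r ∩ 𝒱 := fun z hz => (hδsub hz).1
  have hδU : ∀ z ∈ ball z1 δ, ‖U z - U1‖ ≤ ρ/16 := fun z hz => (hδsub hz).2
  have hδz0ρ : ball z1 δ ⊆ closedBall z0 ρ := by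
    intro z hz
    have h1 : ‖z - z1‖ < r := by
      have := (hδball hz).1
      simpa [mem_ball, dist_eq_norm] using this
    rw [mem_closedBall, dist_eq_norm]
    calc ‖z - z0‖ ≤ ‖z - z1‖ + ‖z1 - z0‖ := norm_sub_le_norm_sub_add_norm_sub _ _ _
      _ ≤ ρ := by linarith
  have hballsub : ball z1 δ ⊆ ball z1 r := fun z hz => (hδball hz).1
  have hequniq : EqOn W U (ball z1 δ) := by
    apply ode_uniq (S := closedBall U0 (ρ/8)) hK0
    · intro z hz w hw w' hw'
      exact hLb z (hδz0ρ hz) w hw w' hw'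
    · exact fun z hz => hWode z (hballsub hz)
    · intro z hz
      rw [mem_closedBall, dist_eq_norm]
      calc ‖W z - U0‖ ≤ ‖W z - U1‖ + ‖U1 - U0‖ := norm_sub_le_norm_sub_add_norm_sub _ _ _
        _ ≤ ρ/8 := by linarith [hWb z (hballsub hz)]
    · exact fun z hz => hUode z (hδball hz).2
    · intro z hz
      rw [mem_closedBall, dist_eq_norm]
      calc ‖U z - U0‖ ≤ ‖U z - U1‖ + ‖U1 - U0‖ := norm_sub_le_norm_sub_add_norm_sub _ _ _
        _ ≤ ρ/8 := by linarith [hδU z hz]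
    · exact hWz1
  -- identity theorem on the connected component
  set s : Set ℂ := ball z1 r ∩ 𝒱 with hsdef
  have hso : IsOpen s := isOpen_ball.inter h𝒱
  have hWdiff : DifferentiableOn ℂ W s :=
    fun z hz => ((hWode z hz.1).differentiableAt).differentiableWithinAt
  have hWan : AnalyticOnNhd ℂ W s := hWdiff.analyticOnNhd hso
  have hUan : AnalyticOnNhd ℂ U s := (hU.mono inter_subset_right).analyticOnNhd hso
  have hz1s : z1 ∈ s := ⟨mem_ball_self hr0, hz1𝒱⟩
  set C : Set ℂ := connectedComponentIn s z1 with hCdef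
  have hCsub : C ⊆ s := connectedComponentIn_subset _ _
  have hWUC : EqOn W U C := by
    apply AnalyticOnNhd.eqOn_of_preconnected_of_eventuallyEq (hWan.mono hCsub)
      (hUan.mono hCsub) isPreconnected_connectedComponentIn
      (mem_connectedComponentIn hz1s)
    exact Filter.eventuallyEq_of_mem (ball_mem_nhds z1 hδ0) hequniq
  have htailC : ∀ t ∈ Ico t1 1, γ t ∈ C := by
    intro t ht
    have himg : γ '' (Icc t1 t) ⊆ s := by
      rintro y ⟨τ, hτ, rfl⟩
      have hτ1 : τ ∈ Icc t1 (1:ℝ) := ⟨hτ.1, hτ.2.trans ht.2.le⟩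
      constructor
      · rw [mem_ball, dist_eq_norm]
        have h1 := htail τ hτ1
        have h2 : ‖z1 - z0‖ < r/4 := hz1
        calc ‖γ τ - z1‖ ≤ ‖γ τ - z0‖ + ‖z0 - z1‖ := norm_sub_le_norm_sub_add_norm_sub _ _ _
          _ < r := by rw [norm_sub_rev z0 z1]; linarith
      · exact hγin τ ⟨le_trans ht1.1 hτ.1, lt_of_le_of_lt hτ.2 ht.2⟩
    have hcont : ContinuousOn γ (Icc t1 t) := by
      intro τ hτ
      exact ((hγan τ ⟨le_trans ht1.1 hτ.1, hτ.2.trans ht.2.le⟩).continuousAt).continuousWithinAt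
    have hconn : IsPreconnected (γ '' Icc t1 t) := (isPreconnected_Icc).image γ hcont
    have hz1mem : z1 ∈ γ '' Icc t1 t := ⟨t1, ⟨le_refl t1, ht.1⟩, rfl⟩
    exact (hconn.subset_connectedComponentIn hz1mem himg)
      (mem_image_of_mem γ (right_mem_Icc.mpr ht.1))
  -- value at z0
  have hz0b : z0 ∈ ball z1 r := by
    rw [mem_ball, dist_eq_norm, norm_sub_rev]
    linarith
  have hWz0 : W z0 = U0 := by
    have hWc : ContinuousAt W z0 := ((hWode z0 hz0b).differentiableAt).continuousAt
    have hseq : Tendsto (fun k => γ (ts k)) atTop (nhds z0) := by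
      have h1 : Tendsto γ (nhds (1:ℝ)) (nhds z0) := by
        have := hγc1
        rwa [ContinuousAt, hγ1] at this
      exact h1.comp htends
    have h1 : Tendsto (fun k => W (γ (ts k))) atTop (nhds (W z0)) :=
      (hWc.tendsto).comp hseq
    have h2 : ∀ᶠ k in atTop, W (γ (ts k)) = U (γ (ts k)) := by
      filter_upwards [eventually_ge_atTop h] with k hk
      exact hWUC (htailC (ts k) ⟨hmono.monotone hk, (hts k).2⟩)
    exact tendsto_nhds_unique (h1.congr' h2) hU0
  refine ⟨r/4, by linarith, W, hWz0, ?_, ?_⟩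
  · intro z hz
    have hzb : z ∈ ball z1 r := by
      rw [mem_ball, dist_eq_norm]
      rw [mem_ball, dist_eq_norm] at hz
      calc ‖z - z1‖ ≤ ‖z - z0‖ + ‖z0 - z1‖ := norm_sub_le_norm_sub_add_norm_sub _ _ _
        _ < r := by rw [norm_sub_rev z0 z1]; linarith
    exact hWode z hzb
  · filter_upwards [Ioo_mem_nhdsLT_of_mem (⟨ht1.2, le_refl (1:ℝ)⟩ : (1:ℝ) ∈ Ioc t1 1)]
      with t ht
    exact hWUC (htailC t ⟨ht.1.le, ht.2⟩)
end

section
/- Let N ≥ 2, let Ω_1, …, Ω_N ⊆ ℂ be open, let b_1, a_2, …, a_N be holomorphic on Ω_1 and f_k holomorphic on Ω_k (2 ≤ k ≤ N). Let V ⊆ ℂ be a connected open set, z0 ∈ V, and let u^1, …, u^N : V → ℂ be holomorphic with u^i(V) ⊆ Ω_i for each i, such that b_1∘u^1, a_k∘u^1 (2 ≤ k ≤ N) and f_k∘u^k (2 ≤ k ≤ N) are nowhere vanishing on V. Suppose the geodesic system holds on V: ü^1 + (b_1′(u^1)/(2 b_1(u^1)))(u̇^1)² − Σ_{l=2}^N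 (a_l′(u^1) f_l(u^l)/(2 b_1(u^1)))(u̇^l)² = 0, and ü^k + (f_k′(u^k)/(2 f_k(u^k)))(u̇^k)² + (a_k′(u^1)/a_k(u^1)) u̇^1 u̇^k = 0 for k = 2,…,N. Assume moreover that u^1 is not constant on V. Then there exist complex constants A_1, …, A_N, with A_k = (u̇^k(z0))² f_k(u^k(z0)) a_k(u^1(z0))² for 2 ≤ k ≤ N, such that for all z ∈ V: (u̇^1(z))² b_1(u^1(z)) = A_1 − Σ_{l=2}^N A_l / a_l(u^1(z)), and (u̇^k(z))² f_k(u^k(z)) a_k(u^1(z))² = A_k for k = 2,…,N. -/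
open Set

theorem constOn_of_deriv_zero {V : Set ℂ} (hV : IsOpen V) (hVc : IsPreconnected V)
    {g : ℂ → ℂ} (hg : ∀ z ∈ V, HasDerivAt g 0 z) {z0 : ℂ} (h0 : z0 ∈ V) :
    ∀ z ∈ V, g z = g z0 := by
  have loc : ∀ z ∈ V, ∃ r > 0, Metric.ball z r ⊆ V ∧ ∀ w ∈ Metric.ball z r, g w = g z := by
    intro z hz
    obtain ⟨r, hr, hball⟩ := Metric.isOpen_iff.1 hV z hz
    refine ⟨r, hr, hball, fun w hw => ?_⟩
    have hconv : Convex ℝ (Metric.ball z r) := convex_ball z r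
    have hdiff : DifferentiableOn ℂ g (Metric.ball z r) := fun x hx =>
      ((hg x (hball hx)).differentiableAt).differentiableWithinAt
    have hzero : ∀ x ∈ Metric.ball z r, fderivWithin ℂ g (Metric.ball z r) x = 0 := by
      intro x hx
      have hF : HasFDerivAt g (0 : ℂ →L[ℂ] ℂ) x := by
        have := (hg x (hball hx)).hasFDerivAt
        rw [ContinuousLinearMap.toSpanSingleton_zero] at this
        exact this
      exact hF.hasFDerivWithinAt.fderivWithin (Metric.isOpen_ball.uniqueDiffOn x hx)
    exact hconv.is_const_of_fderivWithin_eq_zero hdiff hzero hw (Metric.mem_ball_self hr)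
  set S := {z | z ∈ V ∧ g z = g z0} with hS
  set T := {z | z ∈ V ∧ g z ≠ g z0} with hT
  have hSo : IsOpen S := by
    rw [Metric.isOpen_iff]
    rintro z ⟨hz, hgz⟩
    obtain ⟨r, hr, hball, hc⟩ := loc z hz
    exact ⟨r, hr, fun w hw => ⟨hball hw, (hc w hw).trans hgz⟩⟩
  have hTo : IsOpen T := by
    rw [Metric.isOpen_iff]
    rintro z ⟨hz, hgz⟩
    obtain ⟨r, hr, hball, hc⟩ := loc z hz
    exact ⟨r, hr, fun w hw => ⟨hball hw, by rw [hc w hw]; exact hgz⟩⟩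
  have hdisj : Disjoint S T := by
    rw [Set.disjoint_left]; rintro x ⟨_, hx⟩ ⟨_, hx'⟩; exact hx' hx
  have hsub : V ⊆ S ∪ T := fun z hz => by
    by_cases h : g z = g z0
    · exact Or.inl ⟨hz, h⟩
    · exact Or.inr ⟨hz, h⟩
  have := hVc.subset_left_of_subset_union hSo hTo hdisj hsub ⟨z0, h0, ⟨h0, rfl⟩⟩
  exact fun z hz => (this hz).2

/-- **First integrals of the geodesic equations of a warped product, nonconstant base
component (Lemma `integraleprimo1`).**  Coordinates are indexed by `Fin N`, index `0`
playing the role of the index `1` of the paper.  If `u = (u⁰,…,u^{N-1})` is a holomorphic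
solution on a connected open set `V` of the geodesic system of the warped product metric
`Λ = b₁(u⁰) du⁰⊙du⁰ + Σ_{k≠0} a_k(u⁰) f_k(u^k) du^k⊙du^k`, starting at a metrically
ordinary point (all the displayed denominators are nonvanishing along `u`), and `u⁰` is not
constant, then the displayed first integrals hold for suitable constants `A_k`. -/
theorem stmt_9 {N : ℕ} [NeZero N] (hN : 2 ≤ N)
    (Ω : Fin N → Set ℂ) (hΩ : ∀ i, IsOpen (Ω i))
    (b1 : ℂ → ℂ) (a f : Fin N → ℂ → ℂ)
    (hb1 : DifferentiableOn ℂ b1 (Ω 0))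
    (ha : ∀ k, k ≠ 0 → DifferentiableOn ℂ (a k) (Ω 0))
    (hf : ∀ k, k ≠ 0 → DifferentiableOn ℂ (f k) (Ω k))
    (V : Set ℂ) (hV : IsOpen V) (hVconn : IsConnected V)
    (z0 : ℂ) (hz0 : z0 ∈ V)
    (u : Fin N → ℂ → ℂ) (hu : ∀ i, DifferentiableOn ℂ (u i) V)
    (humem : ∀ i, ∀ z ∈ V, u i z ∈ Ω i)
    (hb1ne : ∀ z ∈ V, b1 (u 0 z) ≠ 0)
    (hane : ∀ k, k ≠ 0 → ∀ z ∈ V, a k (u 0 z) ≠ 0)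
    (hfne : ∀ k, k ≠ 0 → ∀ z ∈ V, f k (u k z) ≠ 0)
    (hgeo0 : ∀ z ∈ V,
      deriv (deriv (u 0)) z
        + (deriv b1 (u 0 z) / (2 * b1 (u 0 z))) * (deriv (u 0) z) ^ 2
        - ∑ l ∈ Finset.univ.erase (0 : Fin N),
            (deriv (a l) (u 0 z) * f l (u l z) / (2 * b1 (u 0 z))) * (deriv (u l) z) ^ 2
        = 0)
    (hgeok : ∀ k, k ≠ 0 → ∀ z ∈ V,
      deriv (deriv (u k)) z
        + (deriv (f k) (u k z) / (2 * f k (u k z))) * (deriv (u k) z) ^ 2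
        + (deriv (a k) (u 0 z) / a k (u 0 z)) * deriv (u 0) z * deriv (u k) z = 0)
    (hnc : ¬ ∃ c : ℂ, ∀ z ∈ V, u 0 z = c) :
    ∃ A : Fin N → ℂ,
      (∀ k, k ≠ 0 → A k = (deriv (u k) z0) ^ 2 * f k (u k z0) * (a k (u 0 z0)) ^ 2) ∧
      (∀ z ∈ V, (deriv (u 0) z) ^ 2 * b1 (u 0 z)
          = A 0 - ∑ l ∈ Finset.univ.erase (0 : Fin N), A l / a l (u 0 z)) ∧
      (∀ k, k ≠ 0 → ∀ z ∈ V,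
        (deriv (u k) z) ^ 2 * f k (u k z) * (a k (u 0 z)) ^ 2 = A k) := by
  have hVp : IsPreconnected V := hVconn.isPreconnected
  have huA : ∀ i, AnalyticOnNhd ℂ (u i) V := fun i => (hu i).analyticOnNhd hV
  have hud : ∀ i, ∀ z ∈ V, HasDerivAt (u i) (deriv (u i) z) z := fun i z hz =>
    ((huA i z hz).differentiableAt).hasDerivAt
  have hud2 : ∀ i, ∀ z ∈ V, HasDerivAt (deriv (u i)) (deriv (deriv (u i)) z) z := fun i z hz =>
    (((huA i).deriv z hz).differentiableAt).hasDerivAt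
  have hfd : ∀ k, k ≠ 0 → ∀ z ∈ V,
      HasDerivAt (f k) (deriv (f k) (u k z)) (u k z) := fun k hk z hz =>
    (((hf k hk) _ (humem k z hz)).differentiableAt
      ((hΩ k).mem_nhds (humem k z hz))).hasDerivAt
  have had : ∀ k, k ≠ 0 → ∀ z ∈ V,
      HasDerivAt (a k) (deriv (a k) (u 0 z)) (u 0 z) := fun k hk z hz =>
    (((ha k hk) _ (humem 0 z hz)).differentiableAt
      ((hΩ 0).mem_nhds (humem 0 z hz))).hasDerivAt
  have hbd : ∀ z ∈ V, HasDerivAt b1 (deriv b1 (u 0 z)) (u 0 z) := fun z hz =>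
    ((hb1 _ (humem 0 z hz)).differentiableAt ((hΩ 0).mem_nhds (humem 0 z hz))).hasDerivAt
  -- first integrals for k ≠ 0
  set g : Fin N → ℂ → ℂ :=
    fun k z => (deriv (u k) z) ^ 2 * f k (u k z) * (a k (u 0 z)) ^ 2 with hgdef
  have hgd : ∀ k, k ≠ 0 → ∀ z ∈ V, HasDerivAt (g k) 0 z := by
    intro k hk z hz
    have h1 : HasDerivAt (fun z => (deriv (u k) z) ^ 2)
        (2 * deriv (u k) z * deriv (deriv (u k)) z) z := by
      simpa [mul_comm] using (hud2 k z hz).fun_pow 2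
    have h2 : HasDerivAt (fun z => f k (u k z))
        (deriv (f k) (u k z) * deriv (u k) z) z :=
      (hfd k hk z hz).comp z (hud k z hz)
    have h3 : HasDerivAt (fun z => a k (u 0 z))
        (deriv (a k) (u 0 z) * deriv (u 0) z) z :=
      (had k hk z hz).comp z (hud 0 z hz)
    have h4 : HasDerivAt (fun z => (a k (u 0 z)) ^ 2)
        (2 * a k (u 0 z) * (deriv (a k) (u 0 z) * deriv (u 0) z)) z := by
      simpa [mul_comm, mul_assoc] using h3.fun_pow 2
    have hG := (h1.fun_mul h2).fun_mul h4
    have hF := hfne k hk z hz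
    have hA := hane k hk z hz
    have heq := hgeok k hk z hz
    have heq2 : 2 * f k (u k z) * a k (u 0 z) * deriv (deriv (u k)) z
        + deriv (f k) (u k z) * a k (u 0 z) * (deriv (u k) z) ^ 2
        + 2 * deriv (a k) (u 0 z) * f k (u k z) * deriv (u 0) z * deriv (u k) z = 0 := by
      field_simp at heq
      linear_combination heq
    refine hG.congr_deriv ?_
    linear_combination (a k (u 0 z) * deriv (u k) z) * heq2
  have hgconst : ∀ k, k ≠ 0 → ∀ z ∈ V, g k z = g k z0 := fun k hk =>
    constOn_of_deriv_zero hV hVp (hgd k hk) hz0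
  -- the constant for index 0
  set A : Fin N → ℂ := fun k =>
    if k = 0 then (deriv (u 0) z0) ^ 2 * b1 (u 0 z0)
        + ∑ l ∈ Finset.univ.erase (0 : Fin N), g l z0 / a l (u 0 z0)
      else g k z0 with hAdef
  have hAk : ∀ k, k ≠ 0 → A k = g k z0 := fun k hk => by simp [hAdef, hk]
  set h : ℂ → ℂ := fun z => (deriv (u 0) z) ^ 2 * b1 (u 0 z)
      + ∑ l ∈ Finset.univ.erase (0 : Fin N), A l / a l (u 0 z) with hhdef
  have hhd : ∀ z ∈ V, HasDerivAt h 0 z := by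
    intro z hz
    have h1 : HasDerivAt (fun z => (deriv (u 0) z) ^ 2)
        (2 * deriv (u 0) z * deriv (deriv (u 0)) z) z := by
      simpa [mul_comm] using (hud2 0 z hz).fun_pow 2
    have hB : HasDerivAt (fun z => b1 (u 0 z))
        (deriv b1 (u 0 z) * deriv (u 0) z) z :=
      (hbd z hz).comp z (hud 0 z hz)
    have hsumd : HasDerivAt (fun z => ∑ l ∈ Finset.univ.erase (0 : Fin N), A l / a l (u 0 z))
        (∑ l ∈ Finset.univ.erase (0 : Fin N),
          (0 * a l (u 0 z) - A l * (deriv (a l) (u 0 z) * deriv (u 0) z))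
            / (a l (u 0 z)) ^ 2) z := by
      apply HasDerivAt.fun_sum
      intro l hl
      have hl0 : l ≠ 0 := Finset.ne_of_mem_erase hl
      exact (hasDerivAt_const z (A l)).div
        ((had l hl0 z hz).comp z (hud 0 z hz)) (hane l hl0 z hz)
    have hG := (h1.fun_mul hB).fun_add hsumd
    have hBne := hb1ne z hz
    have heq := hgeo0 z hz
    set S : ℂ := ∑ l ∈ Finset.univ.erase (0 : Fin N),
        deriv (a l) (u 0 z) * f l (u l z) * (deriv (u l) z) ^ 2 with hSdef
    have hsumrw : ∑ l ∈ Finset.univ.erase (0 : Fin N),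
        (deriv (a l) (u 0 z) * f l (u l z) / (2 * b1 (u 0 z))) * (deriv (u l) z) ^ 2
        = S / (2 * b1 (u 0 z)) := by
      rw [hSdef, Finset.sum_div]
      exact Finset.sum_congr rfl fun l hl => by ring
    rw [hsumrw] at heq
    have heq2 : 2 * b1 (u 0 z) * deriv (deriv (u 0)) z
        + deriv b1 (u 0 z) * (deriv (u 0) z) ^ 2 - S = 0 := by
      field_simp at heq
      linear_combination heq
    have hterm : ∑ l ∈ Finset.univ.erase (0 : Fin N),
        (0 * a l (u 0 z) - A l * (deriv (a l) (u 0 z) * deriv (u 0) z))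
          / (a l (u 0 z)) ^ 2
        = - S * deriv (u 0) z := by
      rw [hSdef, neg_mul, Finset.sum_mul, ← Finset.sum_neg_distrib]
      apply Finset.sum_congr rfl
      intro l hl
      have hl0 : l ≠ 0 := Finset.ne_of_mem_erase hl
      have hAl : A l = (deriv (u l) z) ^ 2 * f l (u l z) * (a l (u 0 z)) ^ 2 :=
        (hAk l hl0).trans (hgconst l hl0 z hz).symm
      have hAne := hane l hl0 z hz
      rw [hAl]
      field_simp
      ring
    rw [hterm] at hG
    refine hG.congr_deriv ?_
    linear_combination (deriv (u 0) z) * heq2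
  have hhconst : ∀ z ∈ V, h z = h z0 := constOn_of_deriv_zero hV hVp hhd hz0
  refine ⟨A, fun k hk => hAk k hk, ?_, fun k hk z hz => (hgconst k hk z hz).trans (hAk k hk).symm⟩
  intro z hz
  have hh := hhconst z hz
  have hA0 : A 0 = h z0 := by
    simp only [hAdef, hhdef, if_pos rfl]
    congr 1
    exact Finset.sum_congr rfl fun l hl => by
      rw [if_neg (Finset.ne_of_mem_erase hl)]
  have : (deriv (u 0) z) ^ 2 * b1 (u 0 z)
      + ∑ l ∈ Finset.univ.erase (0 : Fin N), A l / a l (u 0 z) = A 0 := by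
    rw [hA0, ← hh]
  linear_combination this
end

section
/- Let M and N be connected complex manifolds, G : M → N a holomorphic map, U ⊆ ℂ a nonempty connected open set and f : U → M holomorphic. Let (R̃, π_R, j_R, F_R) be a standard Riemann surface (a maximal standard analytical continuation) of the element (U, f) with values in M, and let (S̃, π_S, j_S, F_S) be a standard Riemann surface of the element (U, G∘f) with values in N. Then there exists a holomorphic map h : R̃ → S̃ such that h∘j_R = j_S and π_S∘h = π_R. -/
open scoped Manifold
open Set Topology

/-- A standard analytical continuation of the holomorphic mapping element `(U, f)`. -/
structure StandardContinuation (E : Type) [NormedAddCommGroup E] [NormedSpace ℂ E]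
    (M : Type) [TopologicalSpace M] [ChartedSpace E M]
    (U : Set ℂ) (f : ℂ → M) where
  S : Type
  [topS : TopologicalSpace S]
  [chartedS : ChartedSpace ℂ S]
  [analyticS : IsManifold 𝓘(ℂ, ℂ) ⊤ S]
  [t2S : T2Space S]
  [secondCountableS : SecondCountableTopology S]
  [connectedS : ConnectedSpace S]
  p : S → ℂ
  hp : MDifferentiable 𝓘(ℂ, ℂ) 𝓘(ℂ, ℂ) p
  hpnc : ¬ ∃ c : ℂ, ∀ s, p s = c
  hUrange : U ⊆ Set.range p
  j : ℂ → S
  hj : MDifferentiableOn 𝓘(ℂ, ℂ) 𝓘(ℂ, ℂ) j U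
  hpj : ∀ z ∈ U, p (j z) = z
  F : S → M
  hF : MDifferentiable 𝓘(ℂ, ℂ) 𝓘(ℂ, E) F
  hFj : ∀ z ∈ U, F (j z) = f z

attribute [instance] StandardContinuation.topS StandardContinuation.chartedS
  StandardContinuation.analyticS StandardContinuation.t2S
  StandardContinuation.secondCountableS StandardContinuation.connectedS

/-- A standard analytical continuation is a *standard Riemann surface* (is maximal) if
every standard analytical continuation of the same element admits a holomorphic morphism
into it. -/
def StandardContinuation.IsMaximal {E : Type} [NormedAddCommGroup E] [NormedSpace ℂ E]
    {M : Type} [TopologicalSpace M] [ChartedSpace E M]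
    {U : Set ℂ} {f : ℂ → M} (Q : StandardContinuation E M U f) : Prop :=
  ∀ Q' : StandardContinuation E M U f,
    ∃ h : Q'.S → Q.S,
      MDifferentiable 𝓘(ℂ, ℂ) 𝓘(ℂ, ℂ) h ∧ ∀ z ∈ U, h (Q'.j z) = Q.j z


theorem aux_freq_to_ev {S : Type} [TopologicalSpace S] [ChartedSpace ℂ S]
    [IsManifold 𝓘(ℂ, ℂ) ⊤ S]
    {g : S → ℂ} (hg : MDifferentiable 𝓘(ℂ, ℂ) 𝓘(ℂ, ℂ) g) (s : S)
    (hfreq : ∃ᶠ t in 𝓝[≠] s, g t = 0) : ∀ᶠ t in 𝓝 s, g t = 0 := by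
  set e := extChartAt 𝓘(ℂ, ℂ) s with he
  have hs : s ∈ e.source := mem_extChartAt_source s
  have hopen : IsOpen e.target := isOpen_extChartAt_target s
  have hGdiff : DifferentiableOn ℂ (g ∘ e.symm) e.target := by
    have step : MDifferentiableOn 𝓘(ℂ, ℂ) 𝓘(ℂ, ℂ) (g ∘ e.symm) e.target := ?_
    · exact mdifferentiableOn_iff_differentiableOn.1 step
    exact MDifferentiableOn.comp (u := Set.univ) hg.mdifferentiableOn
      (mdifferentiableOn_extChartAt_symm (x := s)) (Set.subset_preimage_univ)
  have hGan : AnalyticAt ℂ (g ∘ e.symm) (e s) :=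
    hGdiff.analyticAt (hopen.mem_nhds (mem_extChartAt_target s))
  have hsrc : ∀ᶠ t in 𝓝[≠] s, t ∈ e.source :=
    mem_nhdsWithin_of_mem_nhds (extChartAt_source_mem_nhds s)
  have htend : Filter.Tendsto e (𝓝[≠] s) (𝓝[≠] (e s)) := by
    rw [tendsto_nhdsWithin_iff]
    refine ⟨(continuousAt_extChartAt s).tendsto.mono_left nhdsWithin_le_nhds, ?_⟩
    filter_upwards [hsrc, eventually_mem_nhdsWithin] with t ht htne
    exact fun hc => htne (e.injOn ht hs hc)
  have hfreq' : ∃ᶠ w in 𝓝[≠] (e s), (g ∘ e.symm) w = 0 := by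
    refine htend.frequently (hfreq.mp (hsrc.mono fun t ht h0 => ?_))
    simpa [Function.comp, e.left_inv ht] using h0
  have hev : ∀ᶠ w in 𝓝 (e s), (g ∘ e.symm) w = 0 :=
    (hGan.frequently_zero_iff_eventually_zero).1 hfreq'
  have hev2 := (continuousAt_extChartAt (I := 𝓘(ℂ, ℂ)) s).tendsto.eventually hev
  filter_upwards [hev2, extChartAt_source_mem_nhds (I := 𝓘(ℂ, ℂ)) s] with t h1 h2
  rw [Function.comp_apply, e.left_inv h2] at h1
  exact h1


/-- **Pushing forward a standard Riemann surface along a holomorphic map of the target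
(Lemma `passage`).**  Let `G : M → N` be holomorphic, let `R` be a standard Riemann
surface (maximal standard analytical continuation) of the element `(U, f)` with values in
`M`, and `S` a standard Riemann surface of `(U, G ∘ f)` with values in `N`.  Then there is
a holomorphic map `h : R.S → S.S` with `h ∘ R.j = S.j` on `U` and `S.p ∘ h = R.p`. -/
theorem stmt_16 {E E' : Type} [NormedAddCommGroup E] [NormedSpace ℂ E] [CompleteSpace E]
    [NormedAddCommGroup E'] [NormedSpace ℂ E'] [CompleteSpace E']
    (M : Type) [TopologicalSpace M] [ChartedSpace E M]
    [IsManifold 𝓘(ℂ, E) ⊤ M] [ConnectedSpace M]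
    (N : Type) [TopologicalSpace N] [ChartedSpace E' N]
    [IsManifold 𝓘(ℂ, E') ⊤ N] [ConnectedSpace N]
    (G : M → N) (hG : MDifferentiable 𝓘(ℂ, E) 𝓘(ℂ, E') G)
    (U : Set ℂ) (hU : IsOpen U) (hUne : U.Nonempty) (hUconn : IsConnected U)
    (f : ℂ → M) (hf : MDifferentiableOn 𝓘(ℂ, ℂ) 𝓘(ℂ, E) f U)
    (R : StandardContinuation E M U f) (hR : R.IsMaximal)
    (S : StandardContinuation E' N U (fun z => G (f z))) (hS : S.IsMaximal) :
    ∃ h : R.S → S.S,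
      MDifferentiable 𝓘(ℂ, ℂ) 𝓘(ℂ, ℂ) h ∧
      (∀ z ∈ U, h (R.j z) = S.j z) ∧
      (∀ s, S.p (h s) = R.p s) := by
  
  set Q' : StandardContinuation E' N U (fun z => G (f z)) :=
    { S := R.S, p := R.p, hp := R.hp, hpnc := R.hpnc, hUrange := R.hUrange,
      j := R.j, hj := R.hj, hpj := R.hpj, F := fun s => G (R.F s),
      hF := hG.comp R.hF, hFj := fun z hz => by simp [R.hFj z hz] } with hQ'
  obtain ⟨h, hdiff, hjeq⟩ := hS Q'
  refine ⟨h, hdiff, hjeq, ?_⟩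
  set g : R.S → ℂ := fun s => S.p (h s) - R.p s with hg
  have hgdiff : MDifferentiable 𝓘(ℂ, ℂ) 𝓘(ℂ, ℂ) g := (S.hp.comp hdiff).sub R.hp
  set Z : Set R.S := {s | ∀ᶠ t in nhds s, g t = 0} with hZ
  have hZopen : IsOpen Z := by
    rw [isOpen_iff_mem_nhds]
    intro s hs
    exact hs.eventually_nhds
  have hZclosed : IsClosed Z := by
    rw [isClosed_iff_frequently]
    intro s hfr
    by_cases hsZ : s ∈ Z
    · exact hsZ
    · apply aux_freq_to_ev hgdiff
      have : ∃ᶠ t in nhdsWithin s {s}ᶜ, t ∈ Z := by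
        rw [frequently_nhdsWithin_iff]
        exact hfr.mono fun t ht => ⟨ht, fun hts => hsZ (hts ▸ ht)⟩
      exact this.mono fun t ht => ht.self_of_nhds
  obtain ⟨z₀, hz₀⟩ := hUne
  have hjZ : R.j z₀ ∈ Z := by
    apply aux_freq_to_ev hgdiff
    have hUn : U ∈ nhdsWithin z₀ ({z₀}ᶜ : Set ℂ) := by
      exact mem_nhdsWithin_of_mem_nhds (hU.mem_nhds hz₀)
    have hne : (nhdsWithin z₀ (U ∩ {z₀}ᶜ)).NeBot := by
      rw [nhdsWithin_inter_of_mem hUn]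
      infer_instance
    have htj : Filter.Tendsto R.j (nhdsWithin z₀ (U ∩ {z₀}ᶜ)) (nhdsWithin (R.j z₀) {R.j z₀}ᶜ) := by
      rw [tendsto_nhdsWithin_iff]
      constructor
      · have hcont : ContinuousAt R.j z₀ :=
          (R.hj.continuousOn.continuousAt (hU.mem_nhds hz₀))
        exact hcont.tendsto.mono_left nhdsWithin_le_nhds
      · filter_upwards [eventually_mem_nhdsWithin] with z hz
        intro hc
        apply (hz.2 : z ∉ ({z₀} : Set ℂ))
        have := congrArg R.p hc
        rw [R.hpj z hz.1, R.hpj z₀ hz₀] at this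
        simp [this]
    refine htj.frequently (Filter.Eventually.frequently ?_)
    filter_upwards [eventually_mem_nhdsWithin] with z hz
    show S.p (h (R.j z)) - R.p (R.j z) = 0
    rw [hjeq z hz.1, S.hpj z hz.1, R.hpj z hz.1, sub_self]
  have hZuniv : Z = Set.univ :=
    IsClopen.eq_univ ⟨hZclosed, hZopen⟩ ⟨R.j z₀, hjZ⟩
  intro s
  have hsZ : s ∈ Z := hZuniv ▸ Set.mem_univ s
  have := hsZ.self_of_nhds
  exact sub_eq_zero.mp this
end
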